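/- arXiv:2601.09657 — 11 statements merged into one kernel-verified Lean document; each statement's English description precedes it below -/
import Mathlib

section
/- Assume there is a constant c₀ > 0 such that ‖q‖_* ≤ c₀·‖q‖_{*,h} for all q ∈ V. If u ∈ V and u_h ∈ M_h satisfy the Petrov–Galerkin relation b(v_h, u) = b(v_h, u_h) for all v_h ∈ V_h, then ‖u − u_h‖_{*,h} ≤ c₀ · inf_{p_h ∈ M_h} ‖u − p_h‖_{*,h}. -/
open scoped RealInnerProductSpace

private theorem stmt_2_aux_Q (K a2 b2 I : ℝ) (ha2pos : 0 < a2)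
    (hsq : b2 ≤ K ^ 2 * (b2 - I ^ 2 / a2)) : K ^ 2 * I ^ 2 ≤ (K ^ 2 - 1) * a2 * b2 := by
  have h2 : (b2 - I ^ 2 / a2) * a2 = b2 * a2 - I ^ 2 := by field_simp
  have h1 : b2 * a2 ≤ K ^ 2 * (b2 * a2 - I ^ 2) := by
    have := mul_le_mul_of_nonneg_right hsq ha2pos.le
    nlinarith [this, h2]
  nlinarith [h1]

private theorem stmt_2_aux_alg (K a2 b2 I : ℝ) (hK : 1 ≤ K) (ha : 0 ≤ a2) (hb : 0 ≤ b2)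
    (hQ : K ^ 2 * I ^ 2 ≤ (K ^ 2 - 1) * a2 * b2) : a2 ≤ K ^ 2 * (a2 + 2 * I + b2) := by
  have hK2 : 1 ≤ K ^ 2 := by nlinarith
  have hs : 0 ≤ (K ^ 2 - 1) * a2 + K ^ 2 * b2 := by nlinarith
  have habs : (2 * K ^ 2 * I) ^ 2 ≤ ((K ^ 2 - 1) * a2 + K ^ 2 * b2) ^ 2 := by
    nlinarith [sq_nonneg ((K ^ 2 - 1) * a2 - K ^ 2 * b2),
      mul_nonneg (sq_nonneg K) (sub_nonneg.mpr hQ)]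
  nlinarith [habs, hs]

/-- Quasi-optimal error estimate in the discrete optimal trial norm for a
Petrov–Galerkin discretization of `b(v,u) = ε⟪u,v⟫ + ⟪Tu,v⟫`, where `T` is antisymmetric
(`⟪Tq,q⟫ = 0`), `‖q‖_*² = ε²‖q‖² + ‖Tq‖²`, `‖q‖_{*,h}² = ε²‖q‖² + ‖P_h T q‖²` with `P_h`
the orthogonal projection onto the finite-dimensional test space `Vh`, and `Mh ≤ Vh`. -/
theorem stmt_2 {V : Type*} [NormedAddCommGroup V] [InnerProductSpace ℝ V]
    (ε : ℝ) (hε : 0 < ε) (T : V →L[ℝ] V)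
    (hT : ∀ q : V, ⟪T q, q⟫ = 0)
    (Vh Mh : Submodule ℝ V) [FiniteDimensional ℝ Vh] (hMV : Mh ≤ Vh)
    (nstar nstarh : V → ℝ)
    (hnstar : ∀ q, nstar q = Real.sqrt (ε ^ 2 * ‖q‖ ^ 2 + ‖T q‖ ^ 2))
    (hnstarh : ∀ q, nstarh q =
      Real.sqrt (ε ^ 2 * ‖q‖ ^ 2 + ‖(Vh.orthogonalProjection (T q) : V)‖ ^ 2))
    (c₀ : ℝ) (hc₀ : 0 < c₀)
    (hc : ∀ q : V, nstar q ≤ c₀ * nstarh q)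
    (u uh : V) (huh : uh ∈ Mh)
    (hPG : ∀ vh ∈ Vh, ε * ⟪u, vh⟫ + ⟪T u, vh⟫ = ε * ⟪uh, vh⟫ + ⟪T uh, vh⟫) :
    nstarh (u - uh) ≤ c₀ * ⨅ p : Mh, nstarh (u - (p : V)) := by
  set e : V := u - uh with he_def
  set Pp : V → V := fun x => (Vh.orthogonalProjection x : V) with hPp
  have hPadd : ∀ x y : V, Pp (x + y) = Pp x + Pp y := by
    intro x y; simp [hPp]
  have hPsmul : ∀ (t : ℝ) (x : V), Pp (t • x) = t • Pp x := by
    intro t x; simp [hPp]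
  have hPle : ∀ x : V, ‖Pp x‖ ≤ ‖x‖ := by
    intro x
    calc ‖Pp x‖ = ‖Vh.orthogonalProjection x‖ := rfl
    _ ≤ ‖Vh.orthogonalProjection‖ * ‖x‖ := (Vh.orthogonalProjection).le_opNorm x
    _ ≤ 1 * ‖x‖ :=
        mul_le_mul_of_nonneg_right (Submodule.orthogonalProjectionOnto_norm_le Vh) (norm_nonneg x)
    _ = ‖x‖ := one_mul _
  have hPself : ∀ x, x ∈ Vh → Pp x = x := fun x hx => Submodule.starProjection_eq_self_iff.mpr hx
  have hPsym : ∀ x y : V, ⟪Pp x, y⟫ = ⟪x, Pp y⟫ := fun x y =>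
    Submodule.inner_starProjection_left_eq_right Vh x y
  set A : V → V → ℝ := fun q r => ε ^ 2 * ⟪q, r⟫ + ⟪Pp (T q), Pp (T r)⟫ with hA
  have hAsymm : ∀ q r, A q r = A r q := by
    intro q r; simp [hA, real_inner_comm]
  have hAq : ∀ q, nstarh q = Real.sqrt (A q q) := by
    intro q
    rw [hnstarh]
    congr 1
    simp [hA, real_inner_self_eq_norm_sq, hPp]
  have hAnonneg : ∀ q, 0 ≤ A q q := by
    intro q
    simp only [hA, real_inner_self_eq_norm_sq]
    positivity
  have hAexp : ∀ q r, A (q + r) (q + r) = A q q + 2 * A q r + A r r := by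
    intro q r
    simp only [hA, map_add, hPadd, inner_add_left, inner_add_right]
    rw [real_inner_comm r q, real_inner_comm (Pp (T r)) (Pp (T q))]
    ring
  have hAsmul : ∀ (t : ℝ) q r, A q (t • r) = t * A q r := by
    intro t q r
    simp only [hA, map_smul, hPsmul, real_inner_smul_right]
    ring
  have hAexp2 : ∀ (t : ℝ) (q r : V),
      A (q + t • r) (q + t • r) = A q q + 2 * t * A q r + t ^ 2 * A r r := by
    intro t q r
    rw [hAexp, hAsmul]
    have h1 : A (t • r) (t • r) = t * A (t • r) r := by
      rw [hAsymm, hAsmul, hAsymm]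
    rw [h1, hAsymm (t • r) r, hAsmul]
    ring
  -- Galerkin orthogonality
  have hGal : (ε • e + T e) ∈ Vhᗮ := by
    intro x hx
    have h := hPG x hx
    have h0 : ⟪ε • e + T e, x⟫ = 0 := by
      simp only [he_def, inner_add_left, real_inner_smul_left, map_sub,
        inner_sub_left, ContinuousLinearMap.coe_sub', Pi.sub_apply]
      linarith
    rw [real_inner_comm] at h0
    exact h0
  have hPSe : Pp (ε • e + T e) = 0 := by
    have h0 := Submodule.orthogonalProjectionOnto_apply_of_mem_orthogonal hGal
    show ((Vh.orthogonalProjectionOnto (ε • e + T e) : V)) = 0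
    rw [h0]; rfl
  have hnormsmul : ∀ z : V, ‖ε • z‖ ^ 2 = ε ^ 2 * ‖z‖ ^ 2 := by
    intro z
    rw [norm_smul, Real.norm_eq_abs, mul_pow, sq_abs]
  have hstarnorm : ∀ z : V, nstar z = ‖ε • z + T z‖ := by
    intro z
    rw [hnstar]
    have h2 : ε ^ 2 * ‖z‖ ^ 2 + ‖T z‖ ^ 2 = ‖ε • z + T z‖ ^ 2 := by
      rw [norm_add_sq_real]
      have h1 : ⟪ε • z, T z⟫ = 0 := by
        rw [real_inner_smul_left, real_inner_comm, hT z, mul_zero]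
      rw [h1, hnormsmul]
      ring
    rw [h2, Real.sqrt_sq (norm_nonneg _)]
  have hf2 : ∀ m, m ∈ Vh → A m m = ‖Pp (ε • m + T m)‖ ^ 2 := by
    intro m hm
    have h1 : Pp (ε • m + T m) = ε • m + Pp (T m) := by
      rw [hPadd, hPsmul, hPself m hm]
    rw [h1, norm_add_sq_real]
    have h2 : ⟪ε • m, Pp (T m)⟫ = 0 := by
      rw [real_inner_smul_left, ← hPsym m (T m), hPself m hm, real_inner_comm, hT, mul_zero]
    rw [h2, hnormsmul]
    simp only [hA, real_inner_self_eq_norm_sq]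
    ring
  have key : ∀ m, m ∈ Vh → ∀ t : ℝ,
      Real.sqrt (A m m) ≤ c₀ * Real.sqrt (A (m + t • e) (m + t • e)) := by
    intro m hm t
    have h1 : ε • (m + t • e) + T (m + t • e) = (ε • m + T m) + t • (ε • e + T e) := by
      simp only [map_add, map_smul, smul_add]
      module
    have h2 : Pp (ε • (m + t • e) + T (m + t • e)) = Pp (ε • m + T m) := by
      rw [h1, hPadd, hPsmul, hPSe, smul_zero, add_zero]
    calc Real.sqrt (A m m) = ‖Pp (ε • m + T m)‖ := by
          rw [hf2 m hm, Real.sqrt_sq (norm_nonneg _)]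
    _ = ‖Pp (ε • (m + t • e) + T (m + t • e))‖ := by rw [h2]
    _ ≤ ‖ε • (m + t • e) + T (m + t • e)‖ := hPle _
    _ = nstar (m + t • e) := (hstarnorm _).symm
    _ ≤ c₀ * nstarh (m + t • e) := hc _
    _ = c₀ * Real.sqrt (A (m + t • e) (m + t • e)) := by rw [hAq]
  have hhle : ∀ q : V, nstarh q ≤ nstar q := by
    intro q
    rw [hnstar, hnstarh]
    apply Real.sqrt_le_sqrt
    have h3 : ‖(Vh.orthogonalProjection (T q) : V)‖ ≤ ‖T q‖ := hPle (T q)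
    have h2 : ‖(Vh.orthogonalProjection (T q) : V)‖ ^ 2 ≤ ‖T q‖ ^ 2 :=
      pow_le_pow_left₀ (norm_nonneg _) h3 2
    linarith
  -- per-competitor bound
  have hper : ∀ p : V, p ∈ Mh → nstarh e ≤ c₀ * nstarh (u - p) := by
    intro p hp
    have hmVh : uh - p ∈ Vh := hMV (Submodule.sub_mem _ huh hp)
    set m : V := uh - p with hm_def
    have hw : u - p = e + m := by rw [he_def, hm_def]; abel
    rw [hw, hAq, hAq, hAexp]
    by_cases ha0 : A e e = 0
    · rw [ha0, Real.sqrt_zero]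
      exact mul_nonneg hc₀.le (Real.sqrt_nonneg _)
    have ha2pos : 0 < A e e := lt_of_le_of_ne (hAnonneg e) (Ne.symm ha0)
    have hK1 : 1 ≤ c₀ := by
      have h1 : nstarh e ≤ c₀ * nstarh e := le_trans (hhle e) (hc e)
      have h2 : 0 < nstarh e := by
        rw [hAq]; exact Real.sqrt_pos.mpr ha2pos
      exact (le_mul_iff_one_le_left h2).mp h1
    set t₀ : ℝ := -(A e m / A e e) with ht₀
    have hexp := hAexp2 t₀ m e
    have hval : A m m + 2 * t₀ * A m e + t₀ ^ 2 * A e e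
        = A m m - (A e m) ^ 2 / A e e := by
      rw [hAsymm m e, ht₀]
      field_simp
      ring
    have hvnn : 0 ≤ A m m - (A e m) ^ 2 / A e e := by
      rw [← hval, ← hexp]; exact hAnonneg _
    have hkey := key m hmVh t₀
    rw [hexp, hval] at hkey
    have hsq : A m m ≤ c₀ ^ 2 * (A m m - (A e m) ^ 2 / A e e) := by
      have h1 := pow_le_pow_left₀ (Real.sqrt_nonneg (A m m)) hkey 2
      rwa [Real.sq_sqrt (hAnonneg m), mul_pow, Real.sq_sqrt hvnn] at h1
    have hQ := stmt_2_aux_Q c₀ (A e e) (A m m) (A e m) ha2pos hsq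
    have hfinal : A e e ≤ c₀ ^ 2 * (A e e + 2 * A e m + A m m) :=
      stmt_2_aux_alg c₀ (A e e) (A m m) (A e m) hK1 (hAnonneg e) (hAnonneg m) hQ
    calc Real.sqrt (A e e) ≤ Real.sqrt (c₀ ^ 2 * (A e e + 2 * A e m + A m m)) :=
          Real.sqrt_le_sqrt hfinal
    _ = c₀ * Real.sqrt (A e e + 2 * A e m + A m m) := by
          rw [Real.sqrt_mul (by positivity), Real.sqrt_sq hc₀.le]
  have hinf : nstarh e / c₀ ≤ ⨅ p : Mh, nstarh (u - (p : V)) :=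
    le_ciInf fun p => (div_le_iff₀' hc₀).mpr (hper p p.2)
  exact (div_le_iff₀' hc₀).mp hinf
end

section
/- Let n ≥ 1 be an integer, h = 1/n, x_i = i·h, and let u : [0,1] → ℝ be continuously differentiable. Set a_i := (1/h)·∫_{x_{i−1}}^{x_i} u(x) dx for i = 1, …, n. Then ∫_0^1 u(x)² dx − (1/n)·Σ_{i=1}^n a_i² ≤ (h/π)² · ∫_0^1 u'(x)² dx. -/
open MeasureTheory intervalIntegral Set Filter AddCircle Complex

lemma measurable_liftIoc {T : ℝ} [hT : Fact (0 < T)] (a : ℝ) (g : ℝ → ℂ)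
    (hg : Measurable g) : Measurable (AddCircle.liftIoc T a g) := by
  have : AddCircle.liftIoc T a g
      = (fun x : Set.Ioc a (a + T) => g x) ∘ (AddCircle.measurableEquivIoc T a) := rfl
  rw [this]
  exact (hg.comp measurable_subtype_coe).comp (AddCircle.measurableEquivIoc T a).measurable

lemma parsevalOn {T : ℝ} [hT : Fact (0 < T)] (a : ℝ) (g : ℝ → ℂ)
    (hmeas : Measurable g) (M : ℝ) (hbd : ∀ x ∈ Set.Ioc a (a + T), ‖g x‖ ≤ M) :
    Summable (fun n : ℤ => ‖fourierCoeffOn (lt_add_of_pos_right a hT.out) g n‖ ^ 2) ∧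
    ∑' n : ℤ, ‖fourierCoeffOn (lt_add_of_pos_right a hT.out) g n‖ ^ 2
      = (1 / T) * ∫ x in a..a + T, ‖g x‖ ^ 2 := by
  set G : AddCircle T → ℂ := AddCircle.liftIoc T a g with hG
  have hGapp : ∀ z : AddCircle T, G z = g ((AddCircle.equivIoc T a z : ℝ)) := fun z => rfl
  have hGbd : ∀ z, ‖G z‖ ≤ M := by
    intro z
    rw [hGapp]
    exact hbd _ (AddCircle.equivIoc T a z).2
  have hGmeas : AEStronglyMeasurable G haarAddCircle :=
    (measurable_liftIoc a g hmeas).aestronglyMeasurable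
  have hG2 : MemLp G 2 haarAddCircle :=
    MemLp.of_bound hGmeas M (Filter.Eventually.of_forall hGbd)
  set x : Lp ℂ 2 (@haarAddCircle T hT) := hG2.toLp G with hx
  have hxG : (⇑x) =ᵐ[haarAddCircle] G := hG2.coeFn_toLp
  have hcoef : ∀ n : ℤ, fourierCoeff (⇑x) n = fourierCoeffOn (lt_add_of_pos_right a hT.out) g n := by
    intro n
    rw [← fourierCoeff_liftIoc_eq]
    exact integral_congr_ae (hxG.mono fun t ht => by simp only [ht, hG])
  constructor
  · have hsum : Summable fun n : ℤ => ‖fourierBasis.repr x n‖ ^ (2 : ℝ) := by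
      have := lp.memℓp (fourierBasis.repr x)
      exact (memℓp_gen_iff (by norm_num : (0:ℝ) < (2 : ENNReal).toReal)).1 (by simpa using this)
    have : Summable fun n : ℤ => ‖fourierCoeff (⇑x) n‖ ^ 2 := by
      refine Summable.congr hsum fun n => ?_
      rw [fourierBasis_repr, ← Real.rpow_natCast]
      norm_num
    exact this.congr fun n => by rw [hcoef]
  · have hP := tsum_sq_fourierCoeff x
    have h1 : ∑' n : ℤ, ‖fourierCoeffOn (lt_add_of_pos_right a hT.out) g n‖ ^ 2
        = ∫ t : AddCircle T, ‖x t‖ ^ 2 ∂haarAddCircle := by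
      rw [← hP]; exact tsum_congr fun n => by rw [hcoef]
    rw [h1]
    have h2 : ∫ t : AddCircle T, ‖x t‖ ^ 2 ∂haarAddCircle
        = ∫ t : AddCircle T, ‖G t‖ ^ 2 ∂haarAddCircle :=
      integral_congr_ae (hxG.mono fun t ht => by simp only [ht])
    have h3 : (∫ y in a..a + T, ‖G (y : AddCircle T)‖ ^ 2)
        = ∫ t : AddCircle T, ‖G t‖ ^ 2 ∂(volume : Measure (AddCircle T)) :=
      AddCircle.intervalIntegral_preimage T a (fun z => ‖G z‖ ^ 2)
    have h4 : (∫ y in a..a + T, ‖G (y : AddCircle T)‖ ^ 2) = ∫ y in a..a + T, ‖g y‖ ^ 2 := by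
      rw [intervalIntegral.integral_of_le (lt_add_of_pos_right a hT.out).le,
        intervalIntegral.integral_of_le (lt_add_of_pos_right a hT.out).le]
      refine setIntegral_congr_fun measurableSet_Ioc fun y hy => ?_
      rw [hG, AddCircle.liftIoc_coe_apply hy]
    have h5 : ∫ t : AddCircle T, ‖G t‖ ^ 2 ∂(volume : Measure (AddCircle T))
        = T * ∫ t : AddCircle T, ‖G t‖ ^ 2 ∂haarAddCircle := by
      rw [AddCircle.volume_eq_smul_haarAddCircle, MeasureTheory.integral_smul_measure,
        ENNReal.toReal_ofReal hT.out.le, smul_eq_mul]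
    rw [h2, ← h4, h3, h5, ← mul_assoc, one_div, inv_mul_cancel₀ hT.out.ne', one_mul]

lemma wirtinger {T : ℝ} [hT : Fact (0 < T)] (a : ℝ) (F G : ℝ → ℂ)
    (hFcont : Continuous F) (hGmeas : Measurable G)
    (MG : ℝ) (hGbd : ∀ x ∈ Set.Ioc a (a + T), ‖G x‖ ≤ MG)
    (hper : F (a + T) = F a)
    (hderiv : ∀ x ∈ Set.Ioo a (a + T), HasDerivWithinAt F (G x) (Set.Ioi x) x)
    (hGint : IntervalIntegrable G volume a (a + T))
    (hmean : (∫ x in a..a + T, F x) = 0) :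
    (∫ x in a..a + T, ‖F x‖ ^ 2) ≤ (T / (2 * Real.pi)) ^ 2 * ∫ x in a..a + T, ‖G x‖ ^ 2 := by
  have hab : a < a + T := lt_add_of_pos_right a hT.out
  set c : ℤ → ℂ := fourierCoeffOn hab F with hc
  set d : ℤ → ℂ := fourierCoeffOn hab G with hd
  -- zeroth coefficient vanishes
  have hc0 : c 0 = 0 := by
    rw [hc, fourierCoeffOn_eq_integral]
    simp only [neg_zero, fourier_zero, one_smul, hmean, smul_zero]
  -- coefficient relation
  have hkey : ∀ n : ℤ, n ≠ 0 → ‖c n‖ ≤ T / (2 * Real.pi) * ‖d n‖ := by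
    intro n hn
    have hrel := fourierCoeffOn_of_hasDeriv_right hab hn
      (hFcont.continuousOn)
      (by
        intro x hx
        rw [min_eq_left hab.le, max_eq_right hab.le] at hx
        exact hderiv x hx)
      hGint
    rw [hper, sub_self, mul_zero, zero_sub, ← hc, ← hd] at hrel
    rw [hrel]
    have h1 : ‖(1 : ℂ)/(-2*Real.pi*I*n)‖ = 1/(2*Real.pi*|(n:ℝ)|) := by
      simp [norm_div, norm_mul, Complex.norm_I, Complex.norm_real,
        abs_of_pos Real.pi_pos]
    rw [norm_mul, norm_neg, norm_mul, h1]
    have hTc : ‖((a + T : ℝ) : ℂ) - ((a : ℝ) : ℂ)‖ = T := by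
      rw [← Complex.ofReal_sub, Complex.norm_real, Real.norm_eq_abs,
        add_sub_cancel_left, abs_of_pos hT.out]
    rw [hTc]
    have hn1 : (1 : ℝ) ≤ |(n : ℝ)| := by
      rw [← Int.cast_abs]
      exact_mod_cast Int.one_le_abs (by exact_mod_cast hn)
    have hπ : (0:ℝ) < 2 * Real.pi := by positivity
    have : 1/(2*Real.pi*|(n:ℝ)|) ≤ 1/(2*Real.pi) := by
      apply one_div_le_one_div_of_le hπ
      nlinarith
    calc 1/(2*Real.pi*|(n:ℝ)|) * (T * ‖d n‖) ≤ 1/(2*Real.pi) * (T * ‖d n‖) := by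
          apply mul_le_mul_of_nonneg_right this (mul_nonneg hT.out.le (norm_nonneg _))
      _ = T / (2*Real.pi) * ‖d n‖ := by ring
  -- Parseval for F
  obtain ⟨sF, pF⟩ := parsevalOn a F hFcont.measurable
    (sSup ((fun x => ‖F x‖) '' Set.Icc a (a+T)))
    (fun x hx => le_csSup ((isCompact_Icc.image (hFcont.norm)).bddAbove)
      ⟨x, Set.Ioc_subset_Icc_self hx, rfl⟩)
  obtain ⟨sG, pG⟩ := parsevalOn a G hGmeas MG hGbd
  -- termwise bound
  have hterm : ∀ n : ℤ, ‖c n‖ ^ 2 ≤ (T / (2 * Real.pi)) ^ 2 * ‖d n‖ ^ 2 := by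
    intro n
    rcases eq_or_ne n 0 with rfl | hn
    · rw [hc0]
      have : (0:ℝ) ≤ (T / (2 * Real.pi)) ^ 2 * ‖d 0‖ ^ 2 := by positivity
      simpa using this
    · have := hkey n hn
      have h2 : ‖c n‖ ^ 2 ≤ (T / (2 * Real.pi) * ‖d n‖) ^ 2 := by
        apply pow_le_pow_left₀ (norm_nonneg _) this
      calc ‖c n‖ ^ 2 ≤ (T / (2 * Real.pi) * ‖d n‖) ^ 2 := h2
        _ = (T / (2 * Real.pi)) ^ 2 * ‖d n‖ ^ 2 := by ring
  have hsum : ∑' n : ℤ, ‖c n‖ ^ 2 ≤ (T / (2 * Real.pi)) ^ 2 * ∑' n : ℤ, ‖d n‖ ^ 2 := by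
    rw [← tsum_mul_left]
    exact Summable.tsum_le_tsum hterm sF (sG.mul_left _)
  rw [pF, pG] at hsum
  have hT' : (0:ℝ) < T := hT.out
  calc (∫ x in a..a + T, ‖F x‖ ^ 2)
      = T * ((1/T) * ∫ x in a..a + T, ‖F x‖ ^ 2) := by field_simp
    _ ≤ T * ((T / (2 * Real.pi)) ^ 2 * ((1/T) * ∫ x in a..a + T, ‖G x‖ ^ 2)) := by
        apply mul_le_mul_of_nonneg_left hsum hT'.le
    _ = (T / (2 * Real.pi)) ^ 2 * ∫ x in a..a + T, ‖G x‖ ^ 2 := by field_simp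

lemma hdw_ofReal {f : ℝ → ℝ} {u x : ℝ} {s : Set ℝ} (hf : HasDerivWithinAt f u s x) :
    HasDerivWithinAt (fun y => ((f y : ℝ) : ℂ)) (u : ℂ) s x := by
  exact hf.ofReal_comp

lemma neumann (u u' : ℝ → ℝ)
    (hu : ∀ x ∈ Set.Icc (0:ℝ) 1, HasDerivWithinAt u (u' x) (Set.Icc 0 1) x)
    (hu' : ContinuousOn u' (Set.Icc (0:ℝ) 1))
    (p L : ℝ) (hL : 0 < L) (hp : 0 ≤ p) (hq : p + L ≤ 1) :
    (∫ x in p..(p+L), (u x)^2) - L * ((1/L) * ∫ x in p..(p+L), u x)^2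
      ≤ (L/Real.pi)^2 * ∫ x in p..(p+L), (u' x)^2 := by
  have hucont : ContinuousOn u (Set.Icc (0:ℝ) 1) :=
    fun x hx => (hu x hx).continuousWithinAt
  -- clamped versions
  set cl : ℝ → ℝ := fun x => max 0 (min 1 x) with hcl
  have hclcont : Continuous cl := continuous_const.max (continuous_const.min continuous_id)
  have hclmem : ∀ x, cl x ∈ Set.Icc (0:ℝ) 1 := by
    intro x
    constructor
    · exact le_max_left _ _
    · simp only [hcl, max_le_iff]
      constructor
      · norm_num
      · exact min_le_left _ _
  have hclid : ∀ x ∈ Set.Icc (0:ℝ) 1, cl x = x := by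
    intro x hx
    simp only [hcl]
    rw [min_eq_right hx.2, max_eq_right hx.1]
  set U : ℝ → ℝ := fun x => u (cl x) with hU
  set U' : ℝ → ℝ := fun x => u' (cl x) with hU'
  have hUcont : Continuous U := hucont.comp_continuous hclcont hclmem
  have hU'cont : Continuous U' := hu'.comp_continuous hclcont hclmem
  have hUeq : ∀ x ∈ Set.Icc (0:ℝ) 1, U x = u x := fun x hx => by rw [hU]; simp [hclid x hx]
  have hU'eq : ∀ x ∈ Set.Icc (0:ℝ) 1, U' x = u' x := fun x hx => by rw [hU']; simp [hclid x hx]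
  set m : ℝ := (1/L) * ∫ x in p..(p+L), u x with hm
  haveI : Fact ((0:ℝ) < 2*L) := ⟨by linarith⟩
  set a : ℝ := p - L with ha
  have hsum : a + 2*L = p + L := by rw [ha]; ring
  set f : ℝ → ℝ := fun x => U (p + |x - p|) - m with hf
  set F : ℝ → ℂ := fun x => ((f x : ℝ) : ℂ) with hF
  set g : ℝ → ℝ := fun x => if x < p then -U' (2*p - x) else U' x with hg
  set G : ℝ → ℂ := fun x => ((g x : ℝ) : ℂ) with hG
  have hfcont : Continuous f := by
    apply Continuous.sub _ continuous_const
    exact hUcont.comp (continuous_const.add (continuous_id.sub continuous_const).abs)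
  have hFcont : Continuous F := Complex.continuous_ofReal.comp hfcont
  have hgmeas : Measurable g := by
    apply Measurable.ite measurableSet_Iio
    · exact (hU'cont.comp (continuous_const.sub continuous_id)).neg.measurable
    · exact hU'cont.measurable
  have hGmeas : Measurable G := Complex.measurable_ofReal.comp hgmeas
  -- value lemmas
  have hfR : ∀ y, p ≤ y → y ≤ 1 → f y = u y - m := by
    intro y h1 h2
    simp only [hf]
    rw [_root_.abs_of_nonneg (show (0:ℝ) ≤ y - p by linarith), show p + (y - p) = y by ring,
      hUeq y ⟨by linarith, h2⟩]
  have hfL : ∀ y, y ≤ p → 2*p - y ≤ 1 → f y = u (2*p - y) - m := by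
    intro y h1 h2
    simp only [hf]
    rw [_root_.abs_of_nonpos (show y - p ≤ (0:ℝ) by linarith), show p + -(y - p) = 2*p - y by ring,
      hUeq _ ⟨by linarith, h2⟩]
  have hgR : ∀ y, p ≤ y → y ≤ 1 → g y = u' y := by
    intro y h1 h2
    simp only [hg, if_neg (not_lt.mpr h1)]
    exact hU'eq y ⟨by linarith, h2⟩
  have hgL : ∀ y, y < p → 2*p - y ≤ 1 → g y = -u' (2*p - y) := by
    intro y h1 h2
    simp only [hg, if_pos h1]
    rw [hU'eq _ ⟨by linarith, h2⟩]
  -- bound for G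
  obtain ⟨B, hB⟩ : ∃ B, ∀ y ∈ Set.Icc (0:ℝ) 1, |u' y| ≤ B :=
    (isCompact_Icc.exists_bound_of_continuousOn hu').imp
      (fun B h y hy => by simpa using h y hy)
  have hGbd : ∀ x ∈ Set.Ioc a (a + 2*L), ‖G x‖ ≤ B := by
    intro x _
    have h1 : ‖G x‖ = |g x| := by rw [hG, Complex.norm_real, Real.norm_eq_abs]
    rw [h1, hg]
    by_cases hx : x < p
    · simp only [if_pos hx, abs_neg, hU']
      exact hB _ (hclmem _)
    · simp only [if_neg hx, hU']
      exact hB _ (hclmem _)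
  -- periodicity
  have hper : F (a + 2*L) = F a := by
    rw [hsum]
    show ((f (p+L) : ℝ) : ℂ) = ((f a : ℝ) : ℂ)
    rw [hfR (p+L) (by linarith) (by linarith),
      hfL a (by rw [ha]; linarith) (by rw [ha]; linarith),
      show 2*p - a = p + L by rw [ha]; ring]
  -- derivative
  have hderiv : ∀ x ∈ Set.Ioo a (a + 2*L), HasDerivWithinAt F (G x) (Set.Ioi x) x := by
    intro x hx
    rw [hsum] at hx
    have hxa : a < x := hx.1
    have hxb : x < p + L := hx.2
    rcases le_or_gt p x with hxp | hxp
    · -- right half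
      have hx01 : x ∈ Set.Icc (0:ℝ) 1 := ⟨hp.trans hxp, by linarith⟩
      have h1 : HasDerivWithinAt u (u' x) (Set.Ioc x (p+L)) x :=
        (hu x hx01).mono (fun y hy => ⟨by linarith [hy.1, hx01.1], by linarith [hy.2]⟩)
      have h3 := hdw_ofReal (h1.sub_const m)
      have h4 : HasDerivWithinAt F ((u' x : ℝ) : ℂ) (Set.Ioc x (p+L)) x := by
        apply h3.congr
        · intro y hy
          show ((f y : ℝ) : ℂ) = _
          rw [hfR y (by linarith [hy.1]) (by linarith [hy.2])]
        · show ((f x : ℝ) : ℂ) = _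
          rw [hfR x hxp (by linarith)]
      have h5 : G x = ((u' x : ℝ) : ℂ) := by
        show ((g x : ℝ) : ℂ) = _
        rw [hgR x hxp (by linarith)]
      rw [h5]
      exact h4.mono_of_mem_nhdsWithin (Ioc_mem_nhdsGT_of_mem ⟨le_refl x, hxb⟩)
    · -- left half
      have hz01 : (2*p - x) ∈ Set.Icc (0:ℝ) 1 := ⟨by linarith, by
        have : a < x := hxa
        rw [ha] at this
        linarith⟩
      have hinner : HasDerivWithinAt u (u' (2*p - x)) (Set.Icc (0:ℝ) 1) (2*p - x) :=
        hu _ hz01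
      have haff : HasDerivWithinAt (fun y => 2*p - y) (-1) (Set.Ioc x p) x :=
        ((hasDerivAt_id x).const_sub (2*p)).hasDerivWithinAt
      have hmaps : Set.MapsTo (fun y => 2*p - y) (Set.Ioc x p) (Set.Icc (0:ℝ) 1) := by
        intro y hy
        have h1 : x < y := hy.1
        have h2 : y ≤ p := hy.2
        constructor
        · show (0:ℝ) ≤ 2*p - y
          linarith
        · show 2*p - y ≤ 1
          linarith [hz01.2]
      have hcomp : HasDerivWithinAt (fun y => u (2*p - y)) (u' (2*p - x) * (-1))
          (Set.Ioc x p) x := hinner.comp x haff hmaps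
      have h3 := hdw_ofReal (hcomp.sub_const m)
      have h4 : HasDerivWithinAt F ((u' (2*p - x) * (-1) : ℝ) : ℂ) (Set.Ioc x p) x := by
        apply h3.congr
        · intro y hy
          show ((f y : ℝ) : ℂ) = _
          rw [hfL y hy.2 (by
            have : x < y := hy.1
            linarith [hz01.2])]
        · show ((f x : ℝ) : ℂ) = _
          rw [hfL x hxp.le hz01.2]
      have h5 : G x = ((u' (2*p - x) * (-1) : ℝ) : ℂ) := by
        show ((g x : ℝ) : ℂ) = _
        rw [hgL x hxp hz01.2]
        push_cast
        ring
      rw [h5]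
      exact h4.mono_of_mem_nhdsWithin (Ioc_mem_nhdsGT_of_mem ⟨le_refl x, hxp⟩)
  -- integrability of G
  have hGint : IntervalIntegrable G volume a (a + 2*L) := by
    refine (intervalIntegrable_const (c := |B|)).mono_fun
      hGmeas.aestronglyMeasurable.restrict ?_
    rw [Set.uIoc_of_le (by linarith : a ≤ a + 2*L)]
    refine (ae_restrict_iff' measurableSet_Ioc).mpr (Filter.Eventually.of_forall ?_)
    intro x hx
    have h9 := hGbd x hx
    show ‖G x‖ ≤ ‖|B|‖
    rw [Real.norm_eq_abs, _root_.abs_abs]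
    exact h9.trans (le_abs_self B)
  -- integrability of real pieces
  have hsub : Set.uIcc p (p+L) ⊆ Set.Icc (0:ℝ) 1 := by
    rw [Set.uIcc_of_le (by linarith)]
    exact fun x hx => ⟨by linarith [hx.1], by linarith [hx.2]⟩
  have hui : IntervalIntegrable u volume p (p+L) := (hucont.mono hsub).intervalIntegrable
  have hui2 : IntervalIntegrable (fun x => (u x)^2) volume p (p+L) :=
    ((hucont.mono hsub).pow 2).intervalIntegrable
  have hum : IntervalIntegrable (fun x => u x - m) volume p (p+L) :=
    ((hucont.mono hsub).sub continuousOn_const).intervalIntegrable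
  -- key integral identities
  have humean : (∫ x in p..(p+L), u x) = L * m := by
    rw [hm]
    field_simp
  have hFsplit : ∀ (φ : ℝ → ℝ), ContinuousOn φ (Set.Icc (0:ℝ) 1) →
      (∫ x in a..(p+L), φ (p + |x - p|)) = 2 * ∫ x in p..(p+L), φ x := by
    intro φ hφ
    have hφsub : ContinuousOn φ (Set.uIcc p (p+L)) := hφ.mono hsub
    have e1 : (∫ x in a..p, φ (p + |x - p|)) = ∫ x in p..(p+L), φ x := by
      have e2 : (∫ x in a..p, φ (p + |x - p|)) = ∫ x in a..p, φ (2*p - x) := by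
        apply intervalIntegral.integral_congr
        intro x hx
        rw [Set.uIcc_of_le (by rw [ha]; linarith)] at hx
        show φ (p + |x - p|) = φ (2*p - x)
        rw [_root_.abs_of_nonpos (show x - p ≤ (0:ℝ) by linarith [hx.2]),
          show p + -(x - p) = 2*p - x by ring]
      rw [e2, intervalIntegral.integral_comp_sub_left φ (2*p),
        show 2*p - p = p by ring, show 2*p - a = p + L by rw [ha]; ring]
    have e3 : (∫ x in p..(p+L), φ (p + |x - p|)) = ∫ x in p..(p+L), φ x := by
      apply intervalIntegral.integral_congr
      intro x hx
      rw [Set.uIcc_of_le (by linarith)] at hx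
      show φ (p + |x - p|) = φ x
      rw [_root_.abs_of_nonneg (show (0:ℝ) ≤ x - p by linarith [hx.1]),
        show p + (x - p) = x by ring]
    have hi1 : IntervalIntegrable (fun x => φ (p + |x - p|)) volume a p := by
      apply ContinuousOn.intervalIntegrable
      apply hφ.comp (Continuous.continuousOn (by fun_prop))
      intro x hx
      rw [Set.uIcc_of_le (by rw [ha]; linarith)] at hx
      refine ⟨?_, ?_⟩
      · show (0:ℝ) ≤ p + |x - p|
        have : (0:ℝ) ≤ |x - p| := abs_nonneg _
        linarith
      · show p + |x - p| ≤ 1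
        rw [_root_.abs_of_nonpos (show x - p ≤ (0:ℝ) by linarith [hx.2])]
        have h9 : -(x - p) ≤ L := by
          have := hx.1
          rw [ha] at this
          linarith
        linarith
    have hi2 : IntervalIntegrable (fun x => φ (p + |x - p|)) volume p (p+L) := by
      apply ContinuousOn.intervalIntegrable
      apply hφ.comp (Continuous.continuousOn (by fun_prop))
      intro x hx
      rw [Set.uIcc_of_le (by linarith)] at hx
      refine ⟨?_, ?_⟩
      · show (0:ℝ) ≤ p + |x - p|
        have : (0:ℝ) ≤ |x - p| := abs_nonneg _
        linarith
      · show p + |x - p| ≤ 1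
        rw [_root_.abs_of_nonneg (show (0:ℝ) ≤ x - p by linarith [hx.1])]
        linarith [hx.2]
    rw [← intervalIntegral.integral_add_adjacent_intervals hi1 hi2, e1, e3]
    ring
  -- mean zero
  have hmean : (∫ x in a..a + 2*L, F x) = 0 := by
    rw [hsum]
    have e0 : (∫ x in a..(p+L), F x)
        = ((∫ x in a..(p+L), (fun t => u (cl t) - m) (p + |x - p|) : ℝ) : ℂ) := by
      rw [← intervalIntegral.integral_ofReal]
    rw [e0, hFsplit (fun t => u (cl t) - m)
      ((hucont.comp_continuous hclcont hclmem).continuousOn.sub continuousOn_const)]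
    have e1 : (∫ x in p..(p+L), (fun t => u (cl t) - m) x) = ∫ x in p..(p+L), u x - m := by
      apply intervalIntegral.integral_congr
      intro x hx
      simp only
      rw [hclid x (hsub hx)]
    rw [e1, intervalIntegral.integral_sub hui intervalIntegrable_const,
      intervalIntegral.integral_const, humean]
    push_cast [smul_eq_mul]
    ring
  -- apply Wirtinger
  have W := wirtinger (T := 2*L) a F G hFcont hGmeas B hGbd hper hderiv hGint hmean
  rw [hsum] at W
  -- convert LHS
  have eL : (∫ x in a..(p+L), ‖F x‖^2)
      = ∫ x in a..(p+L), (fun t => (u (cl t) - m)^2) (p + |x - p|) := by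
    apply intervalIntegral.integral_congr
    intro x _
    show ‖F x‖^2 = (u (cl (p + |x - p|)) - m)^2
    rw [show F x = ((f x : ℝ) : ℂ) from rfl, Complex.norm_real, Real.norm_eq_abs, _root_.sq_abs]
  have hφL : ContinuousOn (fun t => (u (cl t) - m)^2) (Set.Icc (0:ℝ) 1) :=
    (((hucont.comp_continuous hclcont hclmem).continuousOn.sub continuousOn_const).pow 2)
  have eL2 : (∫ x in p..(p+L), (fun t => (u (cl t) - m)^2) x)
      = ∫ x in p..(p+L), (u x - m)^2 := by
    apply intervalIntegral.integral_congr
    intro x hx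
    show (u (cl x) - m)^2 = (u x - m)^2
    rw [hclid x (hsub hx)]
  -- convert RHS
  have eG : (∫ x in a..(p+L), ‖G x‖^2)
      = ∫ x in a..(p+L), (fun t => (u' (cl t))^2) (p + |x - p|) := by
    apply intervalIntegral.integral_congr
    intro x _
    show ‖G x‖^2 = (u' (cl (p + |x - p|)))^2
    rw [show G x = ((g x : ℝ) : ℂ) from rfl, Complex.norm_real, Real.norm_eq_abs, _root_.sq_abs]
    show (g x)^2 = (U' (p + |x - p|))^2
    by_cases hxp : x < p
    · simp only [hg, if_pos hxp]
      rw [_root_.abs_of_nonpos (show x - p ≤ (0:ℝ) by linarith),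
        show p + -(x - p) = 2*p - x by ring]
      ring
    · simp only [hg, if_neg hxp]
      rw [_root_.abs_of_nonneg (show (0:ℝ) ≤ x - p by linarith [not_lt.1 hxp]),
        show p + (x - p) = x by ring]
  have hφG : ContinuousOn (fun t => (u' (cl t))^2) (Set.Icc (0:ℝ) 1) :=
    ((hu'.comp_continuous hclcont hclmem).continuousOn.pow 2)
  have eG2 : (∫ x in p..(p+L), (fun t => (u' (cl t))^2) x)
      = ∫ x in p..(p+L), (u' x)^2 := by
    apply intervalIntegral.integral_congr
    intro x hx
    show (u' (cl x))^2 = (u' x)^2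
    rw [hclid x (hsub hx)]
  rw [eL, hFsplit _ hφL, eL2, eG, hFsplit _ hφG, eG2] at W
  -- expand the square
  have h2m : IntervalIntegrable (fun x => 2*m*u x) volume p (p+L) := hui.const_mul (2*m)
  have hexp : (∫ x in p..(p+L), (u x - m)^2)
      = (∫ x in p..(p+L), (u x)^2) - L*m^2 := by
    have e1 : (∫ x in p..(p+L), (u x - m)^2)
        = ∫ x in p..(p+L), ((u x)^2 - 2*m*u x + m^2) := by
      apply intervalIntegral.integral_congr
      intro x _
      show (u x - m)^2 = (u x)^2 - 2*m*u x + m^2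
      ring
    rw [e1, intervalIntegral.integral_add (hui2.sub h2m) intervalIntegrable_const,
      intervalIntegral.integral_sub hui2 h2m, intervalIntegral.integral_const_mul,
      humean, intervalIntegral.integral_const, smul_eq_mul, add_sub_cancel_left]
    ring
  rw [hexp] at W
  have hc : (2*L/(2*Real.pi))^2 = (L/Real.pi)^2 := by
    rw [mul_div_mul_left _ _ (two_ne_zero)]
  rw [hc] at W
  linarith


/-- For the uniform mesh `x_i = i·h`, `h = 1/n`, and `u` continuously
differentiable on `[0,1]`, with `a_i` the average of `u` on `[x_{i−1}, x_i]`,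
`∫_0^1 u² − (1/n)·Σ a_i² ≤ (h/π)²·∫_0^1 (u')²`. -/
theorem stmt_3 (n : ℕ) (hn : 1 ≤ n) (u u' : ℝ → ℝ)
    (hu : ∀ x ∈ Set.Icc (0:ℝ) 1, HasDerivWithinAt u (u' x) (Set.Icc 0 1) x)
    (hu' : ContinuousOn u' (Set.Icc 0 1)) :
    let h : ℝ := 1 / n
    (∫ x in (0:ℝ)..1, (u x) ^ 2) -
        (1 / (n : ℝ)) * ∑ i ∈ Finset.Icc 1 n,
          ((1 / h) * ∫ x in (((i : ℝ) - 1) * h)..((i : ℝ) * h), u x) ^ 2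
      ≤ (h / Real.pi) ^ 2 * ∫ x in (0:ℝ)..1, (u' x) ^ 2 := by
  intro h
  have hn' : (0:ℝ) < n := by exact_mod_cast hn
  have hh : h = 1/(n:ℝ) := rfl
  have hhpos : 0 < h := by rw [hh]; positivity
  have hnh : (n:ℝ) * h = 1 := by rw [hh]; field_simp
  have hucont : ContinuousOn u (Set.Icc (0:ℝ) 1) := fun x hx => (hu x hx).continuousWithinAt
  set A : ℕ → ℝ := fun k => k * h with hA
  have hA0 : A 0 = 0 := by simp [hA]
  have hAn : A n = 1 := by rw [hA]; exact hnh
  have hAle : ∀ k : ℕ, k ≤ n → A k ≤ 1 := by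
    intro k hk
    have hk' : (k:ℝ) ≤ n := by exact_mod_cast hk
    have h2 : A k ≤ (n:ℝ) * h := by
      rw [hA]
      show (k:ℝ) * h ≤ (n:ℝ) * h
      nlinarith
    rw [← hnh]
    exact h2
  have hA_nonneg : ∀ k : ℕ, 0 ≤ A k := by
    intro k
    rw [hA]
    positivity
  have hAsucc : ∀ k : ℕ, A k + h = A (k+1) := by
    intro k
    rw [hA]
    push_cast
    ring
  have hsubk : ∀ k : ℕ, k < n → Set.uIcc (A k) (A (k+1)) ⊆ Set.Icc (0:ℝ) 1 := by
    intro k hk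
    rw [Set.uIcc_of_le (by rw [← hAsucc]; linarith)]
    intro x hx
    exact ⟨le_trans (hA_nonneg k) hx.1, le_trans hx.2 (hAle (k+1) hk)⟩
  have hadj : ∑ k ∈ Finset.range n, ∫ x in A k..A (k+1), (u x)^2
      = ∫ x in (0:ℝ)..1, (u x)^2 := by
    rw [← hA0, ← hAn]
    apply intervalIntegral.sum_integral_adjacent_intervals
    intro k hk
    exact ((hucont.pow 2).mono (hsubk k hk)).intervalIntegrable
  have hadj' : ∑ k ∈ Finset.range n, ∫ x in A k..A (k+1), (u' x)^2
      = ∫ x in (0:ℝ)..1, (u' x)^2 := by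
    rw [← hA0, ← hAn]
    apply intervalIntegral.sum_integral_adjacent_intervals
    intro k hk
    exact ((hu'.pow 2).mono (hsubk k hk)).intervalIntegrable
  have hIcc : ∑ i ∈ Finset.Icc 1 n, ((1/h) * ∫ x in (((i:ℝ)-1)*h)..((i:ℝ)*h), u x)^2
      = ∑ k ∈ Finset.range n, ((1/h) * ∫ x in A k..A (k+1), u x)^2 := by
    rw [← Finset.Ico_add_one_right_eq_Icc, Finset.sum_Ico_eq_sum_range]
    apply Finset.sum_congr rfl
    intro k _
    rw [show (((1+k : ℕ):ℝ) - 1)*h = A k by push_cast [hA]; ring,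
      show ((1+k:ℕ):ℝ)*h = A (k+1) by push_cast [hA]; ring]
  have step : ∀ k ∈ Finset.range n,
      (∫ x in A k..A (k+1), (u x)^2) - h * ((1/h) * ∫ x in A k..A (k+1), u x)^2
        ≤ (h/Real.pi)^2 * ∫ x in A k..A (k+1), (u' x)^2 := by
    intro k hk
    have hk' : k < n := Finset.mem_range.mp hk
    have key := neumann u u' hu hu' (A k) h hhpos (hA_nonneg k)
      (by rw [hAsucc]; exact hAle (k+1) hk')
    rwa [hAsucc] at key
  have hfin := Finset.sum_le_sum step
  rw [Finset.sum_sub_distrib, ← Finset.mul_sum, ← Finset.mul_sum, hadj, hadj'] at hfin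
  rw [hIcc]
  calc (∫ x in (0:ℝ)..1, (u x)^2) -
        (1/(n:ℝ)) * ∑ k ∈ Finset.range n, ((1/h) * ∫ x in A k..A (k+1), u x)^2
      = (∫ x in (0:ℝ)..1, (u x)^2) -
        h * ∑ k ∈ Finset.range n, ((1/h) * ∫ x in A k..A (k+1), u x)^2 := by rw [hh]
    _ ≤ (h/Real.pi)^2 * ∫ x in (0:ℝ)..1, (u' x)^2 := hfin
end

section
/- Let ε > 0, let n ≥ 1 be an integer, h = 1/n, x_i = i·h, and let u : [0,1] → ℝ be continuously differentiable. Set a_i := (1/h)·∫_{x_{i−1}}^{x_i} u(x) dx for i = 1, …, n and ū := ∫_0^1 u(x) dx. Then ε²·∫_0^1 u'(x)² dx + ∫_0^1 u(x)² dx − ū² ≤ (1 + (h/(π·ε))²) · ( ε²·∫_0^1 u'(x)² dx + (1/n)·Σ_{i=1}^n a_i² − ū² ). -/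
open MeasureTheory intervalIntegral Set Real
open scoped ENNReal

lemma parseval_interval {T : ℝ} [hT : Fact (0 < T)] (A B : ℝ) (hAB : B = A + T)
    (hABlt : A < B) (w : ℝ → ℂ) (hw : Continuous w)
    (hper : w A = w B) :
    HasSum (fun n : ℤ => ‖fourierCoeffOn hABlt w n‖ ^ 2)
      ((1/T) * ∫ x in A..B, ‖w x‖ ^ 2) := by
  subst hAB
  set W : C(AddCircle T, ℂ) :=
    ⟨AddCircle.liftIco T A w, AddCircle.liftIco_continuous hper hw.continuousOn⟩ with hWdef
  set F : Lp ℂ 2 (@AddCircle.haarAddCircle T hT) := ContinuousMap.toLp 2 _ ℂ W with hFdef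
  have hrepr : ∀ i : ℤ, fourierCoeff (F : AddCircle T → ℂ) i
      = fourierCoeffOn (lt_add_of_pos_right A hT.out) w i := by
    intro i
    rw [hFdef, fourierCoeff_toLp, ← fourierCoeff_liftIco_eq (T := T) w i]
    rfl
  have hsummable : Summable (fun i : ℤ => ‖fourierCoeff (F : AddCircle T → ℂ) i‖ ^ 2) := by
    have hmem : Memℓp (fourierBasis.repr F) 2 := (fourierBasis.repr F).property
    have hs := (memℓp_gen_iff (by norm_num : 0 < (2 : ℝ≥0∞).toReal)).1 hmem
    refine hs.congr fun i => ?_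
    rw [fourierBasis_repr]
    norm_num [Real.rpow_natCast]
  have hval : ∑' i : ℤ, ‖fourierCoeff (F : AddCircle T → ℂ) i‖ ^ 2
      = (1/T) * ∫ x in A..(A+T), ‖w x‖ ^ 2 := by
    rw [tsum_sq_fourierCoeff F]
    have h1 : ∫ t, ‖(F : AddCircle T → ℂ) t‖ ^ 2 ∂AddCircle.haarAddCircle
        = ∫ t, ‖W t‖ ^ 2 ∂AddCircle.haarAddCircle := by
      apply MeasureTheory.integral_congr_ae
      filter_upwards [ContinuousMap.coeFn_toLp (p := 2) (μ := AddCircle.haarAddCircle) (𝕜 := ℂ) W] with t ht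
      rw [ht]
    have h2 : ∫ t, ‖W t‖ ^ 2 ∂(volume : Measure (AddCircle T))
        = T * ∫ t, ‖W t‖ ^ 2 ∂AddCircle.haarAddCircle := by
      rw [AddCircle.volume_eq_smul_haarAddCircle, MeasureTheory.integral_smul_measure,
        ENNReal.toReal_ofReal hT.out.le, smul_eq_mul]
    have h3 : ∫ x in A..(A+T), ‖w x‖ ^ 2
        = ∫ t, ‖W t‖ ^ 2 ∂(volume : Measure (AddCircle T)) := by
      rw [← AddCircle.intervalIntegral_preimage T A (fun t => ‖W t‖ ^ 2)]
      apply intervalIntegral.integral_congr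
      intro x hx
      rw [uIcc_of_le (by linarith [hT.out] : A ≤ A + T)] at hx
      have hWx : W ((x : ℝ) : AddCircle T) = w x := by
        rcases eq_or_lt_of_le hx.2 with hx2 | hx2
        · have hc : ((x : ℝ) : AddCircle T) = ((A : ℝ) : AddCircle T) := by
            rw [hx2]; exact AddCircle.coe_add_period T A
          show AddCircle.liftIco T A w _ = _
          rw [hc, AddCircle.liftIco_coe_apply (by constructor <;> [exact le_refl A; linarith [hT.out]] : A ∈ Ico A (A+T))]
          rw [hper, hx2]
        · exact AddCircle.liftIco_coe_apply ⟨hx.1, hx2⟩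
      simp only [hWx]
    rw [h1, h3, h2, ← mul_assoc, one_div, inv_mul_cancel₀ hT.out.ne', one_mul]
  have := (Summable.hasSum_iff hsummable).2 hval
  refine this.congr_fun fun i => ?_
  rw [hrepr]

lemma wirtinger_dirichlet (a b : ℝ) (hab : a < b) (f f' : ℝ → ℝ)
    (hd : ∀ x, HasDerivAt f (f' x) x) (hc : Continuous f')
    (ha : f a = 0) (hb : f b = 0) :
    ∫ x in a..b, (f x)^2 ≤ ((b-a)/Real.pi)^2 * ∫ x in a..b, (f' x)^2 := by
  have hf : Continuous f := continuous_iff_continuousAt.2 fun x => (hd x).continuousAt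
  set A : ℝ := 2*a - b with hAdef
  set T : ℝ := 2*(b-a) with hTdef
  haveI hT : Fact (0 < T) := ⟨by simp only [hTdef]; linarith⟩
  have hAb : A < b := by simp only [hAdef]; linarith
  have hATb : b = A + T := by simp only [hAdef, hTdef]; ring
  have hAa : A ≤ a := by simp only [hAdef]; linarith
  set g : ℝ → ℝ := fun x => if x ≤ a then -f (2*a - x) else f x with hgdef
  set g' : ℝ → ℝ := fun x => if x ≤ a then f' (2*a - x) else f' x with hg'def
  have hgb : ∀ x, a ≤ x → g x = f x := by
    intro x hx
    rcases eq_or_lt_of_le hx with h | h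
    · rw [← h]; simp [hgdef, show 2*a - a = a by ring, ha]
    · simp [hgdef, not_le.2 h]
  have hga : ∀ x, x ≤ a → g x = -f (2*a - x) := fun x hx => by simp [hgdef, hx]
  have hg'b : ∀ x, a ≤ x → g' x = f' x := by
    intro x hx
    rcases eq_or_lt_of_le hx with h | h
    · rw [← h]; simp [hg'def, show 2*a - a = a by ring]
    · simp [hg'def, not_le.2 h]
  have hg'a : ∀ x, x ≤ a → g' x = f' (2*a - x) := fun x hx => by simp [hg'def, hx]
  have hg : Continuous g := by
    apply Continuous.if_le ((hf.comp (continuous_const.sub continuous_id)).neg) hf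
      continuous_id continuous_const
    intro x hx
    simp only [id_eq] at hx
    rw [hx]
    simp [show 2*a - a = a by ring, ha]
  have hg' : Continuous g' := by
    apply Continuous.if_le (hc.comp (continuous_const.sub continuous_id)) hc
      continuous_id continuous_const
    intro x hx
    simp only [id_eq] at hx
    rw [hx]
    simp [show 2*a - a = a by ring]
  -- derivative of reflected branch
  have hrefl : ∀ x : ℝ, HasDerivAt (fun y => -f (2*a - y)) (f' (2*a - x)) x := by
    intro x
    have h1 : HasDerivAt (fun y : ℝ => 2*a - y) (-1) x := (hasDerivAt_id x).const_sub (2*a)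
    have h2 := ((hd (2*a - x)).comp x h1).neg
    exact h2.congr_deriv (by ring)
  have hdg : ∀ x, HasDerivAt g (g' x) x := by
    intro x
    rcases lt_trichotomy x a with hx | hx | hx
    · have heq : g =ᶠ[nhds x] (fun y => -f (2*a - y)) :=
        Filter.eventuallyEq_of_mem (Iio_mem_nhds hx) (fun y hy => hga y (le_of_lt hy))
      rw [hg'a x hx.le]
      exact (hrefl x).congr_of_eventuallyEq heq
    · rw [hx, hg'b a le_rfl]
      have hda : HasDerivAt (fun y => -f (2*a - y)) (f' a) a := by
        have := hrefl a
        rwa [show 2*a - a = a by ring] at this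
      have hleft : HasDerivWithinAt g (f' a) (Iic a) a :=
        (hda.hasDerivWithinAt (s := Iic a)).congr (fun y hy => hga y hy) (hga a le_rfl)
      have hright : HasDerivWithinAt g (f' a) (Ici a) a :=
        ((hd a).hasDerivWithinAt (s := Ici a)).congr (fun y hy => hgb y hy) (hgb a le_rfl)
      have hu := hleft.union hright
      rw [Iic_union_Ici] at hu
      exact hasDerivWithinAt_univ.1 hu
    · have heq : g =ᶠ[nhds x] f :=
        Filter.eventuallyEq_of_mem (Ioi_mem_nhds hx) (fun y hy => hgb y (le_of_lt hy))
      rw [hg'b x hx.le]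
      exact (hd x).congr_of_eventuallyEq heq
  -- reflection integral identities
  have hsub : ∀ φ : ℝ → ℝ, (∫ x in A..a, φ (2*a - x)) = ∫ x in a..b, φ x := by
    intro φ
    have := intervalIntegral.integral_comp_sub_left (a := A) (b := a) φ (2*a)
    rwa [show 2*a - a = a by ring, show 2*a - A = b by simp only [hAdef]; ring] at this
  have hIg : (∫ x in A..b, (g x)^2) = 2 * ∫ x in a..b, (f x)^2 := by
    rw [← intervalIntegral.integral_add_adjacent_intervals (a := A) (b := a) (c := b) (f := fun x => (g x)^2)
      ((hg.pow 2).intervalIntegrable A a) ((hg.pow 2).intervalIntegrable a b)]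
    have e1 : (∫ x in A..a, (g x)^2) = ∫ x in A..a, (f (2*a - x))^2 := by
      apply intervalIntegral.integral_congr
      intro x hx
      rw [uIcc_of_le hAa] at hx
      show g x ^ 2 = f (2*a - x) ^ 2
      rw [hga x hx.2]
      ring
    have e2 : (∫ x in a..b, (g x)^2) = ∫ x in a..b, (f x)^2 := by
      apply intervalIntegral.integral_congr
      intro x hx
      rw [uIcc_of_le hab.le] at hx
      show g x ^ 2 = f x ^ 2
      rw [hgb x hx.1]
    rw [e1, e2, hsub (fun x => (f x)^2)]
    ring
  have hIg' : (∫ x in A..b, (g' x)^2) = 2 * ∫ x in a..b, (f' x)^2 := by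
    rw [← intervalIntegral.integral_add_adjacent_intervals (a := A) (b := a) (c := b) (f := fun x => (g' x)^2)
      ((hg'.pow 2).intervalIntegrable A a) ((hg'.pow 2).intervalIntegrable a b)]
    have e1 : (∫ x in A..a, (g' x)^2) = ∫ x in A..a, (f' (2*a - x))^2 := by
      apply intervalIntegral.integral_congr
      intro x hx
      rw [uIcc_of_le hAa] at hx
      show g' x ^ 2 = f' (2*a - x) ^ 2
      rw [hg'a x hx.2]
    have e2 : (∫ x in a..b, (g' x)^2) = ∫ x in a..b, (f' x)^2 := by
      apply intervalIntegral.integral_congr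
      intro x hx
      rw [uIcc_of_le hab.le] at hx
      show g' x ^ 2 = f' x ^ 2
      rw [hg'b x hx.1]
    rw [e1, e2, hsub (fun x => (f' x)^2)]
    ring
  have hIg0 : (∫ x in A..b, g x) = 0 := by
    rw [← intervalIntegral.integral_add_adjacent_intervals (a := A) (b := a) (c := b)
      (hg.intervalIntegrable A a) (hg.intervalIntegrable a b)]
    have e1 : (∫ x in A..a, g x) = ∫ x in A..a, -f (2*a - x) := by
      apply intervalIntegral.integral_congr
      intro x hx
      rw [uIcc_of_le hAa] at hx
      exact hga x hx.2
    have e2 : (∫ x in a..b, g x) = ∫ x in a..b, f x := by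
      apply intervalIntegral.integral_congr
      intro x hx
      rw [uIcc_of_le hab.le] at hx
      exact hgb x hx.1
    rw [e1, e2, intervalIntegral.integral_neg, hsub f]
    ring
  -- complexified versions
  set cg : ℝ → ℂ := fun x => (g x : ℂ) with hcgdef
  set cg' : ℝ → ℂ := fun x => (g' x : ℂ) with hcg'def
  have hdc : ∀ x, HasDerivAt cg (cg' x) x := fun x => (hdg x).ofReal_comp
  have hcgc : Continuous cg := Complex.continuous_ofReal.comp hg
  have hcg'c : Continuous cg' := Complex.continuous_ofReal.comp hg'
  have h2ab : 2*a - A = b := by simp only [hAdef]; ring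
  have hgA : g A = 0 := by rw [hga A hAa, h2ab, hb, neg_zero]
  have hgb0 : g b = 0 := by rw [hgb b hab.le, hb]
  have hπ := Real.pi_pos
  have hC0 : fourierCoeffOn hAb cg 0 = 0 := by
    rw [fourierCoeffOn_eq_integral]
    simp only [neg_zero, fourier_zero, one_smul, hcgdef]
    rw [intervalIntegral.integral_ofReal, hIg0]
    simp
  have hCn : ∀ n : ℤ, n ≠ 0 →
      ‖fourierCoeffOn hAb cg n‖ ≤ (T / (2*Real.pi)) * ‖fourierCoeffOn hAb cg' n‖ := by
    intro n hn
    have key := fourierCoeffOn_of_hasDerivAt hAb hn (fun x _ => hdc x)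
      (hcg'c.intervalIntegrable A b)
    have hbd : cg b - cg A = 0 := by simp [hcgdef, hgA, hgb0]
    rw [hbd, mul_zero, zero_sub,
      show ((b:ℂ) - (A:ℂ)) = ((b - A : ℝ) : ℂ) by push_cast; ring] at key
    rw [key, norm_mul, norm_neg, norm_mul]
    have h1 : ‖(1 : ℂ) / (-2 * ↑Real.pi * Complex.I * ↑n)‖ = 1/(2*Real.pi*|(n:ℝ)|) := by
      rw [norm_div, norm_one]
      congr 1
      simp only [norm_mul, Complex.norm_I, Complex.norm_real, Real.norm_eq_abs]
      rw [show ((n:ℂ)) = ((n:ℝ):ℂ) by push_cast; ring, Complex.norm_real, Real.norm_eq_abs]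
      rw [abs_of_pos hπ]
      norm_num
    have h2 : ‖((b - A : ℝ) : ℂ)‖ = T := by
      rw [Complex.norm_real, Real.norm_eq_abs, abs_of_pos (by linarith : (0:ℝ) < b - A)]
      simp only [hAdef, hTdef]; ring
    rw [h1, h2]
    have h1n : (1:ℝ) ≤ |(n:ℝ)| := by
      have : (1:ℤ) ≤ |n| := Int.one_le_abs hn
      calc (1:ℝ) ≤ ((|n| : ℤ) : ℝ) := by exact_mod_cast this
        _ = |(n:ℝ)| := by push_cast; ring
    have hnn : (0:ℝ) ≤ ‖fourierCoeffOn hAb cg' n‖ := norm_nonneg _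
    have hstep : 1/(2*Real.pi*|(n:ℝ)|) ≤ 1/(2*Real.pi) :=
      one_div_le_one_div_of_le (by positivity) (by nlinarith)
    calc 1/(2*Real.pi*|(n:ℝ)|) * (T * ‖fourierCoeffOn hAb cg' n‖)
        ≤ 1/(2*Real.pi) * (T * ‖fourierCoeffOn hAb cg' n‖) := by
          apply mul_le_mul_of_nonneg_right hstep
          exact mul_nonneg hT.out.le hnn
      _ = T / (2*Real.pi) * ‖fourierCoeffOn hAb cg' n‖ := by ring
  have hper : cg A = cg b := by simp [hcgdef, hgA, hgb0]
  have hper' : cg' A = cg' b := by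
    show ((g' A : ℝ) : ℂ) = ((g' b : ℝ) : ℂ)
    rw [hg'a A hAa, h2ab, hg'b b hab.le]
  have PS := parseval_interval A b hATb hAb cg hcgc hper
  have PS' := parseval_interval A b hATb hAb cg' hcg'c hper'
  have hval : ∀ (φ : ℝ → ℝ) (x : ℝ), ‖((φ x : ℝ) : ℂ)‖ ^ 2 = φ x ^ 2 := by
    intro φ x
    rw [Complex.norm_real, Real.norm_eq_abs, sq_abs]
  simp only [hcgdef, hval] at PS
  simp only [hcg'def, hval] at PS'
  have hbound : ∀ n : ℤ, ‖fourierCoeffOn hAb cg n‖^2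
      ≤ (T/(2*Real.pi))^2 * ‖fourierCoeffOn hAb cg' n‖^2 := by
    intro n
    rcases eq_or_ne n 0 with h0 | h0
    · rw [h0, hC0]
      have hz : ‖(0:ℂ)‖ ^ 2 = 0 := by simp
      rw [hz]
      positivity
    · have := hCn n h0
      calc ‖fourierCoeffOn hAb cg n‖ ^ 2
          ≤ (T/(2*Real.pi) * ‖fourierCoeffOn hAb cg' n‖) ^ 2 := by
            apply pow_le_pow_left₀ (norm_nonneg _) this
        _ = (T/(2*Real.pi))^2 * ‖fourierCoeffOn hAb cg' n‖ ^ 2 := by ring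
  have hineq := hasSum_le hbound PS (PS'.mul_left ((T/(2*Real.pi))^2))
  rw [hIg, hIg', hTdef] at hineq
  have hba : (0:ℝ) < b - a := by linarith
  have hbne : b - a ≠ 0 := ne_of_gt hba
  have hπne : Real.pi ≠ 0 := ne_of_gt hπ
  field_simp at hineq ⊢
  exact hineq


lemma poincare_mean_zero (a b : ℝ) (hab : a < b) (f f' : ℝ → ℝ)
    (hd : ∀ x, HasDerivAt f (f' x) x) (hc : Continuous f')
    (hmean : (∫ x in a..b, f x) = 0) :
    ∫ x in a..b, (f x)^2 ≤ ((b-a)/Real.pi)^2 * ∫ x in a..b, (f' x)^2 := by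
  have hf : Continuous f := continuous_iff_continuousAt.2 fun x => (hd x).continuousAt
  set F : ℝ → ℝ := fun x => ∫ t in a..x, f t with hFdef
  have hdF : ∀ x, HasDerivAt F (f x) x := fun x => (hf.integral_hasStrictDerivAt a x).hasDerivAt
  have hFc : Continuous F := continuous_iff_continuousAt.2 fun x => (hdF x).continuousAt
  have hFa : F a = 0 := intervalIntegral.integral_same
  have hFb : F b = 0 := hmean
  set P := ∫ x in a..b, (f x)^2 with hP
  set Q := ∫ x in a..b, (f' x)^2 with hQ
  set R := ∫ x in a..b, (F x)^2 with hR
  set S := ∫ x in a..b, f' x * F x with hS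
  have hPnn : 0 ≤ P := intervalIntegral.integral_nonneg hab.le (fun x _ => sq_nonneg _)
  have hQnn : 0 ≤ Q := intervalIntegral.integral_nonneg hab.le (fun x _ => sq_nonneg _)
  have hIBP : (∫ x in a..b, f x * f x) = f b * F b - f a * F a - S :=
    intervalIntegral.integral_mul_deriv_eq_deriv_mul (fun x _ => hd x) (fun x _ => hdF x)
      (hc.intervalIntegrable a b) (hf.intervalIntegrable a b)
  have hPS : P = -S := by
    rw [hP, hFa, hFb] at *
    have : (∫ x in a..b, (f x)^2) = ∫ x in a..b, f x * f x := by
      apply intervalIntegral.integral_congr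
      intro x _
      show (f x)^2 = f x * f x
      ring
    rw [this, hIBP]
    ring
  have hCS : S^2 ≤ Q * R := by
    have hquad : ∀ t : ℝ, 0 ≤ R * (t*t) + (2*S) * t + Q := by
      intro t
      have h0 : 0 ≤ ∫ x in a..b, (t * F x + f' x)^2 :=
        intervalIntegral.integral_nonneg hab.le (fun x _ => sq_nonneg _)
      have hexp : ∀ x : ℝ, (t * F x + f' x)^2
          = (t*t) * (F x)^2 + (2*t) * (f' x * F x) + (f' x)^2 := fun x => by ring
      have hint : (∫ x in a..b, (t * F x + f' x)^2) = (t*t) * R + (2*t) * S + Q := by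
        simp only [hexp]
        rw [intervalIntegral.integral_add (f := fun x => t*t*(F x)^2 + 2*t*(f' x * F x))
              (g := fun x => (f' x)^2)
              (((continuous_const.mul (hFc.pow 2)).intervalIntegrable a b).add
                ((continuous_const.mul (hc.mul hFc)).intervalIntegrable a b))
              ((hc.pow 2).intervalIntegrable a b),
            intervalIntegral.integral_add (f := fun x => t*t*(F x)^2)
              (g := fun x => 2*t*(f' x * F x))
              ((continuous_const.mul (hFc.pow 2)).intervalIntegrable a b)
              ((continuous_const.mul (hc.mul hFc)).intervalIntegrable a b),
            intervalIntegral.integral_const_mul, intervalIntegral.integral_const_mul]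
      rw [hint] at h0
      linarith
    have hdisc := discrim_le_zero hquad
    rw [discrim] at hdisc
    nlinarith [hdisc]
  have hW := wirtinger_dirichlet a b hab F f hdF hf hFa hFb
  -- hW : R ≤ ((b-a)/π)^2 * P
  rcases eq_or_lt_of_le hPnn with h0 | h0
  · rw [← h0]
    exact mul_nonneg (sq_nonneg _) hQnn
  · have hP2 : P^2 ≤ ((b-a)/Real.pi)^2 * Q * P := by
      calc P^2 = S^2 := by rw [hPS]; ring
        _ ≤ Q * R := hCS
        _ ≤ Q * (((b-a)/Real.pi)^2 * P) := by
            apply mul_le_mul_of_nonneg_left hW hQnn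
        _ = ((b-a)/Real.pi)^2 * Q * P := by ring
    nlinarith [hP2, h0]

lemma exists_global_extension (u u' : ℝ → ℝ)
    (hu : ∀ x ∈ Set.Icc (0:ℝ) 1, HasDerivWithinAt u (u' x) (Set.Icc 0 1) x)
    (hu' : ContinuousOn u' (Set.Icc 0 1)) :
    ∃ U U' : ℝ → ℝ, Continuous U' ∧ (∀ x, HasDerivAt U (U' x) x) ∧
      Set.EqOn U u (Set.Icc 0 1) ∧ Set.EqOn U' u' (Set.Icc 0 1) := by
  classical
  set p : ℝ → ℝ := fun x => max 0 (min 1 x) with hpdef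
  have pin : ∀ y, p y ∈ Icc (0:ℝ) 1 :=
    fun y => ⟨le_max_left _ _, max_le (by norm_num) (min_le_left _ _)⟩
  have p1 : ∀ y ∈ Icc (0:ℝ) 1, p y = y := by
    intro y hy
    simp only [hpdef]
    rw [min_eq_right hy.2, max_eq_right hy.1]
  have p2 : ∀ y, 1 ≤ y → p y = 1 := by
    intro y hy
    simp only [hpdef]
    rw [min_eq_left hy, max_eq_right (by norm_num : (0:ℝ) ≤ 1)]
  have p3 : ∀ y, y ≤ 0 → p y = 0 := by
    intro y hy
    simp only [hpdef]
    rw [min_eq_right (le_trans hy (by norm_num)), max_eq_left hy]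
  have pcont : Continuous p := continuous_const.max (continuous_const.min continuous_id)
  set U' : ℝ → ℝ := fun x => u' (p x) with hU'def
  set U : ℝ → ℝ := fun x => u (p x) + (x - p x) * u' (p x) with hUdef
  have hucont : ContinuousOn u (Icc 0 1) := fun x hx => (hu x hx).continuousWithinAt
  have hU'c : Continuous U' := hu'.comp_continuous pcont pin
  have hUeq : ∀ y ∈ Icc (0:ℝ) 1, U y = u y := by
    intro y hy
    simp only [hUdef, p1 y hy]
    ring_nf
  have hU'eq : ∀ y ∈ Icc (0:ℝ) 1, U' y = u' y := by
    intro y hy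
    simp only [hU'def, p1 y hy]
  have hUright : ∀ y, 1 ≤ y → U y = u 1 + (y - 1) * u' 1 := by
    intro y hy
    simp only [hUdef, p2 y hy]
  have hUleft : ∀ y, y ≤ 0 → U y = u 0 + y * u' 0 := by
    intro y hy
    simp only [hUdef, p3 y hy]
    ring_nf
  have h01 : (0:ℝ) ≤ 1 := by norm_num
  have hdU : ∀ x, HasDerivAt U (U' x) x := by
    intro x
    rcases lt_or_ge x 0 with hx | hx
    · have heq : U =ᶠ[nhds x] (fun y => u 0 + y * u' 0) :=
        Filter.eventuallyEq_of_mem (Iio_mem_nhds hx) (fun y hy => hUleft y (le_of_lt hy))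
      have hlin : HasDerivAt (fun y : ℝ => u 0 + y * u' 0) (u' 0) x := by
        simpa using ((hasDerivAt_id x).mul_const (u' 0)).const_add (u 0)
      rw [hU'def]
      simp only [p3 x hx.le]
      exact hlin.congr_of_eventuallyEq heq
    rcases lt_or_ge 1 x with hx1 | hx1
    · have heq : U =ᶠ[nhds x] (fun y => u 1 + (y - 1) * u' 1) :=
        Filter.eventuallyEq_of_mem (Ioi_mem_nhds hx1) (fun y hy => hUright y (le_of_lt hy))
      have hlin : HasDerivAt (fun y : ℝ => u 1 + (y - 1) * u' 1) (u' 1) x := by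
        simpa using (((hasDerivAt_id x).sub_const 1).mul_const (u' 1)).const_add (u 1)
      rw [hU'def]
      simp only [p2 x hx1.le]
      exact hlin.congr_of_eventuallyEq heq
    -- now 0 ≤ x ≤ 1
    have hxI : x ∈ Icc (0:ℝ) 1 := ⟨hx, hx1⟩
    have hU'x : U' x = u' x := hU'eq x hxI
    rw [hU'x]
    rcases eq_or_lt_of_le hx with hx0 | hx0
    · -- x = 0
      rw [← hx0]
      have hmid : HasDerivWithinAt U (u' 0) (Icc 0 1) 0 :=
        ((hu 0 (by constructor <;> norm_num)).congr (fun y hy => hUeq y hy)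
          (hUeq 0 (by constructor <;> norm_num)))
      have hlin : HasDerivAt (fun y : ℝ => u 0 + y * u' 0) (u' 0) 0 := by
        simpa using ((hasDerivAt_id (0:ℝ)).mul_const (u' 0)).const_add (u 0)
      have hleft : HasDerivWithinAt U (u' 0) (Iic 0) 0 :=
        (hlin.hasDerivWithinAt (s := Iic 0)).congr (fun y hy => hUleft y hy)
          (hUleft 0 le_rfl)
      have hun := hleft.union hmid
      rw [Iic_union_Icc_eq_Iic h01] at hun
      exact hun.hasDerivAt (Iic_mem_nhds (by norm_num))
    rcases eq_or_lt_of_le hx1 with hx10 | hx10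
    · -- x = 1
      rw [hx10]
      have hmid : HasDerivWithinAt U (u' 1) (Icc 0 1) 1 :=
        ((hu 1 (by constructor <;> norm_num)).congr (fun y hy => hUeq y hy)
          (hUeq 1 (by constructor <;> norm_num)))
      have hlin : HasDerivAt (fun y : ℝ => u 1 + (y - 1) * u' 1) (u' 1) 1 := by
        simpa using (((hasDerivAt_id (1:ℝ)).sub_const 1).mul_const (u' 1)).const_add (u 1)
      have hright : HasDerivWithinAt U (u' 1) (Ici 1) 1 :=
        (hlin.hasDerivWithinAt (s := Ici 1)).congr (fun y hy => hUright y hy)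
          (hUright 1 le_rfl)
      have hun := hmid.union hright
      rw [Icc_union_Ici_eq_Ici h01] at hun
      exact hun.hasDerivAt (Ici_mem_nhds (by norm_num))
    · -- 0 < x < 1
      have heq : U =ᶠ[nhds x] u :=
        Filter.eventuallyEq_of_mem (Ioo_mem_nhds hx0 hx10)
          (fun y hy => hUeq y ⟨hy.1.le, hy.2.le⟩)
      have hat : HasDerivAt u (u' x) x :=
        (hu x hxI).hasDerivAt (Icc_mem_nhds hx0 hx10)
      exact hat.congr_of_eventuallyEq heq
  exact ⟨U, U', hU'c, hdU, fun y hy => hUeq y hy, fun y hy => hU'eq y hy⟩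

lemma interval_step (a b : ℝ) (hab : a < b) (U U' : ℝ → ℝ)
    (hd : ∀ x, HasDerivAt U (U' x) x) (hc : Continuous U') :
    (∫ x in a..b, (U x)^2) - (b - a) * ((1/(b-a)) * ∫ x in a..b, U x)^2
      ≤ ((b-a)/Real.pi)^2 * ∫ x in a..b, (U' x)^2 := by
  have hUc : Continuous U := continuous_iff_continuousAt.2 fun x => (hd x).continuousAt
  have hbane : b - a ≠ 0 := ne_of_gt (by linarith)
  set c : ℝ := (1/(b-a)) * ∫ x in a..b, U x with hcdef
  have hIU : (∫ x in a..b, U x) = (b-a) * c := by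
    rw [hcdef]; field_simp
  have hmean : (∫ x in a..b, (U x - c)) = 0 := by
    rw [intervalIntegral.integral_sub (hUc.intervalIntegrable a b)
      (intervalIntegrable_const), intervalIntegral.integral_const, hIU, smul_eq_mul]
    ring
  have hpoin := poincare_mean_zero a b hab (fun x => U x - c) U'
    (fun x => (hd x).sub_const c) hc hmean
  have hexp : (∫ x in a..b, (U x - c)^2)
      = (∫ x in a..b, (U x)^2) - (b-a) * c^2 := by
    have hpt : ∀ x : ℝ, (U x - c)^2 = ((U x)^2 - (2*c) * U x) + c^2 := fun x => by ring
    simp only [hpt]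
    rw [intervalIntegral.integral_add (f := fun x => (U x)^2 - (2*c) * U x) (g := fun _ => c^2)
        (((hUc.pow 2).sub (continuous_const.mul hUc)).intervalIntegrable a b)
        intervalIntegrable_const,
      intervalIntegral.integral_sub (f := fun x => (U x)^2) (g := fun x => (2*c) * U x) ((hUc.pow 2).intervalIntegrable a b)
        ((continuous_const.mul hUc).intervalIntegrable a b),
      intervalIntegral.integral_const_mul, intervalIntegral.integral_const, hIU, smul_eq_mul]
    ring
  rw [hexp] at hpoin
  linarith [hpoin]

/-- Comparison of the continuous and discrete optimal trial norms:
`ε²∫(u')² + ∫u² − ū² ≤ (1 + (h/(πε))²)·(ε²∫(u')² + (1/n)Σ a_i² − ū²)`. -/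
theorem stmt_4 (ε : ℝ) (hε : 0 < ε) (n : ℕ) (hn : 1 ≤ n) (u u' : ℝ → ℝ)
    (hu : ∀ x ∈ Set.Icc (0:ℝ) 1, HasDerivWithinAt u (u' x) (Set.Icc 0 1) x)
    (hu' : ContinuousOn u' (Set.Icc 0 1)) :
    let h : ℝ := 1 / n
    let ubar : ℝ := ∫ x in (0:ℝ)..1, u x
    ε ^ 2 * (∫ x in (0:ℝ)..1, (u' x) ^ 2) + (∫ x in (0:ℝ)..1, (u x) ^ 2) - ubar ^ 2
      ≤ (1 + (h / (Real.pi * ε)) ^ 2) *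
        (ε ^ 2 * (∫ x in (0:ℝ)..1, (u' x) ^ 2) +
          (1 / (n : ℝ)) * (∑ i ∈ Finset.Icc 1 n,
            ((1 / h) * ∫ x in (((i : ℝ) - 1) * h)..((i : ℝ) * h), u x) ^ 2) - ubar ^ 2) := by
  intro h ubar
  obtain ⟨U, U', hU'c, hdU, hUeq, hU'eq⟩ := exists_global_extension u u' hu hu'
  have hUc : Continuous U := continuous_iff_continuousAt.2 fun x => (hdU x).continuousAt
  have hnpos : (0:ℝ) < n := by exact_mod_cast Nat.pos_of_ne_zero (by omega)
  have hh : h = 1/(n:ℝ) := rfl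
  have hhpos : 0 < h := by rw [hh]; positivity
  have hnh : (n:ℝ) * h = 1 := by rw [hh]; field_simp
  have hπ := Real.pi_pos
  have hcong : ∀ (s t : ℝ), 0 ≤ s → t ≤ 1 → s ≤ t → ∀ φ ψ : ℝ → ℝ,
      Set.EqOn φ ψ (Set.Icc 0 1) → (∫ x in s..t, φ x) = ∫ x in s..t, ψ x := by
    intro s t hs ht hst φ ψ heq
    apply intervalIntegral.integral_congr
    intro x hx
    rw [uIcc_of_le hst] at hx
    exact heq ⟨le_trans hs hx.1, le_trans hx.2 ht⟩
  set X := ∫ x in (0:ℝ)..1, (U' x)^2 with hXdef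
  set Y := ∫ x in (0:ℝ)..1, (U x)^2 with hYdef
  set A : ℕ → ℝ := fun i => (1/h) * ∫ x in (((i:ℝ)-1)*h)..((i:ℝ)*h), U x with hAdef
  set S := ∑ i ∈ Finset.Icc 1 n, (A i)^2 with hSdef
  have e1 : (∫ x in (0:ℝ)..1, (u' x)^2) = X :=
    hcong 0 1 le_rfl le_rfl (by norm_num) _ _ (fun x hx => by
      show (u' x)^2 = (U' x)^2; rw [hU'eq hx])
  have e2 : (∫ x in (0:ℝ)..1, (u x)^2) = Y :=
    hcong 0 1 le_rfl le_rfl (by norm_num) _ _ (fun x hx => by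
      show (u x)^2 = (U x)^2; rw [hUeq hx])
  have e3 : (∑ i ∈ Finset.Icc 1 n,
      ((1 / h) * ∫ x in (((i : ℝ) - 1) * h)..((i : ℝ) * h), u x) ^ 2) = S := by
    apply Finset.sum_congr rfl
    intro i hi
    rw [Finset.mem_Icc] at hi
    have hi1 : (1:ℝ) ≤ (i:ℝ) := by exact_mod_cast hi.1
    have hin : (i:ℝ) ≤ (n:ℝ) := by exact_mod_cast hi.2
    have hint : (∫ x in (((i : ℝ) - 1) * h)..((i : ℝ) * h), u x)
        = ∫ x in (((i : ℝ) - 1) * h)..((i : ℝ) * h), U x := by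
      apply hcong
      · apply mul_nonneg (by linarith) hhpos.le
      · calc (i:ℝ) * h ≤ (n:ℝ) * h := by
              apply mul_le_mul_of_nonneg_right hin hhpos.le
          _ = 1 := hnh
      · nlinarith [hhpos]
      · exact fun x hx => (hUeq hx).symm
    rw [hint]
  set m : ℕ → ℝ := fun k => (k:ℝ)*h with hmdef
  have hm0 : m 0 = 0 := by simp [hmdef]
  have hmn : m n = 1 := by simp only [hmdef]; exact hnh
  have hadj : ∀ (φ : ℝ → ℝ), Continuous φ →
      (∑ k ∈ Finset.range n, (∫ x in m k..m (k+1), φ x)) = ∫ x in (0:ℝ)..1, φ x := by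
    intro φ hφ
    have := intervalIntegral.sum_integral_adjacent_intervals (a := m) (n := n)
      (μ := volume) (f := φ) (fun k _ => (hφ.intervalIntegrable _ _))
    rwa [hm0, hmn] at this
  have hstep : ∀ k ∈ Finset.range n,
      (∫ x in m k..m (k+1), (U x)^2) - h * (A (k+1))^2
        ≤ (h/Real.pi)^2 * ∫ x in m k..m (k+1), (U' x)^2 := by
    intro k _
    have hlt : m k < m (k+1) := by
      simp only [hmdef]
      push_cast
      nlinarith [hhpos]
    have hIS := interval_step (m k) (m (k+1)) hlt U U' hdU hU'c
    have hba : m (k+1) - m k = h := by simp only [hmdef]; push_cast; ring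
    rw [hba] at hIS
    have hA1 : A (k+1) = (1/h) * ∫ x in m k..m (k+1), U x := by
      show (1/h) * (∫ x in ((((k+1:ℕ)):ℝ)-1)*h..(((k+1:ℕ)):ℝ)*h, U x) = _
      have e : ((((k+1:ℕ)):ℝ)-1) * h = m k := by simp only [hmdef]; push_cast; ring
      have e' : (((k+1:ℕ)):ℝ) * h = m (k+1) := by simp only [hmdef]
      rw [e, e']
    rw [← hA1] at hIS
    exact hIS
  have hsum := Finset.sum_le_sum hstep
  rw [Finset.sum_sub_distrib, ← Finset.mul_sum, ← Finset.mul_sum,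
    hadj (fun x => (U x)^2) (hUc.pow 2), hadj (fun x => (U' x)^2) (hU'c.pow 2)] at hsum
  have hreindex : (∑ k ∈ Finset.range n, (A (k+1))^2) = S := by
    rw [hSdef, ← Finset.Ico_add_one_right_eq_Icc, Finset.sum_Ico_eq_sum_range]
    simp only [Nat.add_sub_cancel]
    apply Finset.sum_congr rfl
    intro k _
    rw [Nat.add_comm]
  rw [hreindex] at hsum
  -- hsum : Y - h * S ≤ (h/π)^2 * X
  have hubar : ubar = h * ∑ i ∈ Finset.Icc 1 n, A i := by
    have h1 : ubar = ∫ x in (0:ℝ)..1, U x :=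
      hcong 0 1 le_rfl le_rfl (by norm_num) _ _ (fun x hx => (hUeq hx).symm)
    rw [h1, ← hadj U hUc, Finset.mul_sum, ← Finset.Ico_add_one_right_eq_Icc,
      Finset.sum_Ico_eq_sum_range]
    simp only [Nat.add_sub_cancel]
    apply Finset.sum_congr rfl
    intro k _
    rw [Nat.add_comm 1 k]
    have hA1 : A (k+1) = (1/h) * ∫ x in m k..m (k+1), U x := by
      show (1/h) * (∫ x in ((((k+1:ℕ)):ℝ)-1)*h..(((k+1:ℕ)):ℝ)*h, U x) = _
      have e : ((((k+1:ℕ)):ℝ)-1) * h = m k := by simp only [hmdef]; push_cast; ring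
      have e' : (((k+1:ℕ)):ℝ) * h = m (k+1) := by simp only [hmdef]
      rw [e, e']
    rw [hA1, ← mul_assoc, mul_one_div, div_self (ne_of_gt hhpos), one_mul]
  have hubar2 : ubar^2 ≤ h * S := by
    rw [hubar, mul_pow]
    have hcheb := sq_sum_le_card_mul_sum_sq (s := Finset.Icc 1 n) (f := A)
    rw [Nat.card_Icc, Nat.add_sub_cancel] at hcheb
    calc h^2 * (∑ i ∈ Finset.Icc 1 n, A i)^2
        ≤ h^2 * ((n:ℝ) * S) := by
          apply mul_le_mul_of_nonneg_left _ (sq_nonneg h)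
          exact_mod_cast hcheb
      _ = h * ((n:ℝ) * h) * S := by ring
      _ = h * S := by rw [hnh]; ring
  rw [e1, e2, e3, show (1/(n:ℝ)) = h from rfl]
  have hscal : (h/(Real.pi*ε))^2 * ε^2 = (h/Real.pi)^2 := by
    field_simp
  have hdX : (h/(Real.pi*ε))^2 * (ε^2*X) = (h/Real.pi)^2 * X := by
    rw [← mul_assoc, hscal]
  have hprod : 0 ≤ (h/(Real.pi*ε))^2 * (h*S - ubar^2) :=
    mul_nonneg (sq_nonneg _) (by linarith)
  have expand : (1 + (h/(Real.pi*ε))^2) * (ε^2*X + h*S - ubar^2)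
      = (ε^2*X + h*S - ubar^2) + (h/(Real.pi*ε))^2*(ε^2*X)
        + (h/(Real.pi*ε))^2*(h*S - ubar^2) := by ring
  have goal2 : ε^2*X + Y - ubar^2 ≤ (1 + (h/(Real.pi*ε))^2) * (ε^2*X + h*S - ubar^2) := by
    rw [expand]
    linarith [hsum, hprod, hdX]
  convert goal2 using 2 <;> ring
end

section
/- Let n = 2m be an even positive integer, h = 1/n, x_j = j·h, and let ω : [0,1] → ℝ be the continuous 'teeth saw' function that is linear on each subinterval [x_{i−1}, x_i] and satisfies ω(x_j) = 1 for odd j and ω(x_j) = 0 for even j. Then: (a) (1/h)·∫_{x_{i−1}}^{x_i} ω(x) dx = 1/2 for every i = 1, …, n, and consequently (1/n)·Σ_{i=1}^n ((1/h)·∫_{x_{i−1}}^{x_i} ω)² − (∫_0^1 ω)² = 0; (b) Σ_{i=1}^n ∫_{x_{i−1}}^{x_i} (ω'(x))² dx = n² = 1/h² (where on each open subinterval ω' is the constant slope of ω). -/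
open MeasureTheory intervalIntegral


lemma lin_int (a b c k : ℝ) :
    ∫ x in a..b, (x - c) * k = ((b^2 - a^2)/2 - c*(b-a)) * k := by
  rw [intervalIntegral.integral_mul_const,
    intervalIntegral.integral_sub intervalIntegrable_id (intervalIntegrable_const),
    integral_id, intervalIntegral.integral_const]
  simp only [smul_eq_mul]
  ring

lemma lin_int2 (a b c k : ℝ) :
    ∫ x in a..b, 1 - (x - c) * k = (b - a) - ((b^2 - a^2)/2 - c*(b-a)) * k := by
  have h1 : IntervalIntegrable (fun x : ℝ => (x - c) * k) volume a b :=
    ((intervalIntegrable_id.sub intervalIntegrable_const).mul_const k)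
  rw [intervalIntegral.integral_sub intervalIntegrable_const h1, lin_int,
    intervalIntegral.integral_const]
  simp only [smul_eq_mul]
  ring

/-- The "teeth saw" function `ω` on the uniform mesh with `n = 2m`
subintervals (piecewise linear, `ω(x_j) = 1` for odd `j`, `0` for even `j`) has
subinterval averages `1/2`, hence discrete seminorm `|ω|_{*,h} = 0`, while
`Σ ∫ (ω')² = n² = 1/h²`. -/
theorem stmt_5 (m : ℕ) (hm : 1 ≤ m) (n : ℕ) (hn : n = 2 * m) (ω : ℝ → ℝ)
    (hω : ∀ j : ℕ, j < n → ∀ x ∈ Set.Icc ((j : ℝ) * (1 / n)) (((j : ℝ) + 1) * (1 / n)),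
      ω x = if Even j then (x - (j : ℝ) * (1 / n)) * n
            else 1 - (x - (j : ℝ) * (1 / n)) * n) :
    let h : ℝ := 1 / n
    (∀ i ∈ Finset.Icc 1 n,
        (1 / h) * (∫ x in (((i : ℝ) - 1) * h)..((i : ℝ) * h), ω x) = 1 / 2) ∧
    ((1 / (n : ℝ)) * (∑ i ∈ Finset.Icc 1 n,
        ((1 / h) * ∫ x in (((i : ℝ) - 1) * h)..((i : ℝ) * h), ω x) ^ 2)
      - (∫ x in (0:ℝ)..1, ω x) ^ 2 = 0) ∧
    (∑ i ∈ Finset.Icc 1 n,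
        (∫ x in (((i : ℝ) - 1) * h)..((i : ℝ) * h), (deriv ω x) ^ 2) = (n : ℝ) ^ 2) ∧
    ((n : ℝ) ^ 2 = 1 / h ^ 2) := by
  intro h
  have hn1 : 1 ≤ n := by omega
  have hne : (n : ℝ) ≠ 0 := by positivity
  have hnpos : (0 : ℝ) < n := by positivity
  have hhpos : (0 : ℝ) < h := by positivity
  -- interval endpoints
  have hab : ∀ j : ℕ, (j : ℝ) * (1/n) < ((j : ℝ) + 1) * (1/n) := by
    intro j
    have : (j : ℝ) < (j : ℝ) + 1 := by linarith
    exact mul_lt_mul_of_pos_right this hhpos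
  -- equality of ω with linear function on the closed subinterval
  have hcong : ∀ j : ℕ, j < n → Set.EqOn ω
      (fun x => if Even j then (x - (j : ℝ) * (1/n)) * n else 1 - (x - (j : ℝ) * (1/n)) * n)
      (Set.uIcc ((j : ℝ) * (1/n)) (((j : ℝ) + 1) * (1/n))) := by
    intro j hj x hx
    rw [Set.uIcc_of_le (hab j).le] at hx
    exact hω j hj x hx
  -- the integral over each subinterval equals h/2
  have key_int : ∀ j : ℕ, j < n →
      ∫ x in ((j : ℝ) * (1/n))..(((j : ℝ) + 1) * (1/n)), ω x = (1/n) / 2 := by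
    intro j hj
    rw [intervalIntegral.integral_congr (hcong j hj)]
    by_cases hje : Even j
    · simp only [hje, if_true]
      rw [lin_int]
      field_simp
      ring
    · simp only [hje, if_false]
      rw [lin_int2]
      field_simp
      ring
  -- derivative squared on the open subinterval
  have key_d : ∀ j : ℕ, j < n → ∀ x ∈ Set.Ioo ((j : ℝ) * (1/n)) (((j : ℝ) + 1) * (1/n)),
      (deriv ω x) ^ 2 = (n : ℝ) ^ 2 := by
    intro j hj x hx
    have hnhds : Set.Ioo ((j : ℝ) * (1/n)) (((j : ℝ) + 1) * (1/n)) ∈ nhds x :=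
      Ioo_mem_nhds hx.1 hx.2
    have hev : ω =ᶠ[nhds x]
        (fun y => if Even j then (y - (j : ℝ) * (1/n)) * n else 1 - (y - (j : ℝ) * (1/n)) * n) := by
      filter_upwards [hnhds] with y hy
      exact hω j hj y (Set.Ioo_subset_Icc_self hy)
    rw [Filter.EventuallyEq.deriv_eq hev]
    by_cases hje : Even j
    · have hde : HasDerivAt (fun y : ℝ => (y - (j : ℝ) * (1/n)) * n) ((1:ℝ) * n) x :=
        ((hasDerivAt_id x).sub_const _).mul_const _
      simp only [hje, if_true]
      rw [hde.deriv]
      ring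
    · have hde : HasDerivAt (fun y : ℝ => 1 - (y - (j : ℝ) * (1/n)) * n) ((0:ℝ) - (1:ℝ) * n) x :=
        (hasDerivAt_const x 1).sub (((hasDerivAt_id x).sub_const _).mul_const _)
      simp only [hje, if_false]
      rw [hde.deriv]
      ring
  -- integral of deriv squared on each subinterval
  have key_deriv : ∀ j : ℕ, j < n →
      ∫ x in ((j : ℝ) * (1/n))..(((j : ℝ) + 1) * (1/n)), (deriv ω x) ^ 2 = (n : ℝ) := by
    intro j hj
    set a := (j : ℝ) * (1/n) with ha
    set b := ((j : ℝ) + 1) * (1/n) with hb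
    have hae : ∀ᵐ x ∂(volume : Measure ℝ), x ∈ Set.uIoc a b →
        (deriv ω x) ^ 2 = (fun _ : ℝ => (n : ℝ)^2) x := by
      rw [ae_iff]
      refine measure_mono_null (fun x hx => ?_) (Real.volume_singleton (a := b))
      simp only [Set.mem_setOf_eq, _root_.not_imp] at hx
      obtain ⟨hmem, hneq⟩ := hx
      rw [Set.uIoc_of_le (hab j).le] at hmem
      by_contra hxb
      have hxb' : x ≠ b := hxb
      have : x ∈ Set.Ioo a b := ⟨hmem.1, lt_of_le_of_ne hmem.2 hxb'⟩
      exact hneq (key_d j hj x this)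
    rw [intervalIntegral.integral_congr_ae hae, intervalIntegral.integral_const]
    have : b - a = 1/n := by rw [ha, hb]; ring
    rw [smul_eq_mul, this]
    field_simp
  -- total integral
  have hint : ∀ j : ℕ, j < n → IntervalIntegrable ω volume
      ((j : ℝ) * (1/n)) (((j : ℝ) + 1) * (1/n)) := by
    intro j hj
    apply ContinuousOn.intervalIntegrable
    apply ContinuousOn.congr (s := Set.uIcc ((j : ℝ) * (1/n)) (((j : ℝ) + 1) * (1/n)))
      (f := fun x => if Even j then (x - (j : ℝ) * (1/n)) * n else 1 - (x - (j : ℝ) * (1/n)) * n)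
    · by_cases hje : Even j <;> simp only [hje, if_true, if_false] <;> fun_prop
    · exact hcong j hj
  have htotal : ∫ x in (0:ℝ)..1, ω x = 1 / 2 := by
    have hpts : ∫ x in ((0:ℕ) * (1/(n:ℝ)))..((n:ℕ) * (1/(n:ℝ))), ω x
        = ∑ j ∈ Finset.range n, ∫ x in ((j:ℝ) * (1/n))..(((j:ℝ)+1) * (1/n)), ω x := by
      rw [← intervalIntegral.sum_integral_adjacent_intervals (a := fun j : ℕ => (j : ℝ) * (1/n))
        (n := n)]
      · congr 1
        ext j
        push_cast
        ring_nf
      · intro j hj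
        have := hint j hj
        convert this using 2
        push_cast
        ring
    have h0 : ((0:ℕ) : ℝ) * (1/(n:ℝ)) = 0 := by norm_num
    have h1 : ((n:ℕ) : ℝ) * (1/(n:ℝ)) = 1 := by field_simp
    rw [h0, h1] at hpts
    rw [hpts, Finset.sum_congr rfl (fun j hj => key_int j (Finset.mem_range.mp hj))]
    rw [Finset.sum_const, Finset.card_range, nsmul_eq_mul]
    field_simp
  -- now the four statements
  have bullet1 : ∀ i ∈ Finset.Icc 1 n,
      (1 / h) * (∫ x in (((i : ℝ) - 1) * h)..((i : ℝ) * h), ω x) = 1 / 2 := by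
    intro i hi
    rw [Finset.mem_Icc] at hi
    obtain ⟨j, rfl⟩ : ∃ j, i = j + 1 := ⟨i - 1, by omega⟩
    have hj : j < n := by omega
    have e1 : ((j + 1 : ℕ) : ℝ) - 1 = (j : ℝ) := by push_cast; ring
    have e2 : ((j + 1 : ℕ) : ℝ) = (j : ℝ) + 1 := by push_cast; ring
    rw [e1, e2]
    show (1 / (1/(n:ℝ))) * (∫ x in ((j:ℝ) * (1/n))..(((j:ℝ)+1) * (1/n)), ω x) = 1/2
    rw [key_int j hj]
    field_simp
  refine ⟨bullet1, ?_, ?_, ?_⟩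
  · rw [Finset.sum_congr rfl (fun i hi => by rw [bullet1 i hi]), htotal,
      Finset.sum_const, Nat.card_Icc, nsmul_eq_mul]
    have : ((n + 1 - 1 : ℕ) : ℝ) = (n : ℝ) := by push_cast; ring
    rw [this]
    field_simp
    norm_num
  · have bullet3 : ∀ i ∈ Finset.Icc 1 n,
        (∫ x in (((i : ℝ) - 1) * h)..((i : ℝ) * h), (deriv ω x) ^ 2) = (n : ℝ) := by
      intro i hi
      rw [Finset.mem_Icc] at hi
      obtain ⟨j, rfl⟩ : ∃ j, i = j + 1 := ⟨i - 1, by omega⟩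
      have hj : j < n := by omega
      have e1 : ((j + 1 : ℕ) : ℝ) - 1 = (j : ℝ) := by push_cast; ring
      have e2 : ((j + 1 : ℕ) : ℝ) = (j : ℝ) + 1 := by push_cast; ring
      rw [e1, e2]
      exact key_deriv j hj
    rw [Finset.sum_congr rfl bullet3, Finset.sum_const, Nat.card_Icc, nsmul_eq_mul]
    have : ((n + 1 - 1 : ℕ) : ℝ) = (n : ℝ) := by push_cast; ring
    rw [this]
    ring
  · show (n : ℝ) ^ 2 = 1 / (1/(n:ℝ)) ^ 2
    field_simp
end

section
/- Fix ε > 0 and an integer n ≥ 2, let h = 1/n and x_j = j·h, and assume ε/h < 1/2, so that b := 1/2 − ε/h > 0. Let B : [0,h] → ℝ be continuous and nonnegative with B(0) = B(h) = 0 and (1/h)·∫_0^h B(x) dx = b; for i = 1, …, n define B_i : [0,1] → ℝ by B_i(x) = B(x − x_{i−1}) for x ∈ [x_{i−1}, x_i] and B_i(x) = 0 otherwise. Let f : [0,1] → ℝ be continuous and ‖f‖_∞ := sup_{x∈[0,1]} |f(x)|. For 1 ≤ j ≤ n−1 define u_j := ∫_0^{x_j} f(x) dx + ∫_0^{x_1}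 f(x)·(B_1(x) − φ_0(x)) dx + ∫_{x_j}^{x_{j+1}} f(x)·(φ_j(x) − B_{j+1}(x)) dx (which are the nodal values of the bubble upwinding Petrov–Galerkin solution with this choice of bubble). Then for every j with 1 ≤ j ≤ n−1: |u_j − ∫_0^{x_j} f(x) dx| ≤ 2·‖f‖_∞·(1 − ε/h)·h ≤ 2·‖f‖_∞·h. -/
open MeasureTheory intervalIntegral

lemma key_bound (h M : ℝ) (hh : 0 < h) (hM : 0 ≤ M)
    (B : ℝ → ℝ) (hBc : ContinuousOn B (Set.Icc 0 h))
    (hBnn : ∀ x ∈ Set.Icc (0:ℝ) h, 0 ≤ B x)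
    (a : ℝ) (f : ℝ → ℝ) (hfc : ContinuousOn f (Set.Icc a (a+h)))
    (hfM : ∀ x ∈ Set.Icc a (a+h), |f x| ≤ M) :
    |∫ x in a..(a+h), f x * (B (x - a) - (1 - (x-a)/h))| ≤
      M * ((∫ t in (0:ℝ)..h, B t) + h/2) := by
  have hab : a ≤ a + h := by linarith
  have hmap : ∀ x ∈ Set.Icc a (a+h), x - a ∈ Set.Icc (0:ℝ) h := by
    intro x hx; exact ⟨by linarith [hx.1], by linarith [hx.2]⟩
  have hsub : Continuous (fun x : ℝ => x - a) := continuous_id.sub continuous_const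
  have hBc' : ContinuousOn (fun x => B (x - a)) (Set.Icc a (a+h)) :=
    hBc.comp hsub.continuousOn hmap
  have hLc : ContinuousOn (fun x : ℝ => 1 - (x - a)/h) (Set.Icc a (a+h)) :=
    (continuous_const.sub (hsub.div_const h)).continuousOn
  have hcont : ContinuousOn (fun x => f x * (B (x - a) - (1 - (x-a)/h)))
      (Set.Icc a (a+h)) := hfc.mul (hBc'.sub hLc)
  have huicc : Set.uIcc a (a+h) = Set.Icc a (a+h) := Set.uIcc_of_le hab
  have hint : IntervalIntegrable (fun x => f x * (B (x - a) - (1 - (x-a)/h)))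
      volume a (a+h) := (huicc ▸ hcont).intervalIntegrable
  have hintB : IntervalIntegrable (fun x => B (x - a)) volume a (a+h) :=
    (huicc ▸ hBc').intervalIntegrable
  have hintL : IntervalIntegrable (fun x : ℝ => 1 - (x - a)/h) volume a (a+h) :=
    (huicc ▸ hLc).intervalIntegrable
  have hintRHS : IntervalIntegrable (fun x => M * (B (x - a) + (1 - (x-a)/h)))
      volume a (a+h) := ((hintB.add hintL).const_mul M)
  have step1 : |∫ x in a..(a+h), f x * (B (x - a) - (1 - (x-a)/h))| ≤
      ∫ x in a..(a+h), |f x * (B (x - a) - (1 - (x-a)/h))| :=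
    intervalIntegral.abs_integral_le_integral_abs hab
  have step2 : (∫ x in a..(a+h), |f x * (B (x - a) - (1 - (x-a)/h))|) ≤
      ∫ x in a..(a+h), M * (B (x - a) + (1 - (x-a)/h)) := by
    apply intervalIntegral.integral_mono_on hab (hint.abs) hintRHS
    intro x hx
    have hx' := hmap x hx
    have hB1 : 0 ≤ B (x - a) := hBnn _ hx'
    have hL0 : 0 ≤ 1 - (x - a)/h := by
      have : (x - a)/h ≤ 1 := by
        rw [div_le_one hh]; linarith [hx'.2]
      linarith
    rw [abs_mul]
    have habs : |B (x - a) - (1 - (x-a)/h)| ≤ B (x - a) + (1 - (x-a)/h) := by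
      calc |B (x - a) - (1 - (x-a)/h)| ≤ |B (x-a)| + |1 - (x-a)/h| := abs_sub _ _
        _ = B (x - a) + (1 - (x-a)/h) := by rw [abs_of_nonneg hB1, abs_of_nonneg hL0]
    exact mul_le_mul (hfM x hx) habs (abs_nonneg _) hM
  have hcomp : (∫ x in a..(a+h), B (x - a)) = ∫ t in (0:ℝ)..h, B t := by
    have := intervalIntegral.integral_comp_sub_right (a := a) (b := a+h) (fun t => B t) a
    simpa using this
  have hL : (∫ x in a..(a+h), (1 - (x - a)/h)) = h/2 := by
    have e1 : (∫ x in a..(a+h), (1 - (x - a)/h)) = ∫ t in (0:ℝ)..h, (1 - t/h) := by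
      have := intervalIntegral.integral_comp_sub_right (a := a) (b := a+h)
        (fun t => 1 - t/h) a
      simpa using this
    rw [e1, intervalIntegral.integral_sub intervalIntegrable_const
      (intervalIntegrable_id.div_const h)]
    rw [intervalIntegral.integral_div, integral_id,
      intervalIntegral.integral_const]
    field_simp
    ring
  have step3 : (∫ x in a..(a+h), M * (B (x - a) + (1 - (x-a)/h))) =
      M * ((∫ t in (0:ℝ)..h, B t) + h/2) := by
    rw [intervalIntegral.integral_const_mul,
      intervalIntegral.integral_add hintB hintL, hcomp, hL]
  calc |∫ x in a..(a+h), f x * (B (x - a) - (1 - (x-a)/h))|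
      ≤ ∫ x in a..(a+h), |f x * (B (x - a) - (1 - (x-a)/h))| := step1
    _ ≤ ∫ x in a..(a+h), M * (B (x - a) + (1 - (x-a)/h)) := step2
    _ = M * ((∫ t in (0:ℝ)..h, B t) + h/2) := by rw [step3]

/-- For a nonnegative bubble `B` with average `b = 1/2 − ε/h > 0`, the
nodal values `u_j` of the bubble UPG solution satisfy
`|u_j − ∫_0^{x_j} f| ≤ 2‖f‖_∞(1 − ε/h)h ≤ 2‖f‖_∞h`. -/
theorem stmt_10 (ε : ℝ) (hε : 0 < ε) (n : ℕ) (hn : 2 ≤ n)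
    (hεh : ε / ((1:ℝ) / n) < 1 / 2)
    (B : ℝ → ℝ) (hBc : ContinuousOn B (Set.Icc 0 (1 / n)))
    (hBnn : ∀ x ∈ Set.Icc (0:ℝ) (1 / n), 0 ≤ B x)
    (hB0 : B 0 = 0) (hBh : B (1 / n) = 0)
    (hBavg : ((1:ℝ) / (1 / n)) * (∫ x in (0:ℝ)..(1 / n), B x) = 1 / 2 - ε / ((1:ℝ) / n))
    (f : ℝ → ℝ) (hf : ContinuousOn f (Set.Icc 0 1))
    (j : ℕ) (hj1 : 1 ≤ j) (hj2 : j ≤ n - 1) :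
    let h : ℝ := 1 / n
    let Bi : ℕ → ℝ → ℝ := fun i x =>
      if x ∈ Set.Icc (((i : ℝ) - 1) * h) ((i : ℝ) * h) then B (x - ((i : ℝ) - 1) * h) else 0
    let φ : ℕ → ℝ → ℝ := fun i x => max 0 (1 - |x - (i : ℝ) * h| / h)
    let fsup : ℝ := sSup ((fun x => |f x|) '' Set.Icc (0:ℝ) 1)
    let uj : ℝ := (∫ x in (0:ℝ)..((j : ℝ) * h), f x)
        + (∫ x in (0:ℝ)..h, f x * (Bi 1 x - φ 0 x))
        + ∫ x in ((j : ℝ) * h)..(((j : ℝ) + 1) * h), f x * (φ j x - Bi (j + 1) x)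
    |uj - ∫ x in (0:ℝ)..((j : ℝ) * h), f x| ≤ 2 * fsup * (1 - ε / h) * h ∧
      2 * fsup * (1 - ε / h) * h ≤ 2 * fsup * h := by
  intro h Bi φ fsup uj
  have hn2 : (2:ℝ) ≤ n := by exact_mod_cast hn
  have hn0 : (0:ℝ) < n := by linarith
  have hh : 0 < h := by positivity
  have hnh : (n:ℝ) * h = 1 := by
    show (n:ℝ) * (1/n) = 1; field_simp
  have hh1 : h ≤ 1 := by
    show (1:ℝ)/n ≤ 1
    rw [div_le_one hn0]; linarith
  -- sup bound
  have hbdd : BddAbove ((fun x => |f x|) '' Set.Icc (0:ℝ) 1) :=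
    (isCompact_Icc.image_of_continuousOn hf.abs).bddAbove
  have hfM : ∀ x ∈ Set.Icc (0:ℝ) 1, |f x| ≤ fsup := fun x hx =>
    le_csSup hbdd (Set.mem_image_of_mem _ hx)
  have hM0 : 0 ≤ fsup :=
    le_trans (abs_nonneg (f 0)) (hfM 0 ⟨le_refl 0, by norm_num⟩)
  -- indices
  have hjn : (j:ℝ) + 1 ≤ n := by
    have : j + 1 ≤ n := by omega
    exact_mod_cast this
  have hj0 : (0:ℝ) ≤ (j:ℝ) := Nat.cast_nonneg j
  have hxj0 : 0 ≤ (j:ℝ) * h := mul_nonneg hj0 hh.le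
  have hxj1 : ((j:ℝ) + 1) * h ≤ 1 := by
    calc ((j:ℝ) + 1) * h ≤ (n:ℝ) * h := by nlinarith
      _ = 1 := hnh
  -- continuity/bound restrictions
  have hBc2 : ContinuousOn B (Set.Icc 0 h) := hBc
  have hBnn2 : ∀ x ∈ Set.Icc (0:ℝ) h, 0 ≤ B x := hBnn
  have hsub1 : Set.Icc (0:ℝ) (0 + h) ⊆ Set.Icc 0 1 := by
    rw [zero_add]; exact Set.Icc_subset_Icc le_rfl hh1
  have hsub2 : Set.Icc ((j:ℝ)*h) ((j:ℝ)*h + h) ⊆ Set.Icc 0 1 := by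
    apply Set.Icc_subset_Icc hxj0
    calc (j:ℝ)*h + h = ((j:ℝ)+1)*h := by ring
      _ ≤ 1 := hxj1
  -- first error term
  have key1 : |∫ x in (0:ℝ)..(0 + h), f x * (B (x - 0) - (1 - (x - 0)/h))| ≤
      fsup * ((∫ t in (0:ℝ)..h, B t) + h/2) :=
    key_bound h fsup hh hM0 B hBc2 hBnn2 0 f (hf.mono hsub1)
      (fun x hx => hfM x (hsub1 hx))
  have hA : (∫ x in (0:ℝ)..h, f x * (Bi 1 x - φ 0 x)) =
      ∫ x in (0:ℝ)..(0 + h), f x * (B (x - 0) - (1 - (x - 0)/h)) := by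
    rw [zero_add]
    apply intervalIntegral.integral_congr
    intro x hx
    rw [Set.uIcc_of_le hh.le] at hx
    have hx1 := hx.1; have hx2 := hx.2
    have e1 : Bi 1 x = B (x - 0) := by
      simp only [Bi, Nat.cast_one]
      rw [if_pos]
      · norm_num
      · constructor <;> [norm_num; skip] <;> · norm_num; linarith
    have e2 : φ 0 x = 1 - (x - 0)/h := by
      simp only [φ, Nat.cast_zero, zero_mul, sub_zero]
      rw [abs_of_nonneg hx1, max_eq_right]
      have : x/h ≤ 1 := by rw [div_le_one hh]; exact hx2
      linarith
    show f x * (Bi 1 x - φ 0 x) = f x * (B (x - 0) - (1 - (x - 0)/h))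
    rw [e1, e2]
  -- second error term
  have key2 : |∫ x in ((j:ℝ)*h)..((j:ℝ)*h + h),
      f x * (B (x - (j:ℝ)*h) - (1 - (x - (j:ℝ)*h)/h))| ≤
      fsup * ((∫ t in (0:ℝ)..h, B t) + h/2) :=
    key_bound h fsup hh hM0 B hBc2 hBnn2 ((j:ℝ)*h) f (hf.mono hsub2)
      (fun x hx => hfM x (hsub2 hx))
  have hC : (∫ x in ((j:ℝ)*h)..(((j:ℝ)+1)*h), f x * (φ j x - Bi (j+1) x)) =
      - ∫ x in ((j:ℝ)*h)..((j:ℝ)*h + h),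
        f x * (B (x - (j:ℝ)*h) - (1 - (x - (j:ℝ)*h)/h)) := by
    rw [← intervalIntegral.integral_neg, show ((j:ℝ)+1)*h = (j:ℝ)*h + h by ring]
    apply intervalIntegral.integral_congr
    intro x hx
    rw [Set.uIcc_of_le (by linarith : (j:ℝ)*h ≤ (j:ℝ)*h + h)] at hx
    have hx1 := hx.1; have hx2 := hx.2
    have ecast : ((j+1 : ℕ) : ℝ) - 1 = (j:ℝ) := by push_cast; ring
    have e1 : Bi (j+1) x = B (x - (j:ℝ)*h) := by
      simp only [Bi, ecast]
      rw [if_pos]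
      · constructor
        · exact hx1
        · have : ((j+1 : ℕ) : ℝ) = (j:ℝ) + 1 := by push_cast; ring
          rw [this]; linarith
    have e2 : φ j x = 1 - (x - (j:ℝ)*h)/h := by
      simp only [φ]
      rw [abs_of_nonneg (by linarith : (0:ℝ) ≤ x - (j:ℝ)*h), max_eq_right]
      have : (x - (j:ℝ)*h)/h ≤ 1 := by rw [div_le_one hh]; linarith
      linarith
    show f x * (φ j x - Bi (j+1) x) = -(f x * (B (x - (j:ℝ)*h) - (1 - (x - (j:ℝ)*h)/h)))
    rw [e1, e2]; ring
  -- the integral of B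
  have hBavg' : ((1:ℝ)/h) * (∫ x in (0:ℝ)..h, B x) = 1/2 - ε/h := hBavg
  have hIB : (∫ t in (0:ℝ)..h, B t) = (1/2 - ε/h) * h := by
    have h0 : h ≠ 0 := hh.ne'
    have h2 : (2:ℝ) * h ≠ 0 := by positivity
    field_simp at hBavg'
    apply mul_right_cancel₀ h2
    have e : ε / h * h = ε := div_mul_cancel₀ ε h0
    linear_combination h * hBavg' + 2 * h * e
  have hεh' : ε / h * h = ε := div_mul_cancel₀ ε hh.ne'
  constructor
  · have egoal : uj - (∫ x in (0:ℝ)..((j:ℝ)*h), f x) =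
        (∫ x in (0:ℝ)..h, f x * (Bi 1 x - φ 0 x))
        + ∫ x in ((j:ℝ)*h)..(((j:ℝ)+1)*h), f x * (φ j x - Bi (j+1) x) := by
      simp only [uj]; ring
    rw [egoal, hA, hC]
    calc |(∫ x in (0:ℝ)..(0+h), f x * (B (x - 0) - (1 - (x - 0)/h))) +
          -∫ x in ((j:ℝ)*h)..((j:ℝ)*h + h),
            f x * (B (x - (j:ℝ)*h) - (1 - (x - (j:ℝ)*h)/h))|
        ≤ |∫ x in (0:ℝ)..(0+h), f x * (B (x - 0) - (1 - (x - 0)/h))| +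
          |∫ x in ((j:ℝ)*h)..((j:ℝ)*h + h),
            f x * (B (x - (j:ℝ)*h) - (1 - (x - (j:ℝ)*h)/h))| :=
          le_trans (abs_add_le _ _) (by rw [abs_neg])
      _ ≤ fsup * ((∫ t in (0:ℝ)..h, B t) + h/2) +
          fsup * ((∫ t in (0:ℝ)..h, B t) + h/2) := add_le_add key1 key2
      _ = 2 * fsup * (1 - ε/h) * h := by rw [hIB]; ring
  · nlinarith [mul_nonneg hM0 hε.le, hεh']
end

section
/- Let ε > 0 and let f : [0,1] → ℝ be continuous. Define u(x) := ∫_0^1 G(x,s)·f(s) ds, where G is the Green's function of the convection-diffusion operator. Then u(0) = u(1) = 0, u is twice differentiable on (0,1), and −ε·u''(x) + u'(x) = f(x) for every x ∈ (0,1). -/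
open MeasureTheory intervalIntegral

namespace Stmt11Aux

noncomputable def A (ε x : ℝ) : ℝ := (Real.exp (1/ε) - Real.exp (x/ε)) / (Real.exp (1/ε) - 1)
noncomputable def B (ε s : ℝ) : ℝ := 1 - Real.exp (-s/ε)
noncomputable def C (ε x : ℝ) : ℝ := (Real.exp (x/ε) - 1) / (Real.exp (1/ε) - 1)
noncomputable def D (ε s : ℝ) : ℝ := Real.exp ((1-s)/ε) - 1
noncomputable def A' (ε x : ℝ) : ℝ := -(Real.exp (x/ε) / ε) / (Real.exp (1/ε) - 1)
noncomputable def C' (ε x : ℝ) : ℝ := (Real.exp (x/ε) / ε) / (Real.exp (1/ε) - 1)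

lemma hden {ε : ℝ} (hε : 0 < ε) : Real.exp (1/ε) - 1 ≠ 0 := by
  have : (1:ℝ) < Real.exp (1/ε) := by
    rw [← Real.exp_zero]; exact Real.exp_lt_exp.mpr (by positivity)
  linarith

lemma e1 (ε x : ℝ) : Real.exp (1/ε) = Real.exp (x/ε) * Real.exp ((1-x)/ε) := by
  rw [← Real.exp_add, ← add_div]; norm_num

lemma e2 (ε x : ℝ) : Real.exp (x/ε) * Real.exp (-x/ε) = 1 := by
  rw [← Real.exp_add, ← Real.exp_zero]; congr 1; ring

lemma hABCD {ε : ℝ} (hε : 0 < ε) (x : ℝ) : A ε x * B ε x = C ε x * D ε x := by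
  have h1 := e1 ε x
  have h2 := e2 ε x
  have key : (Real.exp (1/ε) - Real.exp (x/ε)) * (1 - Real.exp (-x/ε)) =
      (Real.exp (x/ε) - 1) * (Real.exp ((1-x)/ε) - 1) := by
    linear_combination (1 - Real.exp (-x/ε)) * h1 + (1 - Real.exp ((1-x)/ε)) * h2
  unfold A B C D
  rw [div_mul_eq_mul_div, div_mul_eq_mul_div, key]

lemma hasDerivAt_exp_div {ε : ℝ} (x : ℝ) :
    HasDerivAt (fun y => Real.exp (y/ε)) (Real.exp (x/ε) / ε) x := by
  have h := (Real.hasDerivAt_exp (x/ε)).comp x ((hasDerivAt_id x).div_const ε)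
  rw [show Real.exp (x/ε) / ε = Real.exp (x/ε) * (1/ε) by ring]
  exact h

lemma hasDerivAt_A {ε : ℝ} (x : ℝ) : HasDerivAt (A ε) (A' ε x) x := by
  unfold A A'
  have h := ((hasDerivAt_const x (Real.exp (1/ε))).sub (hasDerivAt_exp_div (ε := ε) x)).div_const
    (Real.exp (1/ε) - 1)
  simpa [neg_div] using h

lemma hasDerivAt_C {ε : ℝ} (x : ℝ) : HasDerivAt (C ε) (C' ε x) x := by
  unfold C C'
  have h := ((hasDerivAt_exp_div (ε := ε) x).sub (hasDerivAt_const x 1)).div_const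
    (Real.exp (1/ε) - 1)
  simpa using h

lemma hasDerivAt_A' {ε : ℝ} (x : ℝ) : HasDerivAt (A' ε) (A' ε x / ε) x := by
  unfold A'
  have h := (((hasDerivAt_exp_div (ε := ε) x).div_const ε).neg).div_const (Real.exp (1/ε) - 1)
  exact h.congr_deriv (by ring)

lemma hasDerivAt_C' {ε : ℝ} (x : ℝ) : HasDerivAt (C' ε) (C' ε x / ε) x := by
  unfold C'
  have h := ((hasDerivAt_exp_div (ε := ε) x).div_const ε).div_const (Real.exp (1/ε) - 1)
  exact h.congr_deriv (by ring)

end Stmt11Aux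

open Stmt11Aux in
/-- The function `u(x) = ∫_0^1 G(x,s)f(s) ds`, with `G` the Green's function
of `−εu'' + u'` on `(0,1)` with homogeneous Dirichlet conditions, satisfies
`u(0) = u(1) = 0`, is twice differentiable on `(0,1)`, and `−εu'' + u' = f` there. -/
theorem stmt_11 (ε : ℝ) (hε : 0 < ε) (f : ℝ → ℝ) (hf : ContinuousOn f (Set.Icc 0 1)) :
    let G : ℝ → ℝ → ℝ := fun x s =>
      if s < x then
        (Real.exp (1 / ε) - Real.exp (x / ε)) * (1 - Real.exp (-s / ε)) /
          (Real.exp (1 / ε) - 1)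
      else (Real.exp (x / ε) - 1) * (Real.exp ((1 - s) / ε) - 1) / (Real.exp (1 / ε) - 1)
    let u : ℝ → ℝ := fun x => ∫ s in (0:ℝ)..1, G x s * f s
    u 0 = 0 ∧ u 1 = 0 ∧
      (∀ x ∈ Set.Ioo (0:ℝ) 1, DifferentiableAt ℝ u x) ∧
      (∀ x ∈ Set.Ioo (0:ℝ) 1, DifferentiableAt ℝ (deriv u) x) ∧
      (∀ x ∈ Set.Ioo (0:ℝ) 1, -ε * deriv (deriv u) x + deriv u x = f x) := by
  intro G u
  have hε' : ε ≠ 0 := ne_of_gt hε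
  have hd := hden hε
  -- continuity of pieces
  have hBc : Continuous (fun s : ℝ => B ε s) := by
    unfold B; continuity
  have hDc : Continuous (fun s : ℝ => D ε s) := by
    unfold D; continuity
  have hBf : ContinuousOn (fun s => B ε s * f s) (Set.Icc 0 1) := hBc.continuousOn.mul hf
  have hDf : ContinuousOn (fun s => D ε s * f s) (Set.Icc 0 1) := hDc.continuousOn.mul hf
  -- interval integrability on subintervals of [0,1]
  have hsub : ∀ a b : ℝ, a ∈ Set.Icc (0:ℝ) 1 → b ∈ Set.Icc (0:ℝ) 1 →
      Set.uIcc a b ⊆ Set.Icc 0 1 := fun a b ha hb => Set.uIcc_subset_Icc ha hb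
  have hintB : ∀ a b : ℝ, a ∈ Set.Icc (0:ℝ) 1 → b ∈ Set.Icc (0:ℝ) 1 →
      IntervalIntegrable (fun s => B ε s * f s) volume a b := fun a b ha hb =>
    (hBf.mono (hsub a b ha hb)).intervalIntegrable
  have hintD : ∀ a b : ℝ, a ∈ Set.Icc (0:ℝ) 1 → b ∈ Set.Icc (0:ℝ) 1 →
      IntervalIntegrable (fun s => D ε s * f s) volume a b := fun a b ha hb =>
    (hDf.mono (hsub a b ha hb)).intervalIntegrable
  set F : ℝ → ℝ := fun x => ∫ s in (0:ℝ)..x, B ε s * f s with hFdef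
  set H : ℝ → ℝ := fun x => (∫ s in (0:ℝ)..1, D ε s * f s) - ∫ s in (0:ℝ)..x, D ε s * f s
    with hHdef
  set w : ℝ → ℝ := fun x => A' ε x * F x + C' ε x * H x with hwdef
  set z : ℝ → ℝ := fun x => (A' ε x / ε * F x + A' ε x * (B ε x * f x)) +
      (C' ε x / ε * H x + C' ε x * (-(D ε x * f x))) with hzdef
  -- derivatives of F and H on (0,1)
  have hfc : ∀ x ∈ Set.Ioo (0:ℝ) 1, ContinuousAt f x := fun x hx =>
    hf.continuousAt (Icc_mem_nhds hx.1 hx.2)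
  have hBfIoo : ContinuousOn (fun s => B ε s * f s) (Set.Ioo 0 1) :=
    hBf.mono Set.Ioo_subset_Icc_self
  have hDfIoo : ContinuousOn (fun s => D ε s * f s) (Set.Ioo 0 1) :=
    hDf.mono Set.Ioo_subset_Icc_self
  have hF : ∀ x ∈ Set.Ioo (0:ℝ) 1, HasDerivAt F (B ε x * f x) x := by
    intro x hx
    exact intervalIntegral.integral_hasDerivAt_right
      (hintB 0 x (by norm_num) (Set.mem_Icc.2 ⟨hx.1.le, hx.2.le⟩))
      (hBfIoo.stronglyMeasurableAtFilter isOpen_Ioo x hx)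
      ((hBc.continuousAt).mul (hfc x hx))
  have hH : ∀ x ∈ Set.Ioo (0:ℝ) 1, HasDerivAt H (-(D ε x * f x)) x := by
    intro x hx
    exact HasDerivAt.const_sub _ <| intervalIntegral.integral_hasDerivAt_right
      (hintD 0 x (by norm_num) (Set.mem_Icc.2 ⟨hx.1.le, hx.2.le⟩))
      (hDfIoo.stronglyMeasurableAtFilter isOpen_Ioo x hx)
      ((hDc.continuousAt).mul (hfc x hx))
  -- unfolding of G
  have hG : ∀ x s : ℝ, G x s = if s < x then A ε x * B ε s else C ε x * D ε s := by
    intro x s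
    show (if s < x then _ else _) = _
    unfold A B C D
    split <;> ring
  -- u equals A*F + C*H on [0,1]
  have huv : ∀ x ∈ Set.Icc (0:ℝ) 1, u x = A ε x * F x + C ε x * H x := by
    intro x hx
    have hx0 : (0:ℝ) ≤ x := hx.1
    have hx1 : x ≤ 1 := hx.2
    have hg1 : Set.EqOn (fun s => G x s * f s) (fun s => A ε x * (B ε s * f s))
        (Set.Icc 0 x) := by
      intro s hs
      by_cases hsx : s < x
      · simp only [hG, if_pos hsx]; ring
      · have hsx' : s = x := le_antisymm hs.2 (not_lt.1 hsx)
        simp only [hG, if_neg hsx, hsx', if_neg (lt_irrefl x)]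
        have := hABCD hε x
        linear_combination (f x) * this.symm
    have hg2 : Set.EqOn (fun s => G x s * f s) (fun s => C ε x * (D ε s * f s))
        (Set.Icc x 1) := by
      intro s hs
      simp only [hG, if_neg (not_lt.2 hs.1)]; ring
    have hc1 : ContinuousOn (fun s => G x s * f s) (Set.Icc 0 x) :=
      (continuousOn_const.mul (hBf.mono (Set.Icc_subset_Icc le_rfl hx1))).congr hg1
    have hc2 : ContinuousOn (fun s => G x s * f s) (Set.Icc x 1) :=
      (continuousOn_const.mul (hDf.mono (Set.Icc_subset_Icc hx0 le_rfl))).congr hg2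
    have hint1 : IntervalIntegrable (fun s => G x s * f s) volume 0 x := by
      rw [intervalIntegrable_iff_integrableOn_Icc_of_le hx0]
      exact hc1.integrableOn_Icc
    have hint2 : IntervalIntegrable (fun s => G x s * f s) volume x 1 := by
      rw [intervalIntegrable_iff_integrableOn_Icc_of_le hx1]
      exact hc2.integrableOn_Icc
    have hsplitG := intervalIntegral.integral_add_adjacent_intervals hint1 hint2
    have hsplitD := intervalIntegral.integral_add_adjacent_intervals
      (hintD 0 x (by norm_num) hx) (hintD x 1 hx (by norm_num))
    have e1' : (∫ s in (0:ℝ)..x, G x s * f s) = A ε x * F x := by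
      rw [hFdef, ← intervalIntegral.integral_const_mul]
      apply intervalIntegral.integral_congr
      rwa [Set.uIcc_of_le hx0]
    have e2' : (∫ s in x..(1:ℝ), G x s * f s) = C ε x * (∫ s in x..(1:ℝ), D ε s * f s) := by
      rw [← intervalIntegral.integral_const_mul]
      apply intervalIntegral.integral_congr
      rwa [Set.uIcc_of_le hx1]
    have hHx : (∫ s in x..(1:ℝ), D ε s * f s) = H x := by
      rw [hHdef]; dsimp only; linarith [hsplitD]
    show (∫ s in (0:ℝ)..1, G x s * f s) = A ε x * F x + C ε x * H x
    rw [← hsplitG, e1', e2', hHx]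
  -- derivative of v := A*F + C*H
  have hveq : ∀ x ∈ Set.Ioo (0:ℝ) 1,
      HasDerivAt (fun y => A ε y * F y + C ε y * H y) (w x) x := by
    intro x hx
    have h := ((hasDerivAt_A (ε := ε) x).mul (hF x hx)).add
      ((hasDerivAt_C (ε := ε) x).mul (hH x hx))
    refine h.congr_deriv ?_
    have hab := hABCD hε x
    rw [hwdef]
    dsimp only
    linear_combination (f x) * hab
  have huw : ∀ x ∈ Set.Ioo (0:ℝ) 1, HasDerivAt u (w x) x := by
    intro x hx
    refine (hveq x hx).congr_of_eventuallyEq ?_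
    filter_upwards [isOpen_Ioo.mem_nhds hx] with y hy
    exact huv y (Set.Ioo_subset_Icc_self hy)
  have hderiv_u : Set.EqOn (deriv u) w (Set.Ioo 0 1) := fun x hx => (huw x hx).deriv
  have hw' : ∀ x ∈ Set.Ioo (0:ℝ) 1, HasDerivAt w (z x) x := by
    intro x hx
    have h := ((hasDerivAt_A' (ε := ε) x).mul (hF x hx)).add
      ((hasDerivAt_C' (ε := ε) x).mul (hH x hx))
    rw [hwdef, hzdef]
    exact h
  have hw2 : ∀ x ∈ Set.Ioo (0:ℝ) 1, HasDerivAt (deriv u) (z x) x := by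
    intro x hx
    refine (hw' x hx).congr_of_eventuallyEq ?_
    filter_upwards [isOpen_Ioo.mem_nhds hx] with y hy
    exact (hderiv_u hy).symm ▸ rfl
  refine ⟨?_, ?_, fun x hx => (huw x hx).differentiableAt,
    fun x hx => (hw2 x hx).differentiableAt, ?_⟩
  · show (∫ s in (0:ℝ)..1, G 0 s * f s) = 0
    have : Set.EqOn (fun s => G 0 s * f s) (fun _ => (0:ℝ)) (Set.uIcc 0 1) := by
      intro s hs
      rw [Set.uIcc_of_le zero_le_one] at hs
      simp only [hG, if_neg (not_lt.2 hs.1)]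
      unfold C
      simp [zero_div]
    rw [intervalIntegral.integral_congr this]
    simp
  · show (∫ s in (0:ℝ)..1, G 1 s * f s) = 0
    have : Set.EqOn (fun s => G 1 s * f s) (fun _ => (0:ℝ)) (Set.uIcc 0 1) := by
      intro s hs
      rw [Set.uIcc_of_le zero_le_one] at hs
      by_cases hs1 : s < 1
      · simp only [hG, if_pos hs1]
        unfold A
        simp
      · have : s = 1 := le_antisymm hs.2 (not_lt.1 hs1)
        simp only [hG, if_neg hs1, this]
        unfold D
        simp
    rw [intervalIntegral.integral_congr this]
    simp
  · intro x hx
    rw [(hw2 x hx).deriv, hderiv_u hx, hzdef, hwdef]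
    dsimp only
    have h1 := e1 ε x
    have h2 := e2 ε x
    unfold A' C' B D
    field_simp
    linear_combination (-(f x) * ε) * (h1) +
      (-(f x) * ε) * (by simpa only [neg_div] using h2 : Real.exp (x/ε) * Real.exp (-(x/ε)) = 1)
end

section
/- Fix ε > 0 and an integer n ≥ 2, let h = 1/n, x_j = j·h, and t₀ := tanh(h/(2ε)). Let M be the (n−1)×(n−1) real matrix with entries M(j,j) = 1/t₀, M(j,j−1) = −(1+t₀)/(2t₀), M(j,j+1) = −(1−t₀)/(2t₀), and M(j,i) = 0 for |i−j| ≥ 2, and let N be the (n−1)×(n−1) matrix with entries N(j,i) = G(x_j, x_i), where G is the Green's function of the convection-diffusion operator. Then M·N = N·M = I; that is, M is invertible and M⁻¹ = [G(x_j,x_i)]_{j,i=1,…,n−1}. -/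
open Real
noncomputable def Pg (q : ℝ) (n J I : ℕ) : ℝ :=
  if I < J then (q ^ n - q ^ J) * (1 - (q ^ I)⁻¹) / (q ^ n - 1)
  else (q ^ J - 1) * (q ^ n * (q ^ I)⁻¹ - 1) / (q ^ n - 1)

lemma Pg_zero (q : ℝ) (n I : ℕ) : Pg q n 0 I = 0 := by
  simp [Pg]

lemma Pg_top (q : ℝ) (n I : ℕ) (hI : I < n) : Pg q n n I = 0 := by
  simp [Pg, hI]

lemma aux_sum {m : ℕ} (t : ℕ) (w : ℕ → ℝ) :
    ∑ k : Fin m, (if (k : ℕ) = t then w (k : ℕ) else 0) = if t < m then w t else 0 := by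
  split_ifs with hlt
  · rw [Finset.sum_eq_single (⟨t, hlt⟩ : Fin m)]
    · simp
    · intro b _ hb
      exact if_neg (fun hc => hb (Fin.ext hc))
    · intro hmem; exact absurd (Finset.mem_univ _) hmem
  · exact Finset.sum_eq_zero fun k _ => if_neg (by have := k.isLt; omega)

lemma key (q : ℝ) (hq : 1 < q) (n J I : ℕ) (hn : 1 ≤ n) (hJ1 : 1 ≤ J) :
    (q+1)/(q-1) * Pg q n J I + (-(q/(q-1))) * Pg q n (J-1) I + (-(1/(q-1))) * Pg q n (J+1) I
      = if J = I then 1 else 0 := by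
  have hq0 : q ≠ 0 := by positivity
  have h1 : q - 1 ≠ 0 := sub_ne_zero.mpr hq.ne'
  have hEn : q ^ n - 1 ≠ 0 := sub_ne_zero.mpr (one_lt_pow₀ hq (by omega)).ne'
  have hqI : q ^ I ≠ 0 := pow_ne_zero _ hq0
  obtain ⟨j, rfl⟩ : ∃ j, J = j + 1 := ⟨J - 1, by omega⟩
  simp only [Nat.add_sub_cancel]
  by_cases hc1 : j + 1 < I
  · rw [if_neg (by omega)]
    simp only [Pg]
    rw [if_neg (show ¬ I < j + 1 by omega), if_neg (show ¬ I < j by omega),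
      if_neg (show ¬ I < j + 1 + 1 by omega)]
    field_simp
    ring
  · by_cases hc2 : j + 1 = I
    · subst hc2
      rw [if_pos rfl]
      simp only [Pg]
      rw [if_neg (show ¬ j + 1 < j + 1 by omega), if_neg (show ¬ j + 1 < j by omega),
        if_pos (show j + 1 < j + 1 + 1 by omega)]
      field_simp
      ring
    · by_cases hc3 : j = I
      · subst hc3
        rw [if_neg (by omega)]
        simp only [Pg]
        rw [if_pos (show j < j + 1 by omega), if_neg (show ¬ j < j by omega),
          if_pos (show j < j + 1 + 1 by omega)]
        field_simp
        ring
      · rw [if_neg (by omega)]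
        simp only [Pg]
        rw [if_pos (show I < j + 1 by omega), if_pos (show I < j by omega),
          if_pos (show I < j + 1 + 1 by omega)]
        field_simp
        ring

/-- The exponential-bubble UPG stiffness matrix
`M = (1/t₀)·tridiag(−(1+t₀)/2, 1, −(1−t₀)/2)`, `t₀ = tanh(h/(2ε))`, is invertible with
inverse `[G(x_j, x_i)]`, `G` being the Green's function of `−εu'' + u'`. -/
theorem stmt_13 (ε : ℝ) (hε : 0 < ε) (n : ℕ) (hn : 2 ≤ n) :
    let h : ℝ := 1 / n
    let t₀ : ℝ := Real.tanh (h / (2 * ε))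
    let G : ℝ → ℝ → ℝ := fun x s =>
      if s < x then
        (Real.exp (1 / ε) - Real.exp (x / ε)) * (1 - Real.exp (-s / ε)) /
          (Real.exp (1 / ε) - 1)
      else (Real.exp (x / ε) - 1) * (Real.exp ((1 - s) / ε) - 1) / (Real.exp (1 / ε) - 1)
    let M : Matrix (Fin (n - 1)) (Fin (n - 1)) ℝ := Matrix.of fun j i =>
      if (j : ℕ) = (i : ℕ) then 1 / t₀
      else if (i : ℕ) + 1 = (j : ℕ) then -(1 + t₀) / (2 * t₀)
      else if (j : ℕ) + 1 = (i : ℕ) then -(1 - t₀) / (2 * t₀)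
      else 0
    let N : Matrix (Fin (n - 1)) (Fin (n - 1)) ℝ := Matrix.of fun j i =>
      G (((j : ℕ) + 1 : ℝ) * h) (((i : ℕ) + 1 : ℝ) * h)
    M * N = 1 ∧ N * M = 1 := by
  intro h t₀ G M N
  have hhdef : h = 1 / (n:ℝ) := rfl
  have ht₀def : t₀ = Real.tanh (h / (2 * ε)) := rfl
  have hn0 : (0:ℝ) < n := by exact_mod_cast (by omega : 0 < n)
  have hh0 : (0:ℝ) < h := by rw [hhdef]; positivity
  have hnh : (n:ℝ) * h = 1 := by rw [hhdef]; field_simp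
  set q : ℝ := Real.exp (h / ε) with hqdef
  have hq : 1 < q := by
    rw [hqdef]; exact Real.one_lt_exp_iff.mpr (by positivity)
  have hE : Real.exp (1 / ε) = q ^ n := by
    rw [hqdef, ← Real.exp_nat_mul]
    congr 1
    rw [← mul_div_assoc, hnh]
  have hxp : ∀ k : ℕ, Real.exp (((k:ℝ) + 1) * h / ε) = q ^ (k + 1) := by
    intro k
    rw [hqdef, ← Real.exp_nat_mul, mul_div_assoc]
    congr 1
    push_cast
    ring
  have hq0 : q ≠ 0 := by positivity
  have hqm1 : q - 1 ≠ 0 := sub_ne_zero.mpr hq.ne'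
  have hqp1 : q + 1 ≠ 0 := by positivity
  have ht0 : t₀ = (q - 1) / (q + 1) := by
    rw [ht₀def, Real.tanh_eq_sinh_div_cosh, Real.sinh_eq, Real.cosh_eq, Real.exp_neg]
    have hu2 : Real.exp (h / (2 * ε)) ^ 2 = q := by
      rw [hqdef, sq, ← Real.exp_add]
      congr 1
      field_simp
      ring
    set u : ℝ := Real.exp (h / (2 * ε)) with hu
    have hu0 : (0:ℝ) < u := Real.exp_pos _
    rw [← hu2]
    field_simp
  have ht0ne : t₀ ≠ 0 := by
    rw [ht0]
    exact div_ne_zero hqm1 hqp1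
  have hA : 1 / t₀ = (q + 1) / (q - 1) := by rw [ht0]; field_simp
  have hB : -(1 + t₀) / (2 * t₀) = -(q / (q - 1)) := by
    rw [ht0]; field_simp; ring
  have hC : -(1 - t₀) / (2 * t₀) = -(1 / (q - 1)) := by
    rw [ht0]; field_simp; ring
  have hNent : ∀ j i : Fin (n-1), N j i = Pg q n ((j:ℕ)+1) ((i:ℕ)+1) := by
    intro j i
    show G ((((j:ℕ):ℝ)+1)*h) ((((i:ℕ):ℝ)+1)*h) = _
    show (if (((i:ℕ):ℝ)+1)*h < (((j:ℕ):ℝ)+1)*h then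
        (Real.exp (1 / ε) - Real.exp ((((j:ℕ):ℝ)+1)*h / ε)) * (1 - Real.exp (-((((i:ℕ):ℝ)+1)*h) / ε)) /
          (Real.exp (1 / ε) - 1)
      else (Real.exp ((((j:ℕ):ℝ)+1)*h / ε) - 1) * (Real.exp ((1 - (((i:ℕ):ℝ)+1)*h) / ε) - 1) /
        (Real.exp (1 / ε) - 1)) = _
    by_cases hc : (i:ℕ) + 1 < (j:ℕ) + 1
    · have hr : (((i:ℕ):ℝ)+1)*h < (((j:ℕ):ℝ)+1)*h := by
        apply mul_lt_mul_of_pos_right _ hh0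
        exact_mod_cast hc
      rw [if_pos hr, Pg, if_pos hc, neg_div, Real.exp_neg, hxp, hxp, hE]
    · have hr : ¬ ((((i:ℕ):ℝ)+1)*h < (((j:ℕ):ℝ)+1)*h) := by
        intro hlt
        have h2 := lt_of_mul_lt_mul_right hlt hh0.le
        have : (i:ℕ) + 1 < (j:ℕ) + 1 := by exact_mod_cast h2
        exact hc this
      rw [if_neg hr, Pg, if_neg hc, sub_div, Real.exp_sub, hxp, hxp, hE]
      rw [div_eq_mul_inv, div_eq_mul_inv, div_eq_mul_inv]
  have hMN : M * N = 1 := by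
    ext j i
    rw [Matrix.mul_apply, Matrix.one_apply]
    have hsummand : ∀ k : Fin (n-1), M j k * N k i =
        (if (k:ℕ) = (j:ℕ) then (q+1)/(q-1) * Pg q n ((k:ℕ)+1) ((i:ℕ)+1) else 0)
        + (if (k:ℕ) = (j:ℕ) - 1 ∧ 1 ≤ (j:ℕ) then (-(q/(q-1))) * Pg q n ((k:ℕ)+1) ((i:ℕ)+1) else 0)
        + (if (k:ℕ) = (j:ℕ) + 1 then (-(1/(q-1))) * Pg q n ((k:ℕ)+1) ((i:ℕ)+1) else 0) := by
      intro k
      rw [hNent k i]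
      show (if (j:ℕ) = (k:ℕ) then 1 / t₀
        else if (k:ℕ) + 1 = (j:ℕ) then -(1 + t₀) / (2 * t₀)
        else if (j:ℕ) + 1 = (k:ℕ) then -(1 - t₀) / (2 * t₀)
        else 0) * Pg q n ((k:ℕ)+1) ((i:ℕ)+1) = _
      rw [hA, hB, hC]
      split_ifs <;> first | (exfalso; omega) | ring1
    rw [Finset.sum_congr rfl (fun k _ => hsummand k), Finset.sum_add_distrib,
      Finset.sum_add_distrib]
    have S1 : ∑ k : Fin (n-1), (if (k:ℕ) = (j:ℕ) then (q+1)/(q-1) * Pg q n ((k:ℕ)+1) ((i:ℕ)+1) else 0)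
        = (q+1)/(q-1) * Pg q n ((j:ℕ)+1) ((i:ℕ)+1) :=
      (aux_sum (j:ℕ) (fun t => (q+1)/(q-1) * Pg q n (t+1) ((i:ℕ)+1))).trans (if_pos j.isLt)
    have S2 : ∑ k : Fin (n-1), (if (k:ℕ) = (j:ℕ) - 1 ∧ 1 ≤ (j:ℕ) then (-(q/(q-1))) * Pg q n ((k:ℕ)+1) ((i:ℕ)+1) else 0)
        = (-(q/(q-1))) * Pg q n (j:ℕ) ((i:ℕ)+1) := by
      by_cases hj : 1 ≤ (j:ℕ)
      · have e : ∀ k : Fin (n-1), (if (k:ℕ) = (j:ℕ) - 1 ∧ 1 ≤ (j:ℕ) then (-(q/(q-1))) * Pg q n ((k:ℕ)+1) ((i:ℕ)+1) else 0)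
            = (if (k:ℕ) = (j:ℕ) - 1 then (-(q/(q-1))) * Pg q n ((k:ℕ)+1) ((i:ℕ)+1) else 0) := by
          intro k; simp [hj]
        rw [Finset.sum_congr rfl (fun k _ => e k)]
        refine (aux_sum ((j:ℕ)-1) (fun t => (-(q/(q-1))) * Pg q n (t+1) ((i:ℕ)+1))).trans ?_
        rw [if_pos (by have := j.isLt; omega), Nat.sub_add_cancel hj]
      · rw [Finset.sum_eq_zero (fun k _ => if_neg (by omega))]
        have hj0 : (j:ℕ) = 0 := by omega
        rw [hj0, Pg_zero]; ring
    have S3 : ∑ k : Fin (n-1), (if (k:ℕ) = (j:ℕ) + 1 then (-(1/(q-1))) * Pg q n ((k:ℕ)+1) ((i:ℕ)+1) else 0)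
        = (-(1/(q-1))) * Pg q n ((j:ℕ)+1+1) ((i:ℕ)+1) := by
      refine (aux_sum ((j:ℕ)+1) (fun t => (-(1/(q-1))) * Pg q n (t+1) ((i:ℕ)+1))).trans ?_
      by_cases hj : (j:ℕ) + 1 < n - 1
      · rw [if_pos hj]
      · rw [if_neg hj, show (j:ℕ)+1+1 = n from (by have := j.isLt; omega),
          Pg_top q n _ (by have := i.isLt; omega)]
        ring
    rw [S1, S2, S3]
    have hk := key q hq n ((j:ℕ)+1) ((i:ℕ)+1) (by omega) (by omega)
    simp only [Nat.add_sub_cancel] at hk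
    rw [hk]
    by_cases hji : j = i
    · rw [if_pos (by rw [hji]), if_pos hji]
    · rw [if_neg (fun hc => hji (Fin.ext (by omega))), if_neg hji]
  exact ⟨hMN, mul_eq_one_comm.mp hMN⟩
end

section
/- Fix ε > 0 and an integer n ≥ 2, let h = 1/n and x_j = j·h. Let B^e : [0,h] → ℝ be the exponential bubble B^e(x) = (1 − e^{−x/ε})/(1 − e^{−h/ε}) − x/h; for i = 1, …, n define B^e_i : [0,1] → ℝ by B^e_i(x) = B^e(x − x_{i−1}) for x ∈ [x_{i−1}, x_i] and B^e_i(x) = 0 otherwise, and set g_i := φ_i + B^e_i − B^e_{i+1}. Then for every continuous f : [0,1] → ℝ and every j with 1 ≤ j ≤ n−1: Σ_{i=1}^{n−1} G(x_j, x_i)·∫_0^1 f(s)·g_i(s) ds = ∫_0^1 G(x_j, s)·f(s) ds; that is, the exponential bubble upwinding Petrov–Galerkin solution coincides with the exact solution of −εu'' + u' = f, u(0) = u(1) = 0, at every interior mesh node. -/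
open MeasureTheory intervalIntegral

private lemma exp_interp (ε h a b xk s : ℝ) (hden : 1 - Real.exp (-h / ε) ≠ 0) :
    (a + b * Real.exp (-(xk + h) / ε)) *
        ((1 - Real.exp (-(s - xk) / ε)) / (1 - Real.exp (-h / ε))) +
      (a + b * Real.exp (-xk / ε)) *
        (1 - (1 - Real.exp (-(s - xk) / ε)) / (1 - Real.exp (-h / ε))) =
    a + b * Real.exp (-s / ε) := by
  have e1 : Real.exp (-(xk + h) / ε) = Real.exp (-xk / ε) * Real.exp (-h / ε) := by
    rw [← Real.exp_add]; congr 1; ring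
  have e2 : Real.exp (-s / ε) = Real.exp (-xk / ε) * Real.exp (-(s - xk) / ε) := by
    rw [← Real.exp_add]; congr 1; ring
  rw [e1, e2]
  generalize Real.exp (-xk / ε) = A
  generalize Real.exp (-h / ε) = q at hden ⊢
  generalize Real.exp (-(s - xk) / ε) = r
  field_simp
  ring

/-- The exponential bubble UPG solution recovers the exact solution
`u(x) = ∫_0^1 G(x,s)f(s) ds` at every interior mesh node:
`Σ_{i=1}^{n−1} G(x_j,x_i)·∫_0^1 f·g_i = ∫_0^1 G(x_j,s)f(s) ds`. -/
theorem stmt_14 (ε : ℝ) (hε : 0 < ε) (n : ℕ) (hn : 2 ≤ n)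
    (f : ℝ → ℝ) (hf : ContinuousOn f (Set.Icc 0 1))
    (j : ℕ) (hj1 : 1 ≤ j) (hj2 : j ≤ n - 1) :
    let h : ℝ := 1 / n
    let Be : ℝ → ℝ := fun x => (1 - Real.exp (-x / ε)) / (1 - Real.exp (-h / ε)) - x / h
    let Bi : ℕ → ℝ → ℝ := fun i x =>
      if x ∈ Set.Icc (((i : ℝ) - 1) * h) ((i : ℝ) * h) then Be (x - ((i : ℝ) - 1) * h) else 0
    let φ : ℕ → ℝ → ℝ := fun i x => max 0 (1 - |x - (i : ℝ) * h| / h)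
    let g : ℕ → ℝ → ℝ := fun i x => φ i x + Bi i x - Bi (i + 1) x
    let G : ℝ → ℝ → ℝ := fun x s =>
      if s < x then
        (Real.exp (1 / ε) - Real.exp (x / ε)) * (1 - Real.exp (-s / ε)) /
          (Real.exp (1 / ε) - 1)
      else (Real.exp (x / ε) - 1) * (Real.exp ((1 - s) / ε) - 1) / (Real.exp (1 / ε) - 1)
    ∑ i ∈ Finset.Icc 1 (n - 1),
        G ((j : ℝ) * h) ((i : ℝ) * h) * ∫ s in (0:ℝ)..1, f s * g i s
      = ∫ s in (0:ℝ)..1, G ((j : ℝ) * h) s * f s := by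
  intro h Be Bi φ g G
  have hBedef : ∀ x, Be x = (1 - Real.exp (-x / ε)) / (1 - Real.exp (-h / ε)) - x / h :=
    fun _ => rfl
  have hBidef : ∀ (i : ℕ) (x : ℝ), Bi i x =
      if x ∈ Set.Icc (((i : ℝ) - 1) * h) ((i : ℝ) * h) then Be (x - ((i : ℝ) - 1) * h) else 0 :=
    fun _ _ => rfl
  have hφdef : ∀ (i : ℕ) (x : ℝ), φ i x = max 0 (1 - |x - (i : ℝ) * h| / h) := fun _ _ => rfl
  have hgdef : ∀ (i : ℕ) (x : ℝ), g i x = φ i x + Bi i x - Bi (i + 1) x := fun _ _ => rfl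
  have hGdef : ∀ x s, G x s =
      if s < x then
        (Real.exp (1 / ε) - Real.exp (x / ε)) * (1 - Real.exp (-s / ε)) /
          (Real.exp (1 / ε) - 1)
      else (Real.exp (x / ε) - 1) * (Real.exp ((1 - s) / ε) - 1) / (Real.exp (1 / ε) - 1) :=
    fun _ _ => rfl
  have hn0 : (0:ℝ) < n := by
    have : (0:ℕ) < n := by omega
    exact_mod_cast this
  have hh : 0 < h := by
    show (0:ℝ) < 1 / n
    positivity
  have hn1 : (n:ℝ) * h = 1 := by
    show (n:ℝ) * (1 / n) = 1
    field_simp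
  clear_value G g φ Bi Be h
  have hq : Real.exp (-h / ε) < 1 := by
    rw [← Real.exp_zero]
    apply Real.exp_lt_exp.2
    have h1 : (0:ℝ) < h / ε := div_pos hh hε
    have h2 : -h / ε = -(h / ε) := by ring
    rw [h2]
    linarith
  have hden : 1 - Real.exp (-h / ε) ≠ 0 := by
    have : 0 < 1 - Real.exp (-h / ε) := by linarith
    exact ne_of_gt this
  have hE1 : 1 < Real.exp (1 / ε) := by
    rw [← Real.exp_zero]
    apply Real.exp_lt_exp.2
    positivity
  have hjn : j < n := by omega
  have hj1' : (1:ℝ) ≤ (j:ℝ) := by exact_mod_cast hj1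
  have hjn' : (j:ℝ) + 1 ≤ (n:ℝ) := by
    have : j + 1 ≤ n := by omega
    exact_mod_cast this
  have hle_cell : ∀ m : ℕ, (m:ℝ) * h ≤ ((m:ℝ) + 1) * h := by
    intro m; linarith [hh.le]
  -- Green's function formulas on the two half lines
  have hG1 : ∀ t : ℝ, t ≤ (j:ℝ) * h → G ((j:ℝ) * h) t =
      (Real.exp (1 / ε) - Real.exp (((j:ℝ) * h) / ε)) / (Real.exp (1 / ε) - 1)
      + (-((Real.exp (1 / ε) - Real.exp (((j:ℝ) * h) / ε)) / (Real.exp (1 / ε) - 1)))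
        * Real.exp (-t / ε) := by
    intro t ht
    rw [hGdef]
    rcases eq_or_lt_of_le ht with heq | hlt
    · rw [heq, if_neg (lt_irrefl _)]
      rw [show (1 - (j:ℝ) * h) / ε = 1 / ε + -((j:ℝ) * h) / ε by ring, Real.exp_add]
      have hDne : Real.exp (1 / ε) - 1 ≠ 0 := by linarith
      have huv : Real.exp (((j:ℝ) * h) / ε) * Real.exp (-((j:ℝ) * h) / ε) = 1 := by
        rw [← Real.exp_add, show ((j:ℝ) * h) / ε + -((j:ℝ) * h) / ε = 0 by ring,
          Real.exp_zero]
      generalize hEe : Real.exp (1 / ε) = E at hDne ⊢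
      generalize hue : Real.exp (((j:ℝ) * h) / ε) = u at huv ⊢
      generalize hve : Real.exp (-((j:ℝ) * h) / ε) = v at huv ⊢
      field_simp
      linear_combination (E - 1) * huv
    · rw [if_pos hlt]
      ring
  have hG2 : ∀ t : ℝ, (j:ℝ) * h ≤ t → G ((j:ℝ) * h) t =
      (-((Real.exp (((j:ℝ) * h) / ε) - 1) / (Real.exp (1 / ε) - 1)))
      + ((Real.exp (((j:ℝ) * h) / ε) - 1) * Real.exp (1 / ε) / (Real.exp (1 / ε) - 1))
        * Real.exp (-t / ε) := by
    intro t ht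
    rw [hGdef, if_neg (not_lt.2 ht),
      show (1 - t) / ε = 1 / ε + -t / ε by ring, Real.exp_add]
    ring
  have hmodel : ∀ m : ℕ, m < n → ∃ a b : ℝ,
      ∀ t ∈ Set.Icc ((m:ℝ) * h) (((m:ℝ) + 1) * h),
        G ((j:ℝ) * h) t = a + b * Real.exp (-t / ε) := by
    intro m hm
    rcases le_or_gt (m + 1) j with hc | hc
    · refine ⟨_, _, fun t ht => hG1 t ?_⟩
      have hcc : (m:ℝ) + 1 ≤ (j:ℝ) := by exact_mod_cast hc
      have := mul_le_mul_of_nonneg_right hcc hh.le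
      linarith [ht.2]
    · refine ⟨_, _, fun t ht => hG2 t ?_⟩
      have hcc : (j:ℝ) ≤ (m:ℝ) := by
        have : j ≤ m := by omega
        exact_mod_cast this
      have := mul_le_mul_of_nonneg_right hcc hh.le
      linarith [ht.1]
  -- basic facts about Be, Bi, φ
  have hBe0 : Be 0 = 0 := by rw [hBedef]; norm_num
  have hBeh : Be h = 0 := by
    rw [hBedef, div_self hden, div_self hh.ne']; ring
  have hBi_left : ∀ (i : ℕ) (t : ℝ), (i:ℝ) * h ≤ t → Bi i t = 0 := by
    intro i t hle
    rw [hBidef]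
    split_ifs with hmem
    · have ht : t = (i:ℝ) * h := le_antisymm hmem.2 hle
      rw [ht, show (i:ℝ) * h - ((i:ℝ) - 1) * h = h by ring, hBeh]
    · rfl
  have hBi_right : ∀ (i : ℕ) (t : ℝ), t ≤ ((i:ℝ) - 1) * h → Bi i t = 0 := by
    intro i t hle
    rw [hBidef]
    split_ifs with hmem
    · have ht : t = ((i:ℝ) - 1) * h := le_antisymm hle hmem.1
      rw [ht, show ((i:ℝ) - 1) * h - ((i:ℝ) - 1) * h = 0 by ring, hBe0]
    · rfl
  have hBi_mem : ∀ (i : ℕ) (t : ℝ), ((i:ℝ) - 1) * h ≤ t → t ≤ (i:ℝ) * h →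
      Bi i t = Be (t - ((i:ℝ) - 1) * h) := by
    intro i t h1 h2
    rw [hBidef, if_pos ⟨h1, h2⟩]
  have hφ_zero : ∀ (i : ℕ) (t : ℝ), h ≤ |t - (i:ℝ) * h| → φ i t = 0 := by
    intro i t hle
    rw [hφdef]
    apply max_eq_left
    have : 1 ≤ |t - (i:ℝ) * h| / h := (one_le_div hh).2 hle
    linarith
  have hφ_val : ∀ (i : ℕ) (t : ℝ), |t - (i:ℝ) * h| ≤ h → φ i t = 1 - |t - (i:ℝ) * h| / h := by
    intro i t hle
    rw [hφdef]
    apply max_eq_right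
    have : |t - (i:ℝ) * h| / h ≤ 1 := (div_le_one hh).2 hle
    linarith
  -- values of g on the cell [mh, (m+1)h]
  have hgval : ∀ m : ℕ, ∀ i : ℕ, ∀ s ∈ Set.Icc ((m:ℝ) * h) (((m:ℝ) + 1) * h),
      g i s = if i = m + 1 then (1 - Real.exp (-(s - (m:ℝ) * h) / ε)) / (1 - Real.exp (-h / ε))
        else if i = m then 1 - (1 - Real.exp (-(s - (m:ℝ) * h) / ε)) / (1 - Real.exp (-h / ε))
        else 0 := by
    intro m i s hs
    obtain ⟨hs1, hs2⟩ := hs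
    by_cases e1 : i = m + 1
    · subst e1
      rw [if_pos rfl]
      have habs : |s - ((m + 1 : ℕ):ℝ) * h| = ((m:ℝ) + 1) * h - s := by
        push_cast
        rw [abs_of_nonpos (by linarith)]
        ring
      have hφv : φ (m + 1) s = 1 - (((m:ℝ) + 1) * h - s) / h := by
        rw [hφ_val _ _ (by rw [habs]; linarith), habs]
      have hB1 : Bi (m + 1) s = Be (s - (m:ℝ) * h) := by
        rw [hBi_mem (m + 1) s (by push_cast; linarith) (by push_cast; linarith)]
        congr 1
        push_cast
        ring
      have hB2 : Bi (m + 1 + 1) s = 0 := hBi_right (m + 1 + 1) s (by push_cast; linarith)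
      rw [hgdef, hφv, hB1, hB2, hBedef]
      field_simp
      ring
    · by_cases e2 : i = m
      · subst e2
        rw [if_neg e1, if_pos rfl]
        have habs : |s - (i:ℝ) * h| = s - (i:ℝ) * h := abs_of_nonneg (by linarith)
        have hφv : φ i s = 1 - (s - (i:ℝ) * h) / h := by
          rw [hφ_val _ _ (by rw [habs]; linarith), habs]
        have hB1 : Bi i s = 0 := hBi_left i s hs1
        have hB2 : Bi (i + 1) s = Be (s - (i:ℝ) * h) := by
          rw [hBi_mem (i + 1) s (by push_cast; linarith) (by push_cast; linarith)]
          congr 1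
          push_cast
          ring
        rw [hgdef, hφv, hB1, hB2, hBedef]
        field_simp
        ring
      · rw [if_neg e1, if_neg e2]
        have hcases : i < m ∨ m + 1 < i := by omega
        rcases hcases with hlt | hgt
        · have hc : (i:ℝ) + 1 ≤ (m:ℝ) := by
            have : i + 1 ≤ m := by omega
            exact_mod_cast this
          have hih : (i:ℝ) * h + h ≤ (m:ℝ) * h := by
            have := mul_le_mul_of_nonneg_right hc hh.le
            linarith
          rw [hgdef, hφ_zero i s (by rw [abs_of_nonneg (by linarith)]; linarith),
            hBi_left i s (by linarith), hBi_left (i + 1) s (by push_cast; linarith)]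
          ring
        · have hc : (m:ℝ) + 2 ≤ (i:ℝ) := by
            have : m + 2 ≤ i := by omega
            exact_mod_cast this
          have hih : ((m:ℝ) + 1) * h + h ≤ (i:ℝ) * h := by
            have := mul_le_mul_of_nonneg_right hc hh.le
            linarith
          rw [hgdef, hφ_zero i s (by rw [abs_of_nonpos (by linarith)]; linarith),
            hBi_right i s (by linarith),
            hBi_right (i + 1) s (by push_cast; linarith)]
          ring
  -- boundary values of the Green's function
  have hc0 : G ((j:ℝ) * h) 0 = 0 := by
    have : (0:ℝ) < (j:ℝ) * h := mul_pos (by linarith) hh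
    rw [hGdef, if_pos this]
    norm_num
  have hcn : G ((j:ℝ) * h) ((n:ℝ) * h) = 0 := by
    have hxlt : (j:ℝ) * h < (n:ℝ) * h := mul_lt_mul_of_pos_right (by linarith) hh
    rw [hGdef, if_neg (not_lt.2 hxlt.le), hn1]
    norm_num
  -- the key pointwise identity on each cell
  have hsum : ∀ m : ℕ, m < n → ∀ s ∈ Set.Icc ((m:ℝ) * h) (((m:ℝ) + 1) * h),
      (∑ i ∈ Finset.Icc 1 (n - 1), G ((j:ℝ) * h) ((i:ℝ) * h) * g i s)
        = G ((j:ℝ) * h) s := by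
    intro m hm s hs
    obtain ⟨a, b, hab⟩ := hmodel m hm
    have step1 : ∀ i ∈ Finset.Icc 1 (n - 1), G ((j:ℝ) * h) ((i:ℝ) * h) * g i s
        = (if i = m + 1 then G ((j:ℝ) * h) ((i:ℝ) * h) *
            ((1 - Real.exp (-(s - (m:ℝ) * h) / ε)) / (1 - Real.exp (-h / ε))) else 0)
          + (if i = m then G ((j:ℝ) * h) ((i:ℝ) * h) *
            (1 - (1 - Real.exp (-(s - (m:ℝ) * h) / ε)) / (1 - Real.exp (-h / ε))) else 0) := by
      intro i hi
      rw [hgval m i s hs]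
      split_ifs <;> first | omega | ring
    rw [Finset.sum_congr rfl step1, Finset.sum_add_distrib]
    simp only [Finset.sum_ite_eq']
    have hA : (if m + 1 ∈ Finset.Icc 1 (n - 1) then G ((j:ℝ) * h) (((m + 1 : ℕ):ℝ) * h) *
          ((1 - Real.exp (-(s - (m:ℝ) * h) / ε)) / (1 - Real.exp (-h / ε))) else 0)
        = G ((j:ℝ) * h) (((m:ℝ) + 1) * h) *
          ((1 - Real.exp (-(s - (m:ℝ) * h) / ε)) / (1 - Real.exp (-h / ε))) := by
      split_ifs with hmem
      · push_cast
        ring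
      · have hmn : m + 1 = n := by
          simp only [Finset.mem_Icc] at hmem
          omega
        rw [show ((m:ℝ) + 1) * h = (n:ℝ) * h by rw [← hmn]; push_cast; ring, hcn]
        ring
    have hB : (if m ∈ Finset.Icc 1 (n - 1) then G ((j:ℝ) * h) ((m:ℝ) * h) *
          (1 - (1 - Real.exp (-(s - (m:ℝ) * h) / ε)) / (1 - Real.exp (-h / ε))) else 0)
        = G ((j:ℝ) * h) ((m:ℝ) * h) *
          (1 - (1 - Real.exp (-(s - (m:ℝ) * h) / ε)) / (1 - Real.exp (-h / ε))) := by
      split_ifs with hmem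
      · rfl
      · have hm0 : m = 0 := by
          simp only [Finset.mem_Icc] at hmem
          omega
        subst hm0
        rw [show ((0:ℕ):ℝ) * h = 0 by push_cast; ring, hc0]
        ring
    rw [hA, hB]
    rw [hab s hs, hab ((m:ℝ) * h) ⟨le_refl _, hle_cell m⟩,
      hab (((m:ℝ) + 1) * h) ⟨hle_cell m, le_refl _⟩,
      show -(((m:ℝ) + 1) * h) / ε = -((m:ℝ) * h + h) / ε by ring]
    linear_combination exp_interp ε h a b ((m:ℝ) * h) s hden
  -- cells sit inside [0,1]
  have hsub : ∀ m : ℕ, m < n → Set.Icc ((m:ℝ) * h) (((m:ℝ) + 1) * h) ⊆ Set.Icc 0 1 := by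
    intro m hm t ht
    have hm1 : (m:ℝ) + 1 ≤ (n:ℝ) := by
      have : m + 1 ≤ n := by omega
      exact_mod_cast this
    constructor
    · have : (0:ℝ) ≤ (m:ℝ) * h := by positivity
      linarith [ht.1]
    · have := mul_le_mul_of_nonneg_right hm1 hh.le
      linarith [ht.2]
  -- integrability of the summands on each cell
  have hgcont : ∀ m : ℕ, m < n → ∀ i : ℕ, ContinuousOn (fun s => f s * g i s)
      (Set.Icc ((m:ℝ) * h) (((m:ℝ) + 1) * h)) := by
    intro m hm i
    have hfc : ContinuousOn f (Set.Icc ((m:ℝ) * h) (((m:ℝ) + 1) * h)) :=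
      hf.mono (hsub m hm)
    have hmc : ContinuousOn (fun s : ℝ => f s *
        (if i = m + 1 then (1 - Real.exp (-(s - (m:ℝ) * h) / ε)) / (1 - Real.exp (-h / ε))
          else if i = m then 1 - (1 - Real.exp (-(s - (m:ℝ) * h) / ε)) / (1 - Real.exp (-h / ε))
          else 0)) (Set.Icc ((m:ℝ) * h) (((m:ℝ) + 1) * h)) := by
      apply hfc.mul
      apply Continuous.continuousOn
      split_ifs <;> fun_prop
    exact hmc.congr fun s hs => by rw [hgval m i s hs]
  have hgint : ∀ m : ℕ, m < n → ∀ i : ℕ, IntervalIntegrable (fun s => f s * g i s)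
      volume ((m:ℝ) * h) (((m:ℝ) + 1) * h) :=
    fun m hm i => ((hgcont m hm i).intervalIntegrable_of_Icc (hle_cell m))
  have hGcont : ∀ m : ℕ, m < n → ContinuousOn (fun s => G ((j:ℝ) * h) s * f s)
      (Set.Icc ((m:ℝ) * h) (((m:ℝ) + 1) * h)) := by
    intro m hm
    obtain ⟨a, b, hab⟩ := hmodel m hm
    have hmc : ContinuousOn (fun s : ℝ => (a + b * Real.exp (-s / ε)) * f s)
        (Set.Icc ((m:ℝ) * h) (((m:ℝ) + 1) * h)) := by
      apply ContinuousOn.mul _ (hf.mono (hsub m hm))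
      apply Continuous.continuousOn
      fun_prop
    exact hmc.congr fun s hs => by rw [hab s hs]
  have hGint : ∀ m : ℕ, m < n → IntervalIntegrable (fun s => G ((j:ℝ) * h) s * f s)
      volume ((m:ℝ) * h) (((m:ℝ) + 1) * h) :=
    fun m hm => ((hGcont m hm).intervalIntegrable_of_Icc (hle_cell m))
  -- decompose the integrals into cells
  have decompL : ∀ i : ℕ, (∫ s in (0:ℝ)..1, f s * g i s)
      = ∑ m ∈ Finset.range n, ∫ s in ((m:ℝ) * h)..(((m:ℝ) + 1) * h), f s * g i s := by
    intro i
    have hadj := intervalIntegral.sum_integral_adjacent_intervals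
      (a := fun k : ℕ => (k:ℝ) * h) (μ := volume) (f := fun s => f s * g i s)
      (n := n) (fun k hk => by
        simp only [Nat.cast_add, Nat.cast_one]
        exact hgint k hk i)
    simp only [Nat.cast_add, Nat.cast_one, Nat.cast_zero, zero_mul, hn1] at hadj
    exact hadj.symm
  have decompR : (∫ s in (0:ℝ)..1, G ((j:ℝ) * h) s * f s)
      = ∑ m ∈ Finset.range n, ∫ s in ((m:ℝ) * h)..(((m:ℝ) + 1) * h),
          G ((j:ℝ) * h) s * f s := by
    have hadj := intervalIntegral.sum_integral_adjacent_intervals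
      (a := fun k : ℕ => (k:ℝ) * h) (μ := volume) (f := fun s => G ((j:ℝ) * h) s * f s)
      (n := n) (fun k hk => by
        simp only [Nat.cast_add, Nat.cast_one]
        exact hGint k hk)
    simp only [Nat.cast_add, Nat.cast_one, Nat.cast_zero, zero_mul, hn1] at hadj
    exact hadj.symm
  -- the per-cell identity for the integrals
  have key_cell : ∀ m ∈ Finset.range n,
      (∑ i ∈ Finset.Icc 1 (n - 1), G ((j:ℝ) * h) ((i:ℝ) * h)
          * ∫ s in ((m:ℝ) * h)..(((m:ℝ) + 1) * h), f s * g i s)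
      = ∫ s in ((m:ℝ) * h)..(((m:ℝ) + 1) * h), G ((j:ℝ) * h) s * f s := by
    intro m hm
    have hm' := Finset.mem_range.1 hm
    have e1 : ∀ i ∈ Finset.Icc 1 (n - 1), G ((j:ℝ) * h) ((i:ℝ) * h)
        * ∫ s in ((m:ℝ) * h)..(((m:ℝ) + 1) * h), f s * g i s
        = ∫ s in ((m:ℝ) * h)..(((m:ℝ) + 1) * h),
            G ((j:ℝ) * h) ((i:ℝ) * h) * (f s * g i s) := by
      intro i hi
      rw [← intervalIntegral.integral_const_mul]
    rw [Finset.sum_congr rfl e1,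
      ← intervalIntegral.integral_finset_sum (μ := volume)
        (f := fun (i : ℕ) (s : ℝ) => G ((j:ℝ) * h) ((i:ℝ) * h) * (f s * g i s))
        (fun i _ => (hgint m hm' i).const_mul _)]
    apply intervalIntegral.integral_congr
    intro s hs
    rw [Set.uIcc_of_le (hle_cell m)] at hs
    have hpt := hsum m hm' s hs
    calc (∑ i ∈ Finset.Icc 1 (n - 1), G ((j:ℝ) * h) ((i:ℝ) * h) * (f s * g i s))
        = f s * ∑ i ∈ Finset.Icc 1 (n - 1), G ((j:ℝ) * h) ((i:ℝ) * h) * g i s := by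
          rw [Finset.mul_sum]
          exact Finset.sum_congr rfl fun i _ => by ring
      _ = G ((j:ℝ) * h) s * f s := by rw [hpt]; ring
  -- assemble
  calc (∑ i ∈ Finset.Icc 1 (n - 1),
        G ((j:ℝ) * h) ((i:ℝ) * h) * ∫ s in (0:ℝ)..1, f s * g i s)
      = ∑ i ∈ Finset.Icc 1 (n - 1), ∑ m ∈ Finset.range n,
          G ((j:ℝ) * h) ((i:ℝ) * h)
            * ∫ s in ((m:ℝ) * h)..(((m:ℝ) + 1) * h), f s * g i s := by
        refine Finset.sum_congr rfl fun i hi => ?_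
        rw [decompL i, Finset.mul_sum]
    _ = ∑ m ∈ Finset.range n, ∑ i ∈ Finset.Icc 1 (n - 1),
          G ((j:ℝ) * h) ((i:ℝ) * h)
            * ∫ s in ((m:ℝ) * h)..(((m:ℝ) + 1) * h), f s * g i s := Finset.sum_comm
    _ = ∑ m ∈ Finset.range n, ∫ s in ((m:ℝ) * h)..(((m:ℝ) + 1) * h),
          G ((j:ℝ) * h) s * f s := Finset.sum_congr rfl key_cell
    _ = ∫ s in (0:ℝ)..1, G ((j:ℝ) * h) s * f s := decompR.symm
end

section
/- Fix an integer n ≥ 1, let h = 1/n and x_j = j·h, and let u : [0,1] → ℝ be continuous, linear on each subinterval [x_{j−1}, x_j], and satisfy u(0) = u(1) = 0. Then: (a) h² · Σ_{j=1}^n ∫_{x_{j−1}}^{x_j} (u'(x))² dx ≤ 12 · ∫_0^1 u(x)² dx (derivatives taken on the open subintervals); and (b) ∫_0^1 u(x)² dx ≤ max_{1 ≤ j ≤ n−1} u(x_j)² (with the maximum read as 0 when n = 1). -/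
open MeasureTheory intervalIntegral

lemma affine_sq_integral (A s p q : ℝ) :
    ∫ x in p..q, (A + s*(x-p))^2 = A^2*(q-p) + A*s*(q-p)^2 + s^2*(q-p)^3/3 := by
  have hF : ∀ x ∈ Set.uIcc p q,
      HasDerivAt (fun y => A^2*y + A*s*(y-p)^2 + s^2*(y-p)^3/3) ((A + s*(x-p))^2) x := by
    intro x _
    have h1 : HasDerivAt (fun y : ℝ => y - p) 1 x := (hasDerivAt_id x).sub_const p
    have h2 := (h1.pow 2).const_mul (A*s)
    have h3 := ((h1.pow 3).const_mul (s^2)).div_const 3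
    have h4 := (hasDerivAt_id x).const_mul (A^2)
    refine ((h4.add h2).add h3).congr_deriv ?_
    push_cast
    ring
  rw [intervalIntegral.integral_eq_sub_of_hasDerivAt hF
    (Continuous.intervalIntegrable (by continuity) _ _)]
  ring

/-- Inverse inequalities for continuous piecewise linear functions on the
uniform mesh vanishing at the endpoints:
(a) `h²·Σ_j ∫ (u')² ≤ 12·∫_0^1 u²`; (b) `∫_0^1 u² ≤ max_{1≤j≤n−1} u(x_j)²`
(the maximum read as `0` when `n = 1`; note `sSup ∅ = 0` in `ℝ`). -/
theorem stmt_16 (n : ℕ) (hn : 1 ≤ n) (u : ℝ → ℝ)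
    (hcont : ContinuousOn u (Set.Icc 0 1))
    (hlin : ∀ j : ℕ, j < n → ∀ x ∈ Set.Icc ((j : ℝ) * (1 / n)) (((j : ℝ) + 1) * (1 / n)),
      u x = u ((j : ℝ) * (1 / n)) +
        ((u (((j : ℝ) + 1) * (1 / n)) - u ((j : ℝ) * (1 / n))) / (1 / n)) *
          (x - (j : ℝ) * (1 / n)))
    (hu0 : u 0 = 0) (hu1 : u 1 = 0) :
    let h : ℝ := 1 / n
    (h ^ 2 * ∑ j ∈ Finset.Icc 1 n,
        (∫ x in (((j : ℝ) - 1) * h)..((j : ℝ) * h), (deriv u x) ^ 2)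
      ≤ 12 * ∫ x in (0:ℝ)..1, (u x) ^ 2) ∧
    ((∫ x in (0:ℝ)..1, (u x) ^ 2)
      ≤ sSup ((fun j : ℕ => (u ((j : ℝ) * h)) ^ 2) '' (Set.Icc 1 (n - 1)))) := by
  intro h
  have hn0 : (0:ℝ) < n := by exact_mod_cast hn
  have hh : (0:ℝ) < h := by positivity
  have hne : h ≠ 0 := hh.ne'
  have hnh : (n:ℝ) * h = 1 := by show (n:ℝ) * (1/n) = 1; field_simp
  set A : ℕ → ℝ := fun j => u ((j:ℝ) * h) with hA
  have hA0 : A 0 = 0 := by simp [hA, hu0]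
  have hAn : A n = 0 := by simp only [hA, hnh, hu1]
  -- node points in [0,1]
  have hnode : ∀ j : ℕ, j ≤ n → (j:ℝ) * h ∈ Set.Icc (0:ℝ) 1 := by
    intro j hj
    constructor
    · positivity
    · rw [← hnh]
      have : (j:ℝ) ≤ n := by exact_mod_cast hj
      nlinarith
  -- linearity restated
  have hlin' : ∀ j : ℕ, j < n → ∀ x ∈ Set.Icc ((j:ℝ)*h) (((j:ℝ)+1)*h),
      u x = A j + ((A (j+1) - A j)/h) * (x - (j:ℝ)*h) := by
    intro j hj x hx
    have := hlin j hj x hx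
    rw [this]
    simp only [hA]
    simp only [h]
    push_cast
    ring_nf
  -- integrals of u^2 on subintervals
  have hI1 : ∀ j : ℕ, j < n →
      (∫ x in ((j:ℝ)*h)..(((j:ℝ)+1)*h), (u x)^2)
        = h/3 * (A j ^2 + A j * A (j+1) + A (j+1)^2) := by
    intro j hj
    have hle : (j:ℝ)*h ≤ ((j:ℝ)+1)*h := by nlinarith
    have hcongr : Set.EqOn (fun x => (u x)^2)
        (fun x => (A j + ((A (j+1) - A j)/h) * (x - (j:ℝ)*h))^2)
        (Set.uIcc ((j:ℝ)*h) (((j:ℝ)+1)*h)) := by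
      intro x hx
      rw [Set.uIcc_of_le hle] at hx
      simp only
      rw [hlin' j hj x hx]
    rw [intervalIntegral.integral_congr hcongr, affine_sq_integral]
    have hd : ((j:ℝ)+1)*h - (j:ℝ)*h = h := by ring
    rw [hd]
    field_simp
    ring
  -- derivative on subintervals
  have hI2 : ∀ j : ℕ, j < n →
      (∫ x in ((j:ℝ)*h)..(((j:ℝ)+1)*h), (deriv u x)^2)
        = (A (j+1) - A j)^2 / h := by
    intro j hj
    have hlt : (j:ℝ)*h < ((j:ℝ)+1)*h := by nlinarith
    have hae : ∀ᵐ x : ℝ, x ∈ Set.uIoc ((j:ℝ)*h) (((j:ℝ)+1)*h) →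
        (deriv u x)^2 = (fun _ : ℝ => ((A (j+1) - A j)/h)^2) x := by
      have hne1 : ∀ᵐ x : ℝ, x ≠ ((j:ℝ)+1)*h := by
        refine ae_iff.mpr ?_
        simp [Set.setOf_eq_eq_singleton]
      filter_upwards [hne1] with x hx1 hxm
      rw [Set.uIoc_of_le hlt.le] at hxm
      have hxo : x ∈ Set.Ioo ((j:ℝ)*h) (((j:ℝ)+1)*h) := ⟨hxm.1, lt_of_le_of_ne hxm.2 hx1⟩
      have hmem : Set.Icc ((j:ℝ)*h) (((j:ℝ)+1)*h) ∈ nhds x := Icc_mem_nhds hxo.1 hxo.2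
      have hevEq : u =ᶠ[nhds x] (fun y => A j + ((A (j+1) - A j)/h) * (y - (j:ℝ)*h)) :=
        Filter.eventuallyEq_of_mem hmem (hlin' j hj)
      have hder : HasDerivAt (fun y => A j + ((A (j+1) - A j)/h) * (y - (j:ℝ)*h))
          ((A (j+1) - A j)/h) x := by
        have h1 : HasDerivAt (fun y : ℝ => y - (j:ℝ)*h) 1 x := (hasDerivAt_id x).sub_const _
        have h2 := (h1.const_mul ((A (j+1) - A j)/h)).const_add (A j)
        simpa using h2
      rw [hevEq.deriv_eq, hder.deriv]
    rw [intervalIntegral.integral_congr_ae hae, intervalIntegral.integral_const]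
    have hd : ((j:ℝ)+1)*h - (j:ℝ)*h = h := by ring
    rw [smul_eq_mul, hd]
    field_simp
  -- integrability of u^2 on subintervals
  have hint : ∀ k < n, IntervalIntegrable (fun x => (u x)^2) volume
      ((k:ℝ)*h) (((k:ℝ)+1)*h) := by
    intro k hk
    have hle : (k:ℝ)*h ≤ ((k:ℝ)+1)*h := by nlinarith
    have hsub : Set.uIcc ((k:ℝ)*h) (((k:ℝ)+1)*h) ⊆ Set.Icc 0 1 := by
      rw [Set.uIcc_of_le hle]
      intro x hx
      have h1 := (hnode k hk.le).1
      have h2 : (((k:ℝ)+1)*h) ≤ 1 := by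
        have := (hnode (k+1) hk).2
        push_cast at this
        linarith
      exact ⟨le_trans h1 hx.1, le_trans hx.2 h2⟩
    exact ((hcont.mono hsub).pow 2).intervalIntegrable
  -- splitting the integral
  have hsplit : (∫ x in (0:ℝ)..1, (u x)^2)
      = ∑ k ∈ Finset.range n, ∫ x in ((k:ℝ)*h)..(((k:ℝ)+1)*h), (u x)^2 := by
    have := intervalIntegral.sum_integral_adjacent_intervals
      (f := fun x => (u x)^2) (a := fun k : ℕ => (k:ℝ)*h) (μ := volume) (n := n) ?_
    · push_cast at this
      rw [zero_mul, hnh] at this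
      exact this.symm
    · intro k hk
      push_cast
      exact hint k hk
  constructor
  · -- part (a)
    have hre : ∑ j ∈ Finset.Icc 1 n,
        (∫ x in (((j:ℝ)-1)*h)..((j:ℝ)*h), (deriv u x)^2)
        = ∑ k ∈ Finset.range n, (A (k+1) - A k)^2 / h := by
      rw [← Finset.Ico_add_one_right_eq_Icc, Finset.sum_Ico_eq_sum_range,
        show n + 1 - 1 = n from rfl]
      refine Finset.sum_congr rfl fun i hi => ?_
      have hi' : i < n := Finset.mem_range.mp hi
      have e1 : ((1+i:ℕ):ℝ) - 1 = (i:ℝ) := by push_cast; ring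
      have e2 : ((1+i:ℕ):ℝ) = (i:ℝ)+1 := by push_cast; ring
      rw [e1, e2, hI2 i hi']
    have hR : (12:ℝ) * ∫ x in (0:ℝ)..1, (u x)^2
        = ∑ k ∈ Finset.range n, 12*(h/3*(A k^2 + A k*A (k+1) + A (k+1)^2)) := by
      rw [hsplit, Finset.mul_sum]
      exact Finset.sum_congr rfl fun k hk => by rw [hI1 k (Finset.mem_range.mp hk)]
    rw [hre, hR, Finset.mul_sum]
    apply Finset.sum_le_sum
    intro i _
    have key : (A (i+1) - A i)^2 ≤ 4*(A i^2 + A i*A (i+1) + A (i+1)^2) := by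
      nlinarith [sq_nonneg (A i + A (i+1))]
    have e : h^2 * ((A (i+1) - A i)^2 / h) = h * (A (i+1) - A i)^2 := by
      field_simp
    rw [e]
    nlinarith [mul_le_mul_of_nonneg_left key hh.le]
  · -- part (b)
    by_cases hone : n = 1
    · subst hone
      rw [hsplit]
      simp only [Finset.range_one, Finset.sum_singleton]
      rw [hI1 0 (by norm_num)]
      have hA1 : A 1 = 0 := hAn
      rw [hA0, hA1]
      rw [show Set.Icc 1 (1-1) = (∅ : Set ℕ) by simp, Set.image_empty, Real.sSup_empty]
      norm_num
    · have hn2 : 2 ≤ n := by omega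
      set S : Set ℝ := (fun j : ℕ => (u ((j:ℝ)*h))^2) '' Set.Icc 1 (n-1) with hS
      have hbdd : BddAbove S := (Set.Finite.image _ (Set.finite_Icc _ _)).bddAbove
      have hMk : ∀ k, k ≤ n → A k ^2 ≤ sSup S := by
        intro k hk
        rcases Nat.eq_zero_or_pos k with hk0 | hk1
        · subst hk0
          rw [hA0]
          have h1mem : (A 1)^2 ∈ S := ⟨1, ⟨le_refl 1, by omega⟩, rfl⟩
          have := le_csSup hbdd h1mem
          nlinarith [sq_nonneg (A 1)]
        · rcases eq_or_lt_of_le hk with hkn | hkn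
          · subst hkn
            rw [hAn]
            have h1mem : (A 1)^2 ∈ S := ⟨1, ⟨le_refl 1, by omega⟩, rfl⟩
            have := le_csSup hbdd h1mem
            nlinarith [sq_nonneg (A 1)]
          · exact le_csSup hbdd ⟨k, ⟨hk1, by omega⟩, rfl⟩
      rw [hsplit]
      have hterm : ∀ k ∈ Finset.range n,
          (∫ x in ((k:ℝ)*h)..(((k:ℝ)+1)*h), (u x)^2) ≤ h * sSup S := by
        intro k hk
        have hk' : k < n := Finset.mem_range.mp hk
        rw [hI1 k hk']
        have m1 := hMk k hk'.le
        have m2 := hMk (k+1) hk'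
        nlinarith [sq_nonneg (A k - A (k+1)), hh.le, mul_le_mul_of_nonneg_left m1 hh.le]
      calc ∑ k ∈ Finset.range n, (∫ x in ((k:ℝ)*h)..(((k:ℝ)+1)*h), (u x)^2)
          ≤ ∑ _k ∈ Finset.range n, h * sSup S := Finset.sum_le_sum hterm
        _ = (n:ℝ) * (h * sSup S) := by
            rw [Finset.sum_const, Finset.card_range, nsmul_eq_mul]
        _ = sSup S := by rw [← mul_assoc, hnh, one_mul]
end

section
/- Fix ε > 0 and an integer n ≥ 1, let h = 1/n and x_j = j·h. Let u(x) := x − (e^{x/ε} − 1)/(e^{1/ε} − 1) and let I_h u : [0,1] → ℝ be its piecewise linear interpolant: the continuous function that is linear on each [x_{j−1}, x_j] with I_h u(x_j) = u(x_j) for all j. Then Σ_{j=1}^n ∫_{x_{j−1}}^{x_j} (u'(x) − (I_h u)'(x))² dx = ((1 + e^{−1/ε})/(1 − e^{−1/ε})) · ( 1/(2ε) − (1/h)·(1 − e^{−h/ε})/(1 + e^{−h/ε}) ), where (I_h u)' is the constant slope (u(x_j) − u(x_{j−1}))/h on each subinterval. -/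
open MeasureTheory intervalIntegral

lemma piece_integral (ε c : ℝ) (hε : ε ≠ 0) (hc : c ≠ 0) (a b s : ℝ) :
    ∫ x in a..b, ((1 - Real.exp (x / ε) / (ε * c)) - s) ^ 2
      = ((1 - s) ^ 2 * b - 2 * (1 - s) / c * Real.exp (b / ε)
          + Real.exp (b / ε) ^ 2 / (2 * ε * c ^ 2))
        - ((1 - s) ^ 2 * a - 2 * (1 - s) / c * Real.exp (a / ε)
          + Real.exp (a / ε) ^ 2 / (2 * ε * c ^ 2)) := by
  apply intervalIntegral.integral_eq_sub_of_hasDerivAt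
  · intro x hx
    have h1 : HasDerivAt (fun x : ℝ => Real.exp (x / ε)) (Real.exp (x / ε) * (1 / ε)) x := by
      simpa using (((hasDerivAt_id x).div_const ε).exp)
    have h2 : HasDerivAt (fun x : ℝ => Real.exp (x / ε) ^ 2)
        (2 * Real.exp (x / ε) * (Real.exp (x / ε) * (1 / ε))) x := by
      simpa using (h1.fun_pow 2)
    have H := (((hasDerivAt_id' x).const_mul ((1 - s) ^ 2)).fun_sub
        (h1.const_mul (2 * (1 - s) / c))).fun_add (h2.div_const (2 * ε * c ^ 2))
    convert H using 1
    field_simp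
    ring
  · apply Continuous.intervalIntegrable
    continuity

lemma piece_closed (ε c h a : ℝ) (hε : ε ≠ 0) (hc : c ≠ 0) (hh : h ≠ 0) :
    ∫ x in a..(a + h), ((1 - Real.exp (x / ε) / (ε * c))
        - ((((a+h) - (Real.exp ((a+h) / ε) - 1) / c) - (a - (Real.exp (a / ε) - 1) / c)) / h)) ^ 2
      = (Real.exp ((a+h) / ε) ^ 2 - Real.exp (a / ε) ^ 2) / (2 * ε * c ^ 2)
        - (Real.exp ((a+h) / ε) - Real.exp (a / ε)) ^ 2 / (h * c ^ 2) := by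
  rw [piece_integral ε c hε hc]
  field_simp
  ring

/-- Exact formula for the squared `H¹` seminorm interpolation error of
`u(x) = x − (e^{x/ε} − 1)/(e^{1/ε} − 1)` on the uniform mesh of size `h = 1/n`:
`Σ_j ∫ (u' − slope_j)² = ((1 + e^{−1/ε})/(1 − e^{−1/ε}))·(1/(2ε) − (1/h)·(1 − e^{−h/ε})/(1 + e^{−h/ε}))`,
where `slope_j = (u(x_j) − u(x_{j−1}))/h` is the derivative of the interpolant. -/
theorem stmt_17 (ε : ℝ) (hε : 0 < ε) (n : ℕ) (hn : 1 ≤ n) :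
    let h : ℝ := 1 / n
    let u : ℝ → ℝ := fun x => x - (Real.exp (x / ε) - 1) / (Real.exp (1 / ε) - 1)
    ∑ j ∈ Finset.Icc 1 n,
        (∫ x in (((j : ℝ) - 1) * h)..((j : ℝ) * h),
          (deriv u x - (u ((j : ℝ) * h) - u (((j : ℝ) - 1) * h)) / h) ^ 2)
      = ((1 + Real.exp (-1 / ε)) / (1 - Real.exp (-1 / ε))) *
          (1 / (2 * ε) - (1 / h) * (1 - Real.exp (-h / ε)) / (1 + Real.exp (-h / ε))) := by
  intro h u
  have hn0 : (n : ℝ) ≠ 0 := by positivity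
  have hεne : ε ≠ 0 := ne_of_gt hε
  have hh : h ≠ 0 := by simp [h, hn0]
  set E : ℝ := Real.exp (1 / ε) with hE
  have hE1 : 1 < E := Real.one_lt_exp_iff.mpr (by positivity)
  set c : ℝ := E - 1 with hcdef
  have hc : c ≠ 0 := by simp [hcdef]; linarith
  set q : ℝ := Real.exp (h / ε) with hq
  have hq1 : 1 < q := Real.one_lt_exp_iff.mpr (by positivity)
  have hq2 : q ^ 2 ≠ 1 := by nlinarith
  -- derivative of u
  have hderiv : deriv u = fun x => 1 - Real.exp (x / ε) / (ε * c) := by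
    funext x
    have h1 : HasDerivAt u (1 - Real.exp (x / ε) / (ε * c)) x := by
      have h2 : HasDerivAt (fun x : ℝ => Real.exp (x / ε)) (Real.exp (x / ε) * (1 / ε)) x := by
        simpa using (((hasDerivAt_id x).div_const ε).exp)
      have := (hasDerivAt_id' x).fun_sub (((h2.sub_const 1).div_const c))
      exact this.congr_deriv (by rw [mul_one_div, div_div])
    exact h1.deriv
  -- key constant
  set K : ℝ := (q ^ 2 - 1) / (2 * ε * c ^ 2) - (q - 1) ^ 2 / (h * c ^ 2) with hK
  have hterm : ∀ i : ℕ,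
      (∫ x in ((((1 + i : ℕ) : ℝ) - 1) * h)..(((1 + i : ℕ) : ℝ) * h),
        (deriv u x - (u (((1 + i : ℕ) : ℝ) * h) - u ((((1 + i : ℕ) : ℝ) - 1) * h)) / h) ^ 2)
        = (q ^ 2) ^ i * K := by
    intro i
    have ha : (((1 + i : ℕ) : ℝ) - 1) * h = (i : ℝ) * h := by push_cast; ring
    have hb : ((1 + i : ℕ) : ℝ) * h = (i : ℝ) * h + h := by push_cast; ring
    have e1 : Real.exp (((i : ℝ) * h + h) / ε) = q ^ (i + 1) := by
      rw [show ((i : ℝ) * h + h) / ε = ((i + 1 : ℕ) : ℝ) * (h / ε) by push_cast; ring,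
        Real.exp_nat_mul]
    have e2 : Real.exp (((i : ℝ) * h) / ε) = q ^ i := by
      rw [show ((i : ℝ) * h) / ε = ((i : ℕ) : ℝ) * (h / ε) by ring,
        Real.exp_nat_mul]
    rw [ha, hb]
    simp only [hderiv, u]
    rw [piece_closed ε c h ((i : ℝ) * h) hεne hc hh, e1, e2, hK]
    field_simp
    ring
  rw [← Finset.Ico_add_one_right_eq_Icc, Finset.sum_Ico_eq_sum_range]
  simp only [Nat.add_sub_cancel, hterm]
  rw [← Finset.sum_mul, geom_sum_eq hq2]
  have hqn : q ^ n = E := by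
    rw [hq, ← Real.exp_nat_mul, hE]
    congr 1
    simp only [h]
    field_simp
  have hqn2 : (q ^ 2) ^ n = E ^ 2 := by rw [← pow_mul, mul_comm, pow_mul, hqn]
  rw [hqn2]
  have hne1 : Real.exp (-1 / ε) = E⁻¹ := by rw [neg_div, Real.exp_neg, hE]
  have hne2 : Real.exp (-h / ε) = q⁻¹ := by rw [neg_div, Real.exp_neg, hq]
  rw [hne1, hne2, hK]
  have hq0 : q ≠ 0 := by positivity
  have hE0 : E ≠ 0 := by positivity
  have h1E : 1 - E⁻¹ ≠ 0 := by
    rw [sub_ne_zero]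
    intro hcon
    have : E = 1 := by field_simp at hcon; linarith
    linarith
  have h1q : 1 + q⁻¹ ≠ 0 := by positivity
  have hq21 : q ^ 2 - 1 ≠ 0 := sub_ne_zero.mpr hq2
  have hc2 : E - 1 ≠ 0 := hc
  rw [hcdef]
  field_simp
  ring
end

section
/- Fix ε > 0 and an integer n ≥ 2, let h = 1/n and x_j = j·h. Let u(x) := x − (e^{x/ε} − 1)/(e^{1/ε} − 1) and let I_h u : [0,1] → ℝ be its piecewise linear interpolant: the continuous function that is linear on each [x_{j−1}, x_j] with I_h u(x_j) = u(x_j) for all j. Then the interpolation error restricted to [0, 1−h] satisfies Σ_{j=1}^{n−1} ∫_{x_{j−1}}^{x_j} (u'(x) − (I_h u)'(x))² dx = ((e^{−2h/ε} − e^{−2/ε})/(1 − e^{−2/ε})) · Σ_{j=1}^n ∫_{x_{j−1}}^{x_j} (u'(x) − (I_h u)'(x))² dx, where (I_h u)' is the constant slope (u(x_j) − u(x_{j−1}))/h on each subinterval. -/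
open MeasureTheory intervalIntegral

lemma stmt_18_intA (ε c p q : ℝ) (hε : ε ≠ 0) :
    (∫ x in p..q, (c - Real.exp (x/ε)/ε)^2)
      = (c^2*q - 2*c*Real.exp (q/ε) + Real.exp (2*(q/ε))/(2*ε))
        - (c^2*p - 2*c*Real.exp (p/ε) + Real.exp (2*(p/ε))/(2*ε)) := by
  have key : ∀ x ∈ Set.uIcc p q,
      HasDerivAt (fun y : ℝ => c^2*y - 2*c*Real.exp (y/ε) + Real.exp (2*(y/ε))/(2*ε))
        ((c - Real.exp (x/ε)/ε)^2) x := by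
    intro x _
    have h1 : HasDerivAt (fun y : ℝ => y/ε) (1/ε) x := (hasDerivAt_id x).div_const ε
    have h2 : HasDerivAt (fun y : ℝ => Real.exp (y/ε)) (Real.exp (x/ε) * (1/ε)) x :=
      (Real.hasDerivAt_exp _).comp x h1
    have h3 : HasDerivAt (fun y : ℝ => 2*(y/ε)) (2*(1/ε)) x := h1.const_mul 2
    have h4 : HasDerivAt (fun y : ℝ => Real.exp (2*(y/ε))) (Real.exp (2*(x/ε)) * (2*(1/ε))) x :=
      (Real.hasDerivAt_exp _).comp x h3
    have h5 := (((hasDerivAt_id x).const_mul (c^2)).sub (h2.const_mul (2*c))).add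
      (h4.div_const (2*ε))
    refine h5.congr_deriv ?_
    have h2e : Real.exp (2*(x/ε)) = Real.exp (x/ε)^2 := by rw [two_mul, Real.exp_add, sq]
    rw [h2e]; field_simp; ring
  have hcont : Continuous fun x : ℝ => (c - Real.exp (x/ε)/ε)^2 := by continuity
  exact intervalIntegral.integral_eq_sub_of_hasDerivAt key (hcont.intervalIntegrable _ _)

lemma stmt_18_per_term (ε h : ℝ) (hε : 0 < ε) (hh : 0 < h) (k : ℕ) :
    (∫ x in ((k:ℝ) * h)..(((k:ℝ)+1) * h),
      (deriv (fun x : ℝ => x - (Real.exp (x / ε) - 1) / (Real.exp (1 / ε) - 1)) x -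
        (((((k:ℝ)+1) * h) - (Real.exp ((((k:ℝ)+1) * h) / ε) - 1) / (Real.exp (1/ε) - 1)) -
         (((k:ℝ) * h) - (Real.exp (((k:ℝ) * h) / ε) - 1) / (Real.exp (1/ε) - 1))) / h) ^ 2)
    = (((Real.exp (h/ε))^2 - 1) / (2*ε) - (Real.exp (h/ε) - 1)^2 / h) / (Real.exp (1/ε) - 1)^2
        * ((Real.exp (h/ε))^2) ^ k := by
  have hεne : ε ≠ 0 := hε.ne'
  have hhne : h ≠ 0 := hh.ne'
  have hE1 : Real.exp (1/ε) - 1 ≠ 0 := by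
    have : (1:ℝ) < Real.exp (1/ε) := by
      rw [← Real.exp_zero]; exact Real.exp_lt_exp.mpr (by positivity)
    exact sub_ne_zero.mpr this.ne'
  have hd : ∀ x : ℝ, deriv (fun x : ℝ => x - (Real.exp (x / ε) - 1) / (Real.exp (1 / ε) - 1)) x
      = 1 - Real.exp (x/ε) * (1/ε) / (Real.exp (1/ε) - 1) := by
    intro x
    have h1 : HasDerivAt (fun y : ℝ => y/ε) (1/ε) x := (hasDerivAt_id x).div_const ε
    have h2 : HasDerivAt (fun y : ℝ => Real.exp (y/ε)) (Real.exp (x/ε) * (1/ε)) x :=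
      (Real.hasDerivAt_exp _).comp x h1
    have h3 : HasDerivAt (fun y : ℝ => y - (Real.exp (y / ε) - 1) / (Real.exp (1 / ε) - 1))
        (1 - (Real.exp (x/ε) * (1/ε))/(Real.exp (1/ε) - 1)) x :=
      (hasDerivAt_id x).sub ((h2.sub_const 1).div_const _)
    exact h3.deriv
  set c : ℝ := (Real.exp ((((k:ℝ)+1)*h)/ε) - Real.exp (((k:ℝ)*h)/ε)) / h with hc
  have congr1 : ∀ x ∈ Set.uIcc ((k:ℝ)*h) (((k:ℝ)+1)*h),
      (deriv (fun x : ℝ => x - (Real.exp (x / ε) - 1) / (Real.exp (1 / ε) - 1)) x -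
        (((((k:ℝ)+1) * h) - (Real.exp ((((k:ℝ)+1) * h) / ε) - 1) / (Real.exp (1/ε) - 1)) -
         (((k:ℝ) * h) - (Real.exp (((k:ℝ) * h) / ε) - 1) / (Real.exp (1/ε) - 1))) / h) ^ 2
      = (c - Real.exp (x/ε)/ε)^2 / (Real.exp (1/ε) - 1)^2 := by
    intro x _
    rw [hd x, hc]
    field_simp
    ring
  rw [intervalIntegral.integral_congr congr1, intervalIntegral.integral_div,
    stmt_18_intA ε c _ _ hεne]
  have e1 : Real.exp (((k:ℝ)*h)/ε) = (Real.exp (h/ε))^k := by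
    rw [show ((k:ℝ)*h)/ε = (k:ℕ)*(h/ε) by ring, Real.exp_nat_mul]
  have e2 : Real.exp ((((k:ℝ)+1)*h)/ε) = (Real.exp (h/ε))^(k+1) := by
    rw [show (((k:ℝ)+1)*h)/ε = ((k+1:ℕ):ℝ)*(h/ε) by push_cast; ring, Real.exp_nat_mul]
  have e3 : Real.exp (2*((((k:ℝ))*h)/ε)) = (Real.exp (h/ε))^(2*k) := by
    rw [show 2*(((k:ℝ)*h)/ε) = ((2*k:ℕ):ℝ)*(h/ε) by push_cast; ring, Real.exp_nat_mul]
  have e4 : Real.exp (2*((((k:ℝ)+1)*h)/ε)) = (Real.exp (h/ε))^(2*k+2) := by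
    rw [show 2*((((k:ℝ)+1)*h)/ε) = ((2*k+2:ℕ):ℝ)*(h/ε) by push_cast; ring, Real.exp_nat_mul]
  rw [hc, e1, e2, e3, e4]
  set a := Real.exp (h/ε)
  field_simp
  ring

lemma stmt_18_sum_Icc1 (f : ℕ → ℝ) (m : ℕ) :
    ∑ j ∈ Finset.Icc 1 m, f j = ∑ i ∈ Finset.range m, f (1+i) := by
  rw [← Finset.Ico_add_one_right_eq_Icc, Finset.sum_Ico_eq_sum_range]
  simp

lemma stmt_18_ratio (t s : ℝ) (hs : s ≠ 0) (ht : t ≠ 0) (h4 : t*s - 1 ≠ 0) :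
    (s⁻¹ - (t*s)⁻¹) / (1 - (t*s)⁻¹) * (t*s - 1) = t - 1 := by
  have hts : t * s ≠ 0 := mul_ne_zero ht hs
  have h3 : 1 - (t*s)⁻¹ = (t*s - 1)/(t*s) := by field_simp
  have h5 : s⁻¹ - (t*s)⁻¹ = (t - 1)/(t*s) := by field_simp
  rw [h3, h5, div_div_div_cancel_right₀, div_mul_cancel₀ _ h4]
  exact hts

/-- The squared `H¹` seminorm interpolation error of
`u(x) = x − (e^{x/ε} − 1)/(e^{1/ε} − 1)` restricted to `[0, 1−h]` equals
`((e^{−2h/ε} − e^{−2/ε})/(1 − e^{−2/ε}))` times the error on `[0,1]`. -/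
theorem stmt_18 (ε : ℝ) (hε : 0 < ε) (n : ℕ) (hn : 2 ≤ n) :
    let h : ℝ := 1 / n
    let u : ℝ → ℝ := fun x => x - (Real.exp (x / ε) - 1) / (Real.exp (1 / ε) - 1)
    ∑ j ∈ Finset.Icc 1 (n - 1),
        (∫ x in (((j : ℝ) - 1) * h)..((j : ℝ) * h),
          (deriv u x - (u ((j : ℝ) * h) - u (((j : ℝ) - 1) * h)) / h) ^ 2)
      = ((Real.exp (-2 * h / ε) - Real.exp (-2 / ε)) / (1 - Real.exp (-2 / ε))) *
          ∑ j ∈ Finset.Icc 1 n,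
            (∫ x in (((j : ℝ) - 1) * h)..((j : ℝ) * h),
              (deriv u x - (u ((j : ℝ) * h) - u (((j : ℝ) - 1) * h)) / h) ^ 2) := by
  intro h u
  have hu : u = fun x => x - (Real.exp (x / ε) - 1) / (Real.exp (1 / ε) - 1) := rfl
  have hh1 : h = 1/(n:ℝ) := rfl
  have hnpos : 0 < n := by omega
  have hn0 : (n:ℝ) ≠ 0 := Nat.cast_ne_zero.mpr hnpos.ne'
  have hh : 0 < h := by rw [hh1]; positivity
  set a := Real.exp (h/ε) with ha
  set K : ℝ := ((a^2 - 1) / (2*ε) - (a - 1)^2 / h) / (Real.exp (1/ε) - 1)^2 with hK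
  set r : ℝ := a^2 with hr
  have ha1 : 1 < a := by
    rw [ha, ← Real.exp_zero]
    exact Real.exp_lt_exp.mpr (by positivity)
  have ha0 : 0 < a := lt_trans one_pos ha1
  have hr1 : 1 < r := by rw [hr]; nlinarith
  have hrne1 : r ≠ 1 := hr1.ne'
  have key : ∀ m : ℕ,
      (∑ j ∈ Finset.Icc 1 m,
        (∫ x in (((j : ℝ) - 1) * h)..((j : ℝ) * h),
          (deriv u x - (u ((j : ℝ) * h) - u (((j : ℝ) - 1) * h)) / h) ^ 2))
      = K * ((r^m - 1) / (r - 1)) := by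
    intro m
    rw [stmt_18_sum_Icc1]
    have hterm : ∀ i : ℕ,
        (∫ x in (((1+i : ℕ) : ℝ) - 1) * h..(((1+i : ℕ) : ℝ)) * h,
          (deriv u x - (u ((((1+i : ℕ)) : ℝ) * h) - u ((((1+i : ℕ) : ℝ) - 1) * h)) / h) ^ 2)
        = K * r^i := by
      intro i
      rw [hu, show ((1+i : ℕ) : ℝ) - 1 = (i:ℝ) by push_cast; ring,
        show ((1+i : ℕ) : ℝ) = (i:ℝ) + 1 by push_cast; ring]
      exact stmt_18_per_term ε h hε hh i
    rw [Finset.sum_congr rfl fun i _ => hterm i, ← Finset.mul_sum, geom_sum_eq hrne1]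
  rw [key (n-1), key n]
  have hrn : r^n = Real.exp (2/ε) := by
    rw [hr, ← pow_mul, ha, ← Real.exp_nat_mul]
    congr 1
    rw [hh1]
    push_cast
    field_simp
  have hexp2h : Real.exp (-2*h/ε) = r⁻¹ := by
    rw [show -2*h/ε = -(2*(h/ε)) by ring, Real.exp_neg, hr, ha]
    congr 1
    rw [two_mul, Real.exp_add, sq]
  have hexp2 : Real.exp (-2/ε) = (r^n)⁻¹ := by
    rw [show (-2/ε : ℝ) = -(2/ε) by ring, Real.exp_neg, hrn]
  rw [hexp2h, hexp2]
  have hrn1 : 1 < r^n := one_lt_pow₀ hr1 hnpos.ne'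
  have hsplit : r^n = r^(n-1) * r := by
    rw [← pow_succ, Nat.sub_add_cancel (by omega)]
  have h1 : r ≠ 0 := by linarith
  have h4 : r^(n-1) * r - 1 ≠ 0 := by
    rw [← hsplit]
    exact sub_ne_zero.mpr hrn1.ne'
  have hρ := stmt_18_ratio (r^(n-1)) r h1 (pow_ne_zero _ h1) h4
  rw [← hsplit] at hρ
  rw [← hρ]
  ring
end
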